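/- arXiv:0704.1036 — 3 statements merged into one kernel-verified Lean document; each statement's English description precedes it below -/
import Mathlib

section
/- Let Δ ⊂ ℝⁿ be a Delzant polytope and let v be a vertex of Δ with edges e_v^1, …, e_v^n emanating from v. Then r_v = min{length_ℚ(e_v^1), …, length_ℚ(e_v^n)}, i.e., the maximal radius of an admissible simplex centered at v equals the minimum of the rational lengths of the edges of Δ meeting v. -/
open Set MeasureTheory Pointwise

noncomputable section

/-- Points of `ℝⁿ`. -/
abbrev Pt (n : ℕ) := Fin n → ℝ

/-- Cast an integer vector to a real point. -/
def ivec {n : ℕ} (u : Fin n → ℤ) : Pt n := fun j => (u j : ℝ)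

/-- `f` is an affine transformation of `ℝⁿ` whose linear part lies in `GL(n, ℤ)`. -/
def IsAGLZ {n : ℕ} (f : Pt n → Pt n) : Prop :=
  ∃ (A : Matrix (Fin n) (Fin n) ℤ) (b : Pt n),
    IsUnit A.det ∧ ∀ x : Pt n, ∀ i, f x i = (∑ j, (A i j : ℝ) * x j) + b i

/-- The `i`-th standard basis vector of `ℝⁿ`. -/
def stdVec {n : ℕ} (i : Fin n) : Pt n := fun j => if j = i then 1 else 0

/-- The half-open model simplex `Δ(r^{1/2})`: the convex hull of `0, r•e₁, …, r•eₙ`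
with the convex hull of `r•e₁, …, r•eₙ` (the facet not containing the origin) removed. -/
def modelSimplex (n : ℕ) (r : ℝ) : Set (Pt n) :=
  convexHull ℝ (insert 0 (Set.range fun i : Fin n => r • stdVec i)) \
    convexHull ℝ (Set.range fun i : Fin n => r • stdVec i)

/-- `e` is an edge of the convex polytope `Δ`: a one-dimensional face, i.e. a nondegenerate
segment which is an extreme subset of `Δ`. -/
def IsEdge {n : ℕ} (Δ e : Set (Pt n)) : Prop :=
  ∃ v w : Pt n, v ≠ w ∧ e = segment ℝ v w ∧ IsExtreme ℝ Δ e

/-- `Δ ⊆ ℝⁿ` is a Delzant polytope: a compact convex polytope (compact convex set with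
finitely many extreme points) of full dimension `n`, such that at every vertex `v` the edges
emanating from `v` are exactly `n` segments of the form `[v, v + tᵢ • uᵢ]` with `tᵢ > 0` and
`u₁, …, uₙ` a `ℤ`-basis of `ℤⁿ`. -/
def IsDelzant {n : ℕ} (Δ : Set (Pt n)) : Prop :=
  IsCompact Δ ∧ Convex ℝ Δ ∧ (interior Δ).Nonempty ∧
  (Set.extremePoints ℝ Δ).Finite ∧ (Set.extremePoints ℝ Δ).Nonempty ∧
  ∀ v ∈ Set.extremePoints ℝ Δ,
    ∃ (u : Fin n → Fin n → ℤ) (t : Fin n → ℝ),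
      IsUnit (Matrix.det (Matrix.of u)) ∧ (∀ i, 0 < t i) ∧
      (∀ i, IsEdge Δ (segment ℝ v (v + t i • ivec (u i)))) ∧
      ∀ e, IsEdge Δ e → v ∈ e → ∃ i, e = segment ℝ v (v + t i • ivec (u i))

/-- `S ⊆ Δ` is an admissible simplex of radius `r` with center the vertex `v`: the image of
the model simplex `Δ(r^{1/2})` under an element of `AGL(n, ℤ)` taking the origin to `v` and
the edges of the model simplex at the origin into the edges of `Δ` meeting `v`. -/
def IsAdmissibleSimplex {n : ℕ} (Δ : Set (Pt n)) (v : Pt n) (r : ℝ)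
    (S : Set (Pt n)) : Prop :=
  0 < r ∧ S ⊆ Δ ∧
  ∃ f : Pt n → Pt n, IsAGLZ f ∧ f 0 = v ∧
    (∀ i : Fin n, ∃ e, IsEdge Δ e ∧ v ∈ e ∧ f '' segment ℝ 0 (r • stdVec i) ⊆ e) ∧
    S = f '' modelSimplex n r

/-- `r_v`: the maximal radius of an admissible simplex with center `v`. -/
def maxRadius {n : ℕ} (Δ : Set (Pt n)) (v : Pt n) : ℝ :=
  sSup {r : ℝ | ∃ S, IsAdmissibleSimplex Δ v r S}

/-- `P` is an admissible packing of `Δ`: a disjoint union of admissible simplices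
(of possibly varying radii) contained in `Δ`. -/
def IsAdmissiblePacking {n : ℕ} (Δ P : Set (Pt n)) : Prop :=
  ∃ 𝒮 : Set (Set (Pt n)),
    (∀ S ∈ 𝒮, ∃ v ∈ Set.extremePoints ℝ Δ, ∃ r : ℝ, IsAdmissibleSimplex Δ v r S) ∧
    𝒮.PairwiseDisjoint id ∧ P = ⋃₀ 𝒮

/-- The density `vol(P)/vol(Δ)` of a packing `P` of `Δ` (Euclidean volume). -/
def packDensity {n : ℕ} (Δ P : Set (Pt n)) : ℝ := (volume P).toReal / (volume Δ).toReal

/-- The maximal density `Ω(Δ)` of admissible packings of `Δ`. -/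
def maxDensity {n : ℕ} (Δ : Set (Pt n)) : ℝ :=
  sSup {d : ℝ | ∃ P, IsAdmissiblePacking Δ P ∧ d = packDensity Δ P}

/-- Two Delzant polytopes are equivalent if a positive rescaling of the first lies in the
`AGL(n, ℤ)`-orbit of the second. -/
def DelzantEquiv {n : ℕ} (Δ₁ Δ₂ : Set (Pt n)) : Prop :=
  ∃ (c : ℝ) (f : Pt n → Pt n), 0 < c ∧ IsAGLZ f ∧ f '' (c • Δ₁) = Δ₂

/-- The rational (`SL(n,ℤ)`-) length of the segment from `v` to `w`: the largest `t > 0`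
such that `w = v + t • u` for an integer vector `u`. -/
def ratLength {n : ℕ} (v w : Pt n) : ℝ :=
  sSup {t : ℝ | 0 < t ∧ ∃ u : Fin n → ℤ, w = v + t • ivec u}

/-! ### Auxiliary lemmas -/

/-- The affine map `x ↦ A x + b`. -/
noncomputable def aglAff {n : ℕ} (A : Matrix (Fin n) (Fin n) ℤ) (b : Pt n) : Pt n →ᵃ[ℝ] Pt n where
  toFun x := fun i => (∑ j, (A i j : ℝ) * x j) + b i
  linear := (A.map (Int.cast : ℤ → ℝ)).mulVecLin
  map_vadd' p w := by
    funext i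
    simp only [Matrix.mulVecLin_apply, Matrix.mulVec, dotProduct, Matrix.map_apply]
    show (∑ j, (A i j : ℝ) * (w j + p j)) + b i
      = (∑ j, (A i j : ℝ) * w j) + ((∑ j, (A i j : ℝ) * p j) + b i)
    simp only [mul_add, Finset.sum_add_distrib]
    ring

lemma aglAff_apply' {n : ℕ} (A : Matrix (Fin n) (Fin n) ℤ) (b : Pt n) (x : Pt n) (i : Fin n) :
    aglAff A b x i = (∑ j, (A i j : ℝ) * x j) + b i := rfl

lemma aglAff_zero {n : ℕ} (A : Matrix (Fin n) (Fin n) ℤ) (b : Pt n) : aglAff A b 0 = b := by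
  funext i; simp [aglAff_apply']

lemma sum_smul_std {n : ℕ} (g : Fin n → ℝ) (r : ℝ) (i : Fin n) :
    ∑ j, g j * (r • stdVec i) j = g i * r := by
  have h : ∀ j, g j * (r • stdVec i) j = if j = i then g i * r else 0 := by
    intro j; by_cases h : j = i <;> simp [stdVec, h, Pi.smul_apply]
  rw [Finset.sum_congr rfl fun j _ => h j, Finset.sum_ite_eq' Finset.univ i fun _ => g i * r,
    if_pos (Finset.mem_univ i)]

lemma aglAff_smul_std {n : ℕ} (A : Matrix (Fin n) (Fin n) ℤ) (b : Pt n) (r : ℝ) (i : Fin n) :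
    aglAff A b (r • stdVec i) = b + r • ivec (fun k => A k i) := by
  funext i'
  show (∑ j, (A i' j : ℝ) * (r • stdVec i) j) + b i' = b i' + r * (A i' i : ℝ)
  rw [sum_smul_std]; ring

lemma int_scale {n : ℕ} (u : Fin n → Fin n → ℤ) (hu : IsUnit (Matrix.of u).det) (j : Fin n)
    (c : ℝ) (a : Fin n → ℤ) (h : ∀ k, c * (u j k : ℝ) = (a k : ℝ)) : ∃ m : ℤ, c = (m : ℝ) := by
  have h1 : (∑ k, u j k * (Matrix.of u)⁻¹ k j) = 1 := by
    have h2 := Matrix.mul_nonsing_inv (Matrix.of u) hu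
    have h3 := congrFun (congrFun h2 j) j
    simpa [Matrix.mul_apply, Matrix.one_apply] using h3
  refine ⟨∑ k, a k * (Matrix.of u)⁻¹ k j, ?_⟩
  have hc : c = c * ((∑ k, u j k * (Matrix.of u)⁻¹ k j : ℤ) : ℝ) := by rw [h1]; push_cast; ring
  rw [hc]; push_cast
  rw [Finset.mul_sum]
  refine Finset.sum_congr rfl fun k _ => ?_
  rw [← mul_assoc, h k]

lemma row_ne_zero {n : ℕ} (u : Fin n → Fin n → ℤ) (hu : IsUnit (Matrix.of u).det) (j : Fin n) :
    ivec (u j) ≠ 0 := by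
  have h1 : (∑ k, u j k * (Matrix.of u)⁻¹ k j) = 1 := by
    have h2 := Matrix.mul_nonsing_inv (Matrix.of u) hu
    have h3 := congrFun (congrFun h2 j) j
    simpa [Matrix.mul_apply, Matrix.one_apply] using h3
  intro h
  have hz : ∀ k, u j k = 0 := by
    intro k
    have := congrFun h k
    simpa [ivec] using this
  simp [hz] at h1

lemma segment_endpoint_unique {n : ℕ} {v w w' : Pt n} (hw : w ≠ v)
    (h : segment ℝ v w = segment ℝ v w') : w = w' := by
  have h1 : w ∈ segment ℝ v w' := h ▸ right_mem_segment ℝ v w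
  have h2 : w' ∈ segment ℝ v w := h ▸ right_mem_segment ℝ v w'
  rw [segment_eq_image'] at h1 h2
  obtain ⟨a, ⟨ha0, ha1⟩, ha⟩ := h1
  obtain ⟨b, ⟨hb0, hb1⟩, hb⟩ := h2
  simp only at ha hb
  have e1 : w - v = a • (w' - v) := by rw [← ha, add_sub_cancel_left]
  have e2 : w' - v = b • (w - v) := by rw [← hb, add_sub_cancel_left]
  have key : w - v = (a * b) • (w - v) := by
    calc w - v = a • (w' - v) := e1
    _ = a • (b • (w - v)) := by rw [e2]
    _ = (a * b) • (w - v) := (smul_smul a b _)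
  have h3 : (1 - a * b) • (w - v) = 0 := by
    rw [sub_smul, one_smul, ← key]; abel
  have h4 : w - v ≠ 0 := sub_ne_zero.mpr hw
  have h5 : a * b = 1 := by
    rcases smul_eq_zero.mp h3 with h | h
    · linarith [sub_eq_zero.mp h]
    · exact absurd h h4
  have ha1' : a = 1 := by nlinarith
  rw [ha1', one_smul] at ha
  rw [← ha]
  abel

lemma ratLength_eq {n : ℕ} (u : Fin n → Fin n → ℤ) (hu : IsUnit (Matrix.of u).det) (i : Fin n)
    (v : Pt n) (t : ℝ) (ht : 0 < t) : ratLength v (v + t • ivec (u i)) = t := by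
  have hmem : t ∈ {s : ℝ | 0 < s ∧ ∃ w, v + t • ivec (u i) = (v + s • ivec w : Pt n)} :=
    ⟨ht, u i, rfl⟩
  have hub : ∀ s ∈ {s : ℝ | 0 < s ∧ ∃ w, v + t • ivec (u i) = (v + s • ivec w : Pt n)}, s ≤ t := by
    rintro s ⟨hs, w, hw⟩
    have hk : ∀ k, (t / s) * (u i k : ℝ) = (w k : ℝ) := by
      intro k
      have h := congrFun hw k
      simp only [Pi.add_apply, Pi.smul_apply, smul_eq_mul, ivec] at h
      field_simp
      linarith
    obtain ⟨m, hm⟩ := int_scale u hu i (t / s) w hk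
    have hmpos : (0 : ℝ) < m := hm ▸ div_pos ht hs
    have h1m : (1 : ℝ) ≤ m := by exact_mod_cast Int.cast_pos.mp hmpos
    have hts : (1 : ℝ) ≤ t / s := hm ▸ h1m
    have h2 : 1 * s ≤ t := (le_div_iff₀ hs).mp hts
    linarith
  exact le_antisymm (csSup_le ⟨t, hmem⟩ hub) (le_csSup ⟨t, hub⟩ hmem)

/-- For a vertex `v` of a Delzant polytope `Δ ⊆ ℝⁿ`, the maximal radius
`r_v` of an admissible simplex centered at `v` equals the minimum of the rational lengths
of the edges of `Δ` meeting `v`. -/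

theorem maxRadius_eq_min_ratLength {n : ℕ} (Δ : Set (Pt n)) (hΔ : IsDelzant Δ)
    (v : Pt n) (hv : v ∈ Set.extremePoints ℝ Δ) :
    maxRadius Δ v =
      sInf {l : ℝ | ∃ w : Pt n, IsEdge Δ (segment ℝ v w) ∧ l = ratLength v w} := by
  obtain ⟨hcomp, hconv, hint, hfin, hne, hvert⟩ := hΔ
  obtain ⟨u, t, hu, ht, hedges, huniq⟩ := hvert v hv
  rcases Nat.eq_zero_or_pos n with hn | hn
  · -- degenerate case n = 0
    subst hn
    haveI : Subsingleton (Pt 0) := ⟨fun a b => funext fun i => i.elim0⟩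
    have hL : {l : ℝ | ∃ w : Pt 0, IsEdge Δ (segment ℝ v w) ∧ l = ratLength v w} = ∅ := by
      rw [eq_empty_iff_forall_notMem]
      rintro l ⟨w, ⟨p, q, hpq, -, -⟩, -⟩
      exact hpq (Subsingleton.elim p q)
    have hR : ∀ r : ℝ, 0 < r → ∃ S, IsAdmissibleSimplex Δ v r S := by
      intro r hr
      refine ⟨(fun _ => v) '' modelSimplex 0 r, hr, ?_,
        fun _ => v, ⟨1, v, by simp, fun x i => i.elim0⟩, rfl, fun i => i.elim0, rfl⟩
      rintro _ ⟨x, -, rfl⟩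
      exact hv.1
    have hnb : ¬BddAbove {r : ℝ | ∃ S, IsAdmissibleSimplex Δ v r S} := by
      rintro ⟨M, hM⟩
      have h1 : max M 0 + 1 ∈ {r : ℝ | ∃ S, IsAdmissibleSimplex Δ v r S} :=
        hR _ (by positivity)
      have h2 := hM h1
      have h3 := le_max_left M 0
      try simp only [upperBounds, Set.mem_setOf_eq] at h2
      linarith
    unfold maxRadius
    rw [Real.sSup_of_not_bddAbove hnb, hL, Real.sInf_empty]
  · -- main case n ≥ 1
    obtain ⟨i₀, -, hmin⟩ := Finset.exists_min_image Finset.univ t ⟨⟨0, hn⟩, Finset.mem_univ _⟩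
    have hmin' : ∀ j, t i₀ ≤ t j := fun j => hmin j (Finset.mem_univ j)
    have hedgesub : ∀ i, segment ℝ v (v + t i • ivec (u i)) ⊆ Δ := by
      intro i
      obtain ⟨-, -, -, -, hext⟩ := hedges i
      exact hext.1
    have hptmem : ∀ (i : Fin n) (r : ℝ), 0 ≤ r → r ≤ t i →
        v + r • ivec (u i) ∈ segment ℝ v (v + t i • ivec (u i)) := by
      intro i r hr0 hr1
      rw [segment_eq_image']
      refine ⟨r / t i, ⟨div_nonneg hr0 (ht i).le, (div_le_one (ht i)).mpr hr1⟩, ?_⟩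
      simp only [add_sub_cancel_left, smul_smul, div_mul_cancel₀ r (ht i).ne']
    -- identify the right-hand side
    have hRHS : sInf {l : ℝ | ∃ w : Pt n, IsEdge Δ (segment ℝ v w) ∧ l = ratLength v w}
        = t i₀ := by
      have hLsub : ∀ l ∈ {l : ℝ | ∃ w : Pt n, IsEdge Δ (segment ℝ v w) ∧ l = ratLength v w},
          ∃ i, l = t i := by
        rintro l ⟨w, hew, rfl⟩
        obtain ⟨j, hj⟩ := huniq _ hew (left_mem_segment ℝ v w)
        have hwv : w ≠ v := by
          rintro rfl
          obtain ⟨p, q, hpq, hseg, -⟩ := hew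
          rw [segment_same] at hseg
          have hp : p ∈ ({w} : Set (Pt n)) := hseg ▸ left_mem_segment ℝ p q
          have hq : q ∈ ({w} : Set (Pt n)) := hseg ▸ right_mem_segment ℝ p q
          rw [mem_singleton_iff] at hp hq
          exact hpq (hp.trans hq.symm)
        have hwj : w = v + t j • ivec (u j) := segment_endpoint_unique hwv hj
        exact ⟨j, by rw [hwj, ratLength_eq u hu j v (t j) (ht j)]⟩
      have hmemL : t i₀ ∈ {l : ℝ | ∃ w : Pt n, IsEdge Δ (segment ℝ v w) ∧ l = ratLength v w} :=
        ⟨v + t i₀ • ivec (u i₀), hedges i₀, (ratLength_eq u hu i₀ v (t i₀) (ht i₀)).symm⟩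
      refine le_antisymm (csInf_le ⟨t i₀, ?_⟩ hmemL) (le_csInf ⟨_, hmemL⟩ ?_) <;>
      · rintro l hl
        obtain ⟨i, rfl⟩ := hLsub l hl
        exact hmin' i
    -- the simplex of radius t i₀ is admissible
    have hmem : t i₀ ∈ {r : ℝ | ∃ S, IsAdmissibleSimplex Δ v r S} := by
      set A : Matrix (Fin n) (Fin n) ℤ := (Matrix.of u).transpose with hA
      set F := aglAff A v with hF
      have hcol : ∀ i : Fin n, (fun k => A k i) = u i := by
        intro i; funext k; simp [hA, Matrix.transpose_apply]
      have hstd : ∀ (r : ℝ) (i : Fin n), F (r • stdVec i) = v + r • ivec (u i) := by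
        intro r i
        rw [hF, aglAff_smul_std, hcol]
      refine ⟨(F : Pt n → Pt n) '' modelSimplex n (t i₀), ht i₀, ?_,
        F, ⟨A, v, by rw [hA, Matrix.det_transpose]; exact hu, fun x i => rfl⟩,
        aglAff_zero A v, ?_, rfl⟩
      · -- image of model simplex is inside Δ
        have h1 : (F : Pt n → Pt n) '' modelSimplex n (t i₀) ⊆
            (F : Pt n → Pt n) ''
              (convexHull ℝ (insert 0 (Set.range fun i : Fin n => t i₀ • stdVec i))) :=
          image_mono diff_subset
        refine h1.trans ?_
        rw [AffineMap.image_convexHull]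
        refine convexHull_min ?_ hconv
        rintro _ ⟨x, hx, rfl⟩
        rcases hx with rfl | ⟨i, rfl⟩
        · rw [show F 0 = v from aglAff_zero A v]
          exact hv.1
        · rw [hstd]
          exact hedgesub i (hptmem i (t i₀) (ht i₀).le (hmin' i))
      · intro i
        refine ⟨segment ℝ v (v + t i • ivec (u i)), hedges i, left_mem_segment ℝ v _, ?_⟩
        rw [image_segment ℝ F 0 (t i₀ • stdVec i), aglAff_zero A v, hstd]
        exact (convex_segment v _).segment_subset (left_mem_segment ℝ v _)
          (hptmem i (t i₀) (ht i₀).le (hmin' i))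
    -- every admissible radius is at most t i₀
    have hbdd : ∀ r ∈ {r : ℝ | ∃ S, IsAdmissibleSimplex Δ v r S}, r ≤ t i₀ := by
      rintro r ⟨S, hr, hSΔ, f, ⟨A, b, hdet, hfA⟩, hf0, hedge, hSeq⟩
      have hb : ∀ i, b i = v i := by
        intro i
        have h1 := hfA 0 i
        simp only [Pi.zero_apply, mul_zero, Finset.sum_const_zero, zero_add] at h1
        rw [← congrFun hf0 i, h1]
      have key : ∀ i : Fin n, ∃ j : Fin n, r ≤ t j ∧ ∃ m : ℤ, 0 < m ∧
          ∀ k, A k i = m * u j k := by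
        intro i
        obtain ⟨e, he, hve, himg⟩ := hedge i
        obtain ⟨j, hj⟩ := huniq e he hve
        have hpt : f (r • stdVec i) ∈ e := himg ⟨r • stdVec i, right_mem_segment ℝ 0 _, rfl⟩
        rw [hj, segment_eq_image'] at hpt
        obtain ⟨θ, ⟨hθ0, hθ1⟩, hθ⟩ := hpt
        simp only at hθ
        have hent : ∀ k, r * (A k i : ℝ) = θ * t j * (u j k : ℝ) := by
          intro k
          have h1 := congrFun hθ k
          have h2 := hfA (r • stdVec i) k
          rw [sum_smul_std (fun j' => (A k j' : ℝ)) r i] at h2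
          simp only [Pi.add_apply, Pi.sub_apply, Pi.smul_apply, smul_eq_mul, ivec] at h1
          rw [h2, hb k] at h1
          ring_nf at h1 ⊢
          linarith
        have hc : ∀ k, (θ * t j / r) * (u j k : ℝ) = ((fun k => A k i) k : ℝ) := by
          intro k
          simp only
          field_simp
          linarith [hent k]
        obtain ⟨m, hm⟩ := int_scale u hu j (θ * t j / r) (fun k => A k i) hc
        have hAk : ∀ k, A k i = m * u j k := by
          intro k
          have h3 := hc k
          rw [hm] at h3
          exact_mod_cast h3.symm
        have hm0 : m ≠ 0 := by
          rintro rfl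
          have hz : ∀ k, A k i = 0 := by
            intro k; rw [hAk k]; ring
          have hdz : A.det = 0 := Matrix.det_eq_zero_of_column_eq_zero i hz
          rw [hdz] at hdet
          exact (by simp : ¬ IsUnit (0 : ℤ)) hdet
        have hmnn : (0 : ℝ) ≤ m := hm ▸ div_nonneg (mul_nonneg hθ0 (ht j).le) hr.le
        have hmpos : 0 < m := lt_of_le_of_ne (by exact_mod_cast hmnn) (Ne.symm hm0)
        refine ⟨j, ?_, m, hmpos, hAk⟩
        have h1m : (1 : ℝ) ≤ m := by exact_mod_cast hmpos
        have h2 : θ * t j = r * m := by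
          field_simp at hm
          linarith
        nlinarith [mul_nonneg hr.le (sub_nonneg.mpr h1m),
          mul_nonneg (ht j).le (sub_nonneg.mpr hθ1)]
      choose σ hσt m hσm hσA using key
      have hinj : Function.Injective σ := by
        intro i1 i2 h12
        by_contra hne12
        have hBA := Matrix.nonsing_inv_mul A hdet
        have h0 : ∑ k, A⁻¹ i2 k * A k i1 = 0 := by
          have h3 := congrFun (congrFun hBA i2) i1
          simpa [Matrix.mul_apply, Matrix.one_apply, Ne.symm hne12] using h3
        have h1 : ∑ k, A⁻¹ i2 k * A k i2 = 1 := by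
          have h3 := congrFun (congrFun hBA i2) i2
          simpa [Matrix.mul_apply, Matrix.one_apply] using h3
        have h0' : m i1 * (∑ k, A⁻¹ i2 k * u (σ i2) k) = 0 := by
          rw [Finset.mul_sum, ← h0]
          refine Finset.sum_congr rfl fun k _ => ?_
          rw [hσA i1 k, h12]; ring
        have h1' : m i2 * (∑ k, A⁻¹ i2 k * u (σ i2) k) = 1 := by
          rw [Finset.mul_sum, ← h1]
          refine Finset.sum_congr rfl fun k _ => ?_
          rw [hσA i2 k]; ring
        rcases mul_eq_zero.mp h0' with h | h
        · exact (hσm i1).ne' h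
        · rw [h, mul_zero] at h1'
          exact one_ne_zero h1'.symm
      obtain ⟨i, hi⟩ := Finite.injective_iff_surjective.mp hinj i₀
      have h4 := hσt i
      rw [hi] at h4
      exact h4
    unfold maxRadius
    rw [hRHS]
    exact le_antisymm (csSup_le ⟨t i₀, hmem⟩ hbdd) (le_csSup ⟨t i₀, hbdd⟩ hmem)
end
end

section
/- For n ≥ 2, the product of a standard simplex of dimension ⌊n/2⌋ and a standard simplex of dimension ⌈n/2⌉ is an n-dimensional Delzant polytope with exactly ⌊(n+2)/2⌋ · ⌈(n+2)/2⌉ vertices and exactly n + 2 facets. In particular, the vertex bound in the statement 'an n-dimensional Delzant polytope with at least ⌊(n+2)/2⌋·⌈(n+2)/2⌉+1 vertices has at least n+3 facets' is sharp. -/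
open Set MeasureTheory Pointwise

noncomputable section

/-- `F` is a facet of the convex polytope `Δ ⊆ ℝⁿ`: a nonempty closed convex extreme
subset of dimension `n - 1`. -/
def IsFacet {n : ℕ} (Δ F : Set (Pt n)) : Prop :=
  IsExtreme ℝ Δ F ∧ Convex ℝ F ∧ IsClosed F ∧ F.Nonempty ∧
    Module.finrank ℝ (affineSpan ℝ F).direction = n - 1

/-- The product of the standard simplex of dimension `⌊n/2⌋` (in the first `⌊n/2⌋`
coordinates) and the standard simplex of dimension `⌈n/2⌉` (in the remaining `⌈n/2⌉`
coordinates), realized in `ℝⁿ = ℝ^{⌊n/2⌋} × ℝ^{⌈n/2⌉}`. -/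
def prodSimplex (n : ℕ) : Set (Pt n) :=
  {x | (∀ i, 0 ≤ x i) ∧
       (∑ i ∈ Finset.univ.filter fun i : Fin n => (i : ℕ) < n / 2, x i) ≤ 1 ∧
       (∑ i ∈ Finset.univ.filter fun i : Fin n => n / 2 ≤ (i : ℕ), x i) ≤ 1}

namespace Aux
variable {n : ℕ}

def B1 (n : ℕ) : Finset (Fin n) := Finset.univ.filter fun i : Fin n => (i : ℕ) < n / 2
def B2 (n : ℕ) : Finset (Fin n) := Finset.univ.filter fun i : Fin n => n / 2 ≤ (i : ℕ)

lemma mem_ps {x : Pt n} :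
    x ∈ prodSimplex n ↔ (∀ i, 0 ≤ x i) ∧ ∑ i ∈ B1 n, x i ≤ 1 ∧ ∑ i ∈ B2 n, x i ≤ 1 :=
  Iff.rfl

@[simp] lemma mem_B1 {i : Fin n} : i ∈ B1 n ↔ (i : ℕ) < n / 2 := by simp [B1]
@[simp] lemma mem_B2 {i : Fin n} : i ∈ B2 n ↔ n / 2 ≤ (i : ℕ) := by simp [B2]

lemma mem_B2_iff_not {i : Fin n} : i ∈ B2 n ↔ i ∉ B1 n := by simp [B1, B2, Nat.not_lt]

/-- The block of a coordinate. -/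
def blk (i : Fin n) : Finset (Fin n) := if (i : ℕ) < n / 2 then B1 n else B2 n

lemma mem_blk_self (i : Fin n) : i ∈ blk i := by
  unfold blk; split
  · simpa
  · simp; omega

lemma blk_eq_or (i : Fin n) : blk i = B1 n ∨ blk i = B2 n := by
  unfold blk; split <;> simp

lemma sum_stdVec (B : Finset (Fin n)) (i : Fin n) :
    ∑ k ∈ B, stdVec i k = if i ∈ B then 1 else 0 := by
  simp [stdVec, Finset.sum_ite_eq' B i (fun _ => (1:ℝ))]

end Aux

namespace Aux
variable {n : ℕ}

lemma ps_sum_blk_le {x : Pt n} (hx : x ∈ prodSimplex n) (i : Fin n) :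
    ∑ k ∈ blk i, x k ≤ 1 := by
  rcases blk_eq_or i with h | h <;> rw [h]
  · exact hx.2.1
  · exact hx.2.2

lemma ps_sum_le_of_blk {x : Pt n} (hx : x ∈ prodSimplex n) {B : Finset (Fin n)} {i : Fin n}
    (hB : B ⊆ blk i) : ∑ k ∈ B, x k ≤ 1 := by
  refine le_trans (Finset.sum_le_sum_of_subset_of_nonneg hB fun k _ _ => hx.1 k)
    (ps_sum_blk_le hx i)

lemma ps_le_one {x : Pt n} (hx : x ∈ prodSimplex n) (i : Fin n) : x i ≤ 1 := by
  have := ps_sum_le_of_blk hx (B := {i}) (i := i) (by simp [mem_blk_self])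
  simpa using this

lemma ps_pair {x : Pt n} (hx : x ∈ prodSimplex n) {i j : Fin n} (hij : i ≠ j)
    (hb : blk i = blk j) : x i + x j ≤ 1 := by
  have := ps_sum_le_of_blk hx (B := {i, j}) (i := i) ?_
  · simpa [Finset.sum_insert, hij] using this
  · intro k hk
    simp only [Finset.mem_insert, Finset.mem_singleton] at hk
    rcases hk with rfl | rfl
    · exact mem_blk_self k
    · rw [hb]; exact mem_blk_self k

lemma convex_ps : Convex ℝ (prodSimplex n) := by
  intro x hx y hy a b ha hb hab
  have key : ∀ B : Finset (Fin n),
      ∑ i ∈ B, (a • x + b • y) i = a * ∑ i ∈ B, x i + b * ∑ i ∈ B, y i := by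
    intro B
    rw [Finset.mul_sum, Finset.mul_sum, ← Finset.sum_add_distrib]
    simp [mul_comm]
  refine ⟨fun i => ?_, ?_, ?_⟩
  · have h1 := hx.1 i; have h2 := hy.1 i
    simp only [Pi.add_apply, Pi.smul_apply, smul_eq_mul]
    nlinarith
  · calc ∑ i ∈ B1 n, (a • x + b • y) i = a * ∑ i ∈ B1 n, x i + b * ∑ i ∈ B1 n, y i := key _
      _ ≤ a * 1 + b * 1 := by
          gcongr; exacts [hx.2.1, hy.2.1]
      _ = 1 := by linarith
  · calc ∑ i ∈ B2 n, (a • x + b • y) i = a * ∑ i ∈ B2 n, x i + b * ∑ i ∈ B2 n, y i := key _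
      _ ≤ a * 1 + b * 1 := by
          gcongr; exacts [hx.2.2, hy.2.2]
      _ = 1 := by linarith
lemma closed_ps : IsClosed (prodSimplex n) := by
  have h1 : IsClosed {x : Pt n | ∀ i, 0 ≤ x i} := by
    have : {x : Pt n | ∀ i, 0 ≤ x i} = ⋂ i, {x : Pt n | 0 ≤ x i} := by ext; simp
    rw [this]
    exact isClosed_iInter fun i => isClosed_le continuous_const (continuous_apply i)
  have h2 : ∀ B : Finset (Fin n), IsClosed {x : Pt n | ∑ i ∈ B, x i ≤ 1} := fun B =>
    isClosed_le (by continuity) continuous_const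
  have : prodSimplex n
      = {x : Pt n | ∀ i, 0 ≤ x i} ∩ ({x | ∑ i ∈ B1 n, x i ≤ 1} ∩ {x | ∑ i ∈ B2 n, x i ≤ 1}) := by
    ext x; exact ⟨fun h => ⟨h.1, h.2.1, h.2.2⟩, fun h => ⟨h.1, h.2.1, h.2.2⟩⟩
  rw [this]
  exact h1.inter ((h2 _).inter (h2 _))

lemma compact_ps : IsCompact (prodSimplex n) := by
  refine Metric.isCompact_of_isClosed_isBounded closed_ps ?_
  rw [Metric.isBounded_iff_subset_closedBall 0]
  refine ⟨1, fun x hx => ?_⟩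
  simp only [Metric.mem_closedBall, dist_zero_right]
  rw [pi_norm_le_iff_of_nonneg (by norm_num)]
  intro i
  rw [Real.norm_eq_abs, abs_le]
  exact ⟨by linarith [hx.1 i], ps_le_one hx i⟩

end Aux

namespace Aux
variable {n : ℕ}

lemma card_B1_lt (hn : 2 ≤ n) : (B1 n).card < n := by
  have h : B1 n ⊂ Finset.univ := by
    rw [Finset.ssubset_univ_iff]
    intro h
    have : (⟨n - 1, by omega⟩ : Fin n) ∈ B1 n := h ▸ Finset.mem_univ _
    rw [mem_B1] at this
    simp at this; omega
  simpa using Finset.card_lt_card h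

lemma card_B2_lt (hn : 2 ≤ n) : (B2 n).card < n := by
  have h : B2 n ⊂ Finset.univ := by
    rw [Finset.ssubset_univ_iff]
    intro h
    have : (⟨0, by omega⟩ : Fin n) ∈ B2 n := h ▸ Finset.mem_univ _
    rw [mem_B2] at this
    simp at this; omega
  simpa using Finset.card_lt_card h

lemma interior_ps_nonempty (hn : 2 ≤ n) : (interior (prodSimplex n)).Nonempty := by
  have hn0 : (0:ℝ) < n := by positivity
  set c : Pt n := fun _ => 1 / n with hc
  set U : Set (Pt n) :=
    {x | ∀ i, 0 < x i} ∩ ({x | ∑ i ∈ B1 n, x i < 1} ∩ {x | ∑ i ∈ B2 n, x i < 1}) with hU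
  have hUopen : IsOpen U := by
    refine IsOpen.inter ?_ (IsOpen.inter ?_ ?_)
    · have : {x : Pt n | ∀ i, 0 < x i} = ⋂ i, {x : Pt n | 0 < x i} := by ext; simp
      rw [this]
      exact isOpen_iInter_of_finite fun i =>
        isOpen_lt continuous_const (continuous_apply i)
    · exact isOpen_lt (by continuity) continuous_const
    · exact isOpen_lt (by continuity) continuous_const
  have hsum : ∀ B : Finset (Fin n), B.card < n → ∑ i ∈ B, c i < 1 := by
    intro B hB
    rw [Finset.sum_const, nsmul_eq_mul]
    calc (B.card : ℝ) * (1 / n) = B.card / n := by ring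
    _ < 1 := by rw [div_lt_one hn0]; exact_mod_cast hB
  have hcU : c ∈ U := by
    refine ⟨fun i => by positivity, hsum _ (card_B1_lt hn), hsum _ (card_B2_lt hn)⟩
  have hUsub : U ⊆ prodSimplex n := fun x hx =>
    ⟨fun i => le_of_lt (hx.1 i), le_of_lt hx.2.1, le_of_lt hx.2.2⟩
  exact ⟨c, mem_interior.2 ⟨U, hUsub, hUopen, hcU⟩⟩

end Aux

namespace Aux
variable {n : ℕ}

/-- The vertex set of `prodSimplex n`. -/
def Vset (n : ℕ) : Set (Pt n) := {x ∈ prodSimplex n | ∀ i, x i = 0 ∨ x i = 1}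

lemma blk_eq_B1_iff {i : Fin n} : blk i = B1 n ↔ i ∈ B1 n := by
  constructor
  · intro h; rw [← h]; exact mem_blk_self i
  · intro h; rw [mem_B1] at h; simp [blk, h]

lemma blk_eq_B2_iff {i : Fin n} : blk i = B2 n ↔ i ∈ B2 n := by
  constructor
  · intro h; rw [← h]; exact mem_blk_self i
  · intro h; rw [mem_B2] at h; simp [blk, Nat.not_lt.2 h]

lemma blk_eq_of_mem {i j : Fin n} (hj : j ∈ blk i) : blk j = blk i := by
  rcases blk_eq_or i with h | h <;> rw [h] at hj ⊢
  · exact blk_eq_B1_iff.2 hj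
  · exact blk_eq_B2_iff.2 hj

lemma mem_blk_comm {i j : Fin n} (hj : j ∈ blk i) : i ∈ blk j := by
  rw [blk_eq_of_mem hj]; exact mem_blk_self i

lemma not_mem_other_blk {i : Fin n} {B : Finset (Fin n)} (hB : B = B1 n ∨ B = B2 n)
    (h : blk i ≠ B) : i ∉ B := by
  intro hi
  rcases hB with rfl | rfl
  · exact h (blk_eq_B1_iff.2 hi)
  · exact h (blk_eq_B2_iff.2 hi)

/-- Every element of `Vset` is an extreme point. -/
lemma vset_subset_extreme : Vset n ⊆ Set.extremePoints ℝ (prodSimplex n) := by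
  rintro x ⟨hxΔ, hx01⟩
  refine ⟨hxΔ, ?_⟩
  rintro y hy z hz ⟨a, b, ha, hb, hab, hsum⟩
  have key : y = x ∧ z = x := by
    have hyx : ∀ i, y i = x i ∧ z i = x i := by
      intro i
      have hxi : a * y i + b * z i = x i := by
        have := congrFun hsum i; simpa using this
      rcases hx01 i with h0 | h1
      · rw [h0] at hxi ⊢
        have h1 := hy.1 i; have h2 := hz.1 i
        constructor <;> nlinarith
      · rw [h1] at hxi ⊢
        have h1' := ps_le_one hy i; have h2' := ps_le_one hz i
        constructor <;> nlinarith
    exact ⟨funext fun i => (hyx i).1, funext fun i => (hyx i).2⟩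
  exact key.1

/-- Every extreme point has 0/1 coordinates. -/
lemma extreme_subset_vset : Set.extremePoints ℝ (prodSimplex n) ⊆ Vset n := by
  rintro x ⟨hxΔ, hext⟩
  refine ⟨hxΔ, fun i => ?_⟩
  by_contra hbad
  push_neg at hbad
  obtain ⟨h0, h1⟩ := hbad
  have hxi0 : 0 < x i := lt_of_le_of_ne (hxΔ.1 i) (Ne.symm h0)
  have hxi1 : x i < 1 := lt_of_le_of_ne (ps_le_one hxΔ i) h1
  -- the perturbation: either along e_i - e_j (same block) or along e_i
  by_cases hcase : ∃ j ∈ blk i, j ≠ i ∧ 0 < x j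
  · obtain ⟨j, hjb, hji, hxj⟩ := hcase
    set ε : ℝ := min (x i) (x j) with hε
    have hε0 : 0 < ε := lt_min hxi0 hxj
    set d : Pt n := fun k => if k = i then ε else if k = j then -ε else 0 with hd
    have hsum_d : ∀ B : Finset (Fin n), B = B1 n ∨ B = B2 n → ∑ k ∈ B, d k = 0 := by
      intro B hB
      have hdd : ∀ k, d k = (if k = i then ε else 0) + (if k = j then -ε else 0) := by
        intro k
        by_cases h1 : k = i
        · subst h1; simp [hd, (Ne.symm hji)]
        · by_cases h2 : k = j <;> simp [hd, h1, h2, hji]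
      rw [Finset.sum_congr rfl fun k _ => hdd k, Finset.sum_add_distrib,
        Finset.sum_ite_eq' B i (fun _ => ε), Finset.sum_ite_eq' B j (fun _ => -ε)]
      have hmem : i ∈ B ↔ j ∈ B := by
        rcases hB with rfl | rfl
        · rw [← blk_eq_B1_iff, ← blk_eq_B1_iff, blk_eq_of_mem hjb]
        · rw [← blk_eq_B2_iff, ← blk_eq_B2_iff, blk_eq_of_mem hjb]
      by_cases h : i ∈ B
      · rw [if_pos h, if_pos (hmem.1 h)]; ring
      · rw [if_neg h, if_neg (fun hj => h (hmem.2 hj))]; ring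
    have hmemyz : (x - d) ∈ prodSimplex n ∧ (x + d) ∈ prodSimplex n := by
      have hnn : ∀ k, 0 ≤ x k - d k ∧ 0 ≤ x k + d k := by
        intro k
        have hdk : d k = if k = i then ε else if k = j then -ε else 0 := rfl
        by_cases hki : k = i
        · have hεi : ε ≤ x i := min_le_left _ _
          rw [hdk, if_pos hki, hki]
          constructor <;> linarith
        · by_cases hkj : k = j
          · have hεj : ε ≤ x j := min_le_right _ _
            rw [hdk, if_neg hki, if_pos hkj, hkj]
            constructor <;> linarith
          · have := hxΔ.1 k
            rw [hdk, if_neg hki, if_neg hkj]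
            constructor <;> linarith
      have hs : ∀ B : Finset (Fin n), B = B1 n ∨ B = B2 n →
          (∑ k ∈ B, (x k - d k) ≤ 1 ∧ ∑ k ∈ B, (x k + d k) ≤ 1) := by
        intro B hB
        have h1 : ∑ k ∈ B, x k ≤ 1 := by
          rcases hB with rfl | rfl
          exacts [hxΔ.2.1, hxΔ.2.2]
        rw [Finset.sum_sub_distrib, Finset.sum_add_distrib, hsum_d B hB]
        constructor <;> linarith
      exact ⟨⟨fun k => (hnn k).1, ((hs _ (Or.inl rfl)).1 :), ((hs _ (Or.inr rfl)).1 :)⟩,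
        ⟨fun k => (hnn k).2, ((hs _ (Or.inl rfl)).2 :), ((hs _ (Or.inr rfl)).2 :)⟩⟩
    have hseg : x ∈ openSegment ℝ (x - d) (x + d) := by
      refine ⟨1/2, 1/2, by norm_num, by norm_num, by norm_num, ?_⟩
      funext k
      simp only [Pi.add_apply, Pi.sub_apply, Pi.smul_apply, smul_eq_mul]
      ring
    have heq := (hext hmemyz.1 hmemyz.2 hseg)
    have h2 : x i - d i = x i := congrFun heq i
    have hdi : d i = ε := by rw [hd]; simp
    rw [hdi] at h2
    linarith
  · push_neg at hcase
    have hzero : ∀ j ∈ blk i, j ≠ i → x j = 0 := by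
      intro j hj hji
      exact le_antisymm (hcase j hj hji) (hxΔ.1 j)
    have hsumblk : ∑ k ∈ blk i, x k = x i := by
      rw [Finset.sum_eq_single i (fun k hk hki => hzero k hk hki) (fun h => absurd (mem_blk_self i) h)]
    set ε : ℝ := min (x i) (1 - x i) with hε
    have hε0 : 0 < ε := lt_min hxi0 (by linarith)
    set d : Pt n := fun k => if k = i then ε else 0 with hd
    have hsum_d : ∀ B : Finset (Fin n), ∑ k ∈ B, d k = if i ∈ B then ε else 0 := by
      intro B
      rw [hd]
      exact Finset.sum_ite_eq' B i (fun _ => ε)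
    have hmemyz : (x - d) ∈ prodSimplex n ∧ (x + d) ∈ prodSimplex n := by
      have hnn : ∀ k, 0 ≤ x k - d k ∧ 0 ≤ x k + d k := by
        intro k
        have hdk : d k = if k = i then ε else 0 := rfl
        by_cases hki : k = i
        · have hεi : ε ≤ x i := min_le_left _ _
          rw [hdk, if_pos hki, hki]
          constructor <;> linarith
        · have := hxΔ.1 k
          rw [hdk, if_neg hki]
          constructor <;> linarith
      have hs : ∀ B : Finset (Fin n), B = B1 n ∨ B = B2 n →
          (∑ k ∈ B, (x k - d k) ≤ 1 ∧ ∑ k ∈ B, (x k + d k) ≤ 1) := by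
        intro B hB
        have h1 : ∑ k ∈ B, x k ≤ 1 := by
          rcases hB with rfl | rfl
          exacts [hxΔ.2.1, hxΔ.2.2]
        rw [Finset.sum_sub_distrib, Finset.sum_add_distrib, hsum_d B]
        by_cases hiB : i ∈ B
        · rw [if_pos hiB]
          have hBblk : B = blk i := by
            rcases hB with rfl | rfl
            · exact (blk_eq_B1_iff.2 hiB).symm
            · exact (blk_eq_B2_iff.2 hiB).symm
          subst hBblk
          rw [hsumblk]
          have : ε ≤ 1 - x i := min_le_right _ _
          constructor <;> linarith
        · rw [if_neg hiB]
          constructor <;> linarith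
      exact ⟨⟨fun k => (hnn k).1, ((hs _ (Or.inl rfl)).1 :), ((hs _ (Or.inr rfl)).1 :)⟩,
        ⟨fun k => (hnn k).2, ((hs _ (Or.inl rfl)).2 :), ((hs _ (Or.inr rfl)).2 :)⟩⟩
    have hseg : x ∈ openSegment ℝ (x - d) (x + d) := by
      refine ⟨1/2, 1/2, by norm_num, by norm_num, by norm_num, ?_⟩
      funext k
      simp only [Pi.add_apply, Pi.sub_apply, Pi.smul_apply, smul_eq_mul]
      ring
    have heq := (hext hmemyz.1 hmemyz.2 hseg)
    have h2 : x i - d i = x i := congrFun heq i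
    have hdi : d i = ε := by rw [hd]; simp
    rw [hdi] at h2
    linarith

lemma extremePoints_ps : Set.extremePoints ℝ (prodSimplex n) = Vset n :=
  Subset.antisymm extreme_subset_vset vset_subset_extreme

end Aux

namespace Aux
variable {n : ℕ}

/-- In each block, a vertex is either zero or has exactly one coordinate 1. -/
lemma vset_struct {v : Pt n} (hv : v ∈ Vset n) (B : Finset (Fin n))
    (hB : B = B1 n ∨ B = B2 n) :
    (∀ i ∈ B, v i = 0) ∨ (∃ p ∈ B, v p = 1 ∧ ∀ i ∈ B, i ≠ p → v i = 0) := by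
  by_cases h : ∀ i ∈ B, v i = 0
  · exact Or.inl h
  · push_neg at h
    obtain ⟨p, hpB, hp0⟩ := h
    have hp1 : v p = 1 := (hv.2 p).resolve_left hp0
    refine Or.inr ⟨p, hpB, hp1, fun i hiB hip => ?_⟩
    by_contra h0
    have hi1 : v i = 1 := (hv.2 i).resolve_left h0
    have hblk : blk i = blk p := by
      rcases hB with rfl | rfl
      · rw [blk_eq_B1_iff.2 hiB, blk_eq_B1_iff.2 hpB]
      · rw [blk_eq_B2_iff.2 hiB, blk_eq_B2_iff.2 hpB]
    have := ps_pair hv.1 hip hblk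
    rw [hi1, hp1] at this
    norm_num at this

def emb1 (n : ℕ) (k : Fin (n / 2)) : Fin n :=
  ⟨k.1, lt_of_lt_of_le k.2 (Nat.div_le_self n 2)⟩

def emb2 (n : ℕ) (k : Fin (n - n / 2)) : Fin n := ⟨n / 2 + k.1, by omega⟩

lemma emb1_mem : ∀ k, emb1 n k ∈ B1 n := fun k => mem_B1.2 k.2
lemma emb2_mem : ∀ k, emb2 n k ∈ B2 n := fun k => mem_B2.2 (Nat.le_add_right _ _)

lemma emb1_inj : Function.Injective (emb1 n) := by
  intro a b h
  have := congrArg Fin.val h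
  ext; simpa [emb1] using this

lemma emb2_inj : Function.Injective (emb2 n) := by
  intro a b h
  have := congrArg Fin.val h
  simp only [emb2] at this
  ext; omega

/-- Parametrization of the vertices. -/
def gvert (n : ℕ) (o : Option (Fin (n / 2)) × Option (Fin (n - n / 2))) : Pt n :=
  o.1.elim 0 (fun k => stdVec (emb1 n k)) + o.2.elim 0 (fun k => stdVec (emb2 n k))

lemma stdVec_apply_ne {i j : Fin n} (h : j ≠ i) : stdVec i j = 0 := if_neg h
lemma stdVec_apply_self (i : Fin n) : stdVec i i = 1 := if_pos rfl

lemma B1_B2_ne_val {i j : Fin n} (hi : i ∈ B1 n) (hj : j ∈ B2 n) : i ≠ j := by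
  rw [mem_B1] at hi; rw [mem_B2] at hj
  intro h; subst h; omega

lemma gvert_apply_B1 (o) {i : Fin n} (hi : i ∈ B1 n) :
    gvert n o i = o.1.elim 0 (fun k => stdVec (emb1 n k)) i := by
  have h2 : o.2.elim (0 : Pt n) (fun k => stdVec (emb2 n k)) i = 0 := by
    cases h : o.2 with
    | none => rfl
    | some k => exact stdVec_apply_ne (B1_B2_ne_val hi (emb2_mem k))
  simp only [gvert, Pi.add_apply, h2, add_zero]

lemma gvert_apply_B2 (o) {i : Fin n} (hi : i ∈ B2 n) :
    gvert n o i = o.2.elim 0 (fun k => stdVec (emb2 n k)) i := by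
  have h2 : o.1.elim (0 : Pt n) (fun k => stdVec (emb1 n k)) i = 0 := by
    cases h : o.1 with
    | none => rfl
    | some k => exact stdVec_apply_ne (B1_B2_ne_val (emb1_mem k) hi).symm
  simp only [gvert, Pi.add_apply, h2, add_zero, zero_add]

lemma sum_gvert_B1 (o) : ∑ i ∈ B1 n, gvert n o i = if o.1.isSome then 1 else 0 := by
  rw [Finset.sum_congr rfl fun i hi => gvert_apply_B1 o hi]
  cases o.1 with
  | none => simp
  | some k => simp [sum_stdVec, emb1_mem k]

lemma sum_gvert_B2 (o) : ∑ i ∈ B2 n, gvert n o i = if o.2.isSome then 1 else 0 := by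
  rw [Finset.sum_congr rfl fun i hi => gvert_apply_B2 o hi]
  cases o.2 with
  | none => simp
  | some k => simp [sum_stdVec, emb2_mem k]

lemma gvert_mem_vset (o) : gvert n o ∈ Vset n := by
  have h01 : ∀ i, gvert n o i = 0 ∨ gvert n o i = 1 := by
    intro i
    rcases (em ((i:ℕ) < n / 2)) with h | h
    · rw [gvert_apply_B1 o (mem_B1.2 h)]
      cases o.1 with
      | none => exact Or.inl rfl
      | some k =>
        by_cases hik : i = emb1 n k
        · exact Or.inr (by simp [stdVec, hik])
        · exact Or.inl (stdVec_apply_ne hik)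
    · rw [gvert_apply_B2 o (mem_B2.2 (Nat.not_lt.1 h))]
      cases o.2 with
      | none => exact Or.inl rfl
      | some k =>
        by_cases hik : i = emb2 n k
        · exact Or.inr (by simp [stdVec, hik])
        · exact Or.inl (stdVec_apply_ne hik)
  refine ⟨⟨fun i => ?_, ?_, ?_⟩, h01⟩
  · rcases h01 i with h | h <;> rw [h] <;> norm_num
  · show ∑ i ∈ B1 n, gvert n o i ≤ 1
    rw [sum_gvert_B1]; split <;> norm_num
  · show ∑ i ∈ B2 n, gvert n o i ≤ 1
    rw [sum_gvert_B2]; split <;> norm_num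

lemma vset_eq_range : Vset n = Set.range (gvert n) := by
  ext v
  constructor
  · intro hv
    have h1 := vset_struct hv (B1 n) (Or.inl rfl)
    have h2 := vset_struct hv (B2 n) (Or.inr rfl)
    have ho1 : ∃ o1 : Option (Fin (n/2)),
        ∀ i ∈ B1 n, v i = o1.elim (0 : Pt n) (fun k => stdVec (emb1 n k)) i := by
      rcases h1 with h | ⟨p, hpB, hp1, hp0⟩
      · exact ⟨none, fun i hi => h i hi⟩
      · refine ⟨some ⟨p.1, mem_B1.1 hpB⟩, fun i hi => ?_⟩
        have : emb1 n ⟨p.1, mem_B1.1 hpB⟩ = p := by ext; rfl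
        rw [Option.elim_some, this]
        by_cases hip : i = p
        · rw [hip, hp1, stdVec_apply_self]
        · rw [hp0 i hi hip, stdVec_apply_ne hip]
    have ho2 : ∃ o2 : Option (Fin (n - n/2)),
        ∀ i ∈ B2 n, v i = o2.elim (0 : Pt n) (fun k => stdVec (emb2 n k)) i := by
      rcases h2 with h | ⟨p, hpB, hp1, hp0⟩
      · exact ⟨none, fun i hi => h i hi⟩
      · have hple : n / 2 ≤ p.1 := mem_B2.1 hpB
        refine ⟨some ⟨p.1 - n/2, by omega⟩, fun i hi => ?_⟩
        have : emb2 n ⟨p.1 - n/2, by omega⟩ = p := by ext; simp [emb2]; omega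
        rw [Option.elim_some, this]
        by_cases hip : i = p
        · rw [hip, hp1, stdVec_apply_self]
        · rw [hp0 i hi hip, stdVec_apply_ne hip]
    obtain ⟨o1, ho1⟩ := ho1
    obtain ⟨o2, ho2⟩ := ho2
    refine ⟨(o1, o2), ?_⟩
    funext i
    rcases (em ((i:ℕ) < n / 2)) with h | h
    · rw [gvert_apply_B1 (o1, o2) (mem_B1.2 h)]
      exact (ho1 i (mem_B1.2 h)).symm
    · rw [gvert_apply_B2 (o1, o2) (mem_B2.2 (Nat.not_lt.1 h))]
      exact (ho2 i (mem_B2.2 (Nat.not_lt.1 h))).symm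
  · rintro ⟨o, rfl⟩
    exact gvert_mem_vset o

lemma gvert_inj : Function.Injective (gvert n) := by
  have key1 : ∀ o o' : Option (Fin (n/2)) × Option (Fin (n - n/2)),
      gvert n o = gvert n o' → ∀ k, o.1 = some k → o'.1 = some k := by
    intro o o' h k hk
    have h1 : gvert n o (emb1 n k) = 1 := by
      rw [gvert_apply_B1 _ (emb1_mem k), hk, Option.elim_some, stdVec_apply_self]
    rw [h, gvert_apply_B1 _ (emb1_mem k)] at h1
    cases hb : o'.1 with
    | none => rw [hb] at h1; norm_num at h1
    | some k' =>
      rw [hb, Option.elim_some] at h1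
      by_cases hkk : emb1 n k = emb1 n k'
      · rw [emb1_inj hkk]
      · rw [stdVec_apply_ne hkk] at h1; norm_num at h1
  have key2 : ∀ o o' : Option (Fin (n/2)) × Option (Fin (n - n/2)),
      gvert n o = gvert n o' → ∀ k, o.2 = some k → o'.2 = some k := by
    intro o o' h k hk
    have h1 : gvert n o (emb2 n k) = 1 := by
      rw [gvert_apply_B2 _ (emb2_mem k), hk, Option.elim_some, stdVec_apply_self]
    rw [h, gvert_apply_B2 _ (emb2_mem k)] at h1
    cases hb : o'.2 with
    | none => rw [hb] at h1; norm_num at h1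
    | some k' =>
      rw [hb, Option.elim_some] at h1
      by_cases hkk : emb2 n k = emb2 n k'
      · rw [emb2_inj hkk]
      · rw [stdVec_apply_ne hkk] at h1; norm_num at h1
  intro o o' h
  have hfst : o.1 = o'.1 := by
    cases ha : o.1 with
    | some k => rw [key1 o o' h k ha]
    | none =>
      cases hb : o'.1 with
      | none => rfl
      | some k =>
        have := key1 o' o h.symm k hb
        rw [ha] at this
        exact absurd this (by simp)
  have hsnd : o.2 = o'.2 := by
    cases ha : o.2 with
    | some k => rw [key2 o o' h k ha]
    | none =>
      cases hb : o'.2 with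
      | none => rfl
      | some k =>
        have := key2 o' o h.symm k hb
        rw [ha] at this
        exact absurd this (by simp)
  exact Prod.ext hfst hsnd

lemma vset_finite : (Vset n).Finite := by
  rw [vset_eq_range]; exact Set.finite_range _

lemma vset_ncard : (Vset n).ncard = (n / 2 + 1) * ((n - n / 2) + 1) := by
  rw [vset_eq_range, ← Set.image_univ, Set.ncard_image_of_injective _ gvert_inj,
    Set.ncard_univ, Nat.card_eq_fintype_card]
  simp [Fintype.card_prod, Fintype.card_option, mul_comm]

end Aux

namespace Aux
variable {n : ℕ}

lemma sum_smul_add (a b : ℝ) (x y : Pt n) (B : Finset (Fin n)) :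
    ∑ i ∈ B, (a • x + b • y) i = a * ∑ i ∈ B, x i + b * ∑ i ∈ B, y i := by
  rw [Finset.mul_sum, Finset.mul_sum, ← Finset.sum_add_distrib]
  simp [mul_comm]

lemma tight_le {a b s t m : ℝ} (ha : 0 < a) (hb : 0 < b) (hab : a + b = 1)
    (hs : s ≤ m) (ht : t ≤ m) (h : a * s + b * t = m) : s = m ∧ t = m := by
  have hm : a * m + b * m = m := by
    calc a * m + b * m = (a + b) * m := by ring
    _ = m := by rw [hab, one_mul]
  have h1 : a * s ≤ a * m := mul_le_mul_of_nonneg_left hs ha.le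
  have h2 : b * t ≤ b * m := mul_le_mul_of_nonneg_left ht hb.le
  have e1 : a * s = a * m := by linarith
  have e2 : b * t = b * m := by linarith
  exact ⟨mul_left_cancel₀ ha.ne' e1, mul_left_cancel₀ hb.ne' e2⟩

lemma tight_ge {a b s t m : ℝ} (ha : 0 < a) (hb : 0 < b) (hab : a + b = 1)
    (hs : m ≤ s) (ht : m ≤ t) (h : a * s + b * t = m) : s = m ∧ t = m := by
  have hm : a * m + b * m = m := by
    calc a * m + b * m = (a + b) * m := by ring
    _ = m := by rw [hab, one_mul]
  have h1 : a * m ≤ a * s := mul_le_mul_of_nonneg_left hs ha.le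
  have h2 : b * m ≤ b * t := mul_le_mul_of_nonneg_left ht hb.le
  have e1 : a * s = a * m := by linarith
  have e2 : b * t = b * m := by linarith
  exact ⟨mul_left_cancel₀ ha.ne' e1, mul_left_cancel₀ hb.ne' e2⟩

/-- The face of `prodSimplex n` cut out by the constraints tight on both `v` and `w`. -/
def Eset (n : ℕ) (v w : Pt n) : Set (Pt n) :=
  {x ∈ prodSimplex n |
    (∀ i, v i = 1 → w i = 1 → x i = 1) ∧
    (∀ i, v i = 0 → w i = 0 → x i = 0) ∧
    (∑ i ∈ B1 n, v i = 1 → ∑ i ∈ B1 n, w i = 1 → ∑ i ∈ B1 n, x i = 1) ∧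
    (∑ i ∈ B2 n, v i = 1 → ∑ i ∈ B2 n, w i = 1 → ∑ i ∈ B2 n, x i = 1)}

lemma eset_extreme (v w : Pt n) : IsExtreme ℝ (prodSimplex n) (Eset n v w) := by
  constructor
  · exact fun x hx => hx.1
  · rintro x1 hx1 x2 hx2 z ⟨hzΔ, hz1, hz0, hzs1, hzs2⟩ ⟨a, b, ha, hb, hab, hsum⟩
    have happ : ∀ i, a * x1 i + b * x2 i = z i := by
      intro i
      have := congrFun hsum i
      simpa using this
    have h1 : ∀ i, v i = 1 → w i = 1 → x1 i = 1 ∧ x2 i = 1 := fun i h1' h2' =>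
      tight_le ha hb hab (ps_le_one hx1 i) (ps_le_one hx2 i)
        ((happ i).trans (hz1 i h1' h2'))
    have h0 : ∀ i, v i = 0 → w i = 0 → x1 i = 0 ∧ x2 i = 0 := fun i h1' h2' =>
      tight_ge ha hb hab (hx1.1 i) (hx2.1 i) ((happ i).trans (hz0 i h1' h2'))
    have hsumB : ∀ B : Finset (Fin n), ∑ i ∈ B, z i = a * ∑ i ∈ B, x1 i + b * ∑ i ∈ B, x2 i := by
      intro B
      rw [← hsum, sum_smul_add]
    have hs1 : (∑ i ∈ B1 n, v i = 1) → (∑ i ∈ B1 n, w i = 1) →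
        (∑ i ∈ B1 n, x1 i = 1 ∧ ∑ i ∈ B1 n, x2 i = 1) := fun hv' hw' =>
      tight_le ha hb hab hx1.2.1 hx2.2.1 (((hsumB _).symm).trans (hzs1 hv' hw'))
    have hs2 : (∑ i ∈ B2 n, v i = 1) → (∑ i ∈ B2 n, w i = 1) →
        (∑ i ∈ B2 n, x1 i = 1 ∧ ∑ i ∈ B2 n, x2 i = 1) := fun hv' hw' =>
      tight_le ha hb hab hx1.2.2 hx2.2.2 (((hsumB _).symm).trans (hzs2 hv' hw'))
    exact ⟨hx1, fun i a b => (h1 i a b).1, fun i a b => (h0 i a b).1,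
        fun a b => (hs1 a b).1, fun a b => (hs2 a b).1⟩

lemma segment_subset_eset {v w : Pt n} (hv : v ∈ prodSimplex n) (hw : w ∈ prodSimplex n) :
    segment ℝ v w ⊆ Eset n v w := by
  rintro x ⟨a, b, ha, hb, hab, rfl⟩
  have happ : ∀ i, (a • v + b • w) i = a * v i + b * w i := fun i => by simp
  refine ⟨convex_ps.segment_subset hv hw ⟨a, b, ha, hb, hab, rfl⟩, ?_, ?_, ?_, ?_⟩
  · intro i h1 h2; rw [happ i, h1, h2]; linarith
  · intro i h1 h2; rw [happ i, h1, h2]; linarith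
  · intro h1 h2; rw [sum_smul_add, h1, h2]; linarith
  · intro h1 h2; rw [sum_smul_add, h1, h2]; linarith

end Aux

namespace Aux
variable {n : ℕ}

lemma cover_BC {B C : Finset (Fin n)}
    (hBC : (B = B1 n ∧ C = B2 n) ∨ (B = B2 n ∧ C = B1 n)) (i : Fin n) :
    i ∈ B ∨ i ∈ C := by
  rcases hBC with ⟨rfl, rfl⟩ | ⟨rfl, rfl⟩ <;> rcases em ((i : ℕ) < n / 2) with h | h
  · exact Or.inl (mem_B1.2 h)
  · exact Or.inr (mem_B2.2 (Nat.not_lt.1 h))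
  · exact Or.inr (mem_B1.2 h)
  · exact Or.inl (mem_B2.2 (Nat.not_lt.1 h))

lemma eset_subset_segment {v w : Pt n} (hv : v ∈ Vset n) (hw : w ∈ Vset n)
    {B C : Finset (Fin n)}
    (hBC : (B = B1 n ∧ C = B2 n) ∨ (B = B2 n ∧ C = B1 n))
    (hagree : ∀ i ∈ C, v i = w i) (hne : v ≠ w) :
    Eset n v w ⊆ segment ℝ v w := by
  have hBor : B = B1 n ∨ B = B2 n := by rcases hBC with ⟨rfl, _⟩ | ⟨rfl, _⟩ <;> simp
  rintro x ⟨hxΔ, hx1, hx0, hxs1, hxs2⟩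
  have hsB : (∑ i ∈ B, v i = 1) → (∑ i ∈ B, w i = 1) → ∑ i ∈ B, x i = 1 := by
    rcases hBC with ⟨rfl, _⟩ | ⟨rfl, _⟩
    exacts [hxs1, hxs2]
  have hxC : ∀ i ∈ C, x i = v i := by
    intro i hi
    have hvw := hagree i hi
    rcases hv.2 i with h0 | h1
    · rw [h0]; exact hx0 i h0 (by rw [← hvw, h0])
    · rw [h1]; exact hx1 i h1 (by rw [← hvw, h1])
  rcases vset_struct hv B hBor with hv0 | ⟨p, hpB, hvp1, hvp0⟩ <;>
    rcases vset_struct hw B hBor with hw0 | ⟨q, hqB, hwq1, hwq0⟩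
  · exfalso
    apply hne
    funext i
    rcases cover_BC hBC i with hi | hi
    · rw [hv0 i hi, hw0 i hi]
    · exact hagree i hi
  · -- v = 0 on B, w = e_q on B
    have ht0 : 0 ≤ x q := hxΔ.1 q
    have ht1 : x q ≤ 1 := ps_le_one hxΔ q
    refine ⟨1 - x q, x q, by linarith, ht0, by ring, funext fun i => ?_⟩
    simp only [Pi.add_apply, Pi.smul_apply, smul_eq_mul]
    rcases cover_BC hBC i with hi | hi
    · by_cases hiq : i = q
      · subst hiq
        rw [hv0 i hi, hwq1]; ring
      · rw [hv0 i hi, hwq0 i hi hiq, hx0 i (hv0 i hi) (hwq0 i hi hiq)]; ring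
    · rw [← hagree i hi, hxC i hi]; ring
  · -- v = e_p on B, w = 0 on B
    have ht0 : 0 ≤ x p := hxΔ.1 p
    have ht1 : x p ≤ 1 := ps_le_one hxΔ p
    refine ⟨x p, 1 - x p, ht0, by linarith, by ring, funext fun i => ?_⟩
    simp only [Pi.add_apply, Pi.smul_apply, smul_eq_mul]
    rcases cover_BC hBC i with hi | hi
    · by_cases hip : i = p
      · subst hip
        rw [hw0 i hi, hvp1]; ring
      · rw [hw0 i hi, hvp0 i hi hip, hx0 i (hvp0 i hi hip) (hw0 i hi)]; ring
    · rw [← hagree i hi, hxC i hi]; ring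
  · -- v = e_p, w = e_q on B
    by_cases hpq : p = q
    · exfalso
      apply hne
      funext i
      rcases cover_BC hBC i with hi | hi
      · by_cases hip : i = p
        · subst hip; rw [hvp1, hpq, hwq1]
        · rw [hvp0 i hi hip, hwq0 i hi (by rw [← hpq]; exact hip)]
      · exact hagree i hi
    · have hsv : ∑ i ∈ B, v i = 1 := by
        rw [Finset.sum_eq_single p (fun i hi hip => hvp0 i hi hip)
          (fun h => absurd hpB h), hvp1]
      have hsw : ∑ i ∈ B, w i = 1 := by
        rw [Finset.sum_eq_single q (fun i hi hiq => hwq0 i hi hiq)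
          (fun h => absurd hqB h), hwq1]
      have hsx := hsB hsv hsw
      have hx0' : ∀ i ∈ B, i ≠ p → i ≠ q → x i = 0 := fun i hi hip hiq =>
        hx0 i (hvp0 i hi hip) (hwq0 i hi hiq)
      have hpair : ({p, q} : Finset (Fin n)) ⊆ B := by
        intro i hi
        rcases Finset.mem_insert.1 hi with rfl | hi
        · exact hpB
        · rw [Finset.mem_singleton] at hi; subst hi; exact hqB
      have hxpq : x p + x q = 1 := by
        rw [← Finset.sum_pair hpq]
        rw [Finset.sum_subset hpair (fun i hi hni => hx0' i hi
          (fun h => hni (by rw [h]; exact Finset.mem_insert_self _ _))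
          (fun h => hni (by rw [h]; exact Finset.mem_insert_of_mem (Finset.mem_singleton_self _))))]
        exact hsx
      refine ⟨x p, x q, hxΔ.1 p, hxΔ.1 q, hxpq, funext fun i => ?_⟩
      simp only [Pi.add_apply, Pi.smul_apply, smul_eq_mul]
      rcases cover_BC hBC i with hi | hi
      · by_cases hip : i = p
        · subst hip
          rw [hvp1, hwq0 i hi hpq]; ring
        · by_cases hiq : i = q
          · subst hiq
            rw [hwq1, hvp0 i hi hip]; ring
          · rw [hvp0 i hi hip, hwq0 i hi hiq, hx0' i hi hip hiq]; ring
      · rw [← hagree i hi, hxC i hi, ← add_mul, hxpq, one_mul]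

lemma eset_eq_segment {v w : Pt n} (hv : v ∈ Vset n) (hw : w ∈ Vset n)
    {B C : Finset (Fin n)}
    (hBC : (B = B1 n ∧ C = B2 n) ∨ (B = B2 n ∧ C = B1 n))
    (hagree : ∀ i ∈ C, v i = w i) (hne : v ≠ w) :
    Eset n v w = segment ℝ v w :=
  Subset.antisymm (eset_subset_segment hv hw hBC hagree hne)
    (segment_subset_eset hv.1 hw.1)

lemma isEdge_adjacent {v w : Pt n} (hv : v ∈ Vset n) (hw : w ∈ Vset n) (hne : v ≠ w)
    (hagree : (∀ i ∈ B1 n, v i = w i) ∨ (∀ i ∈ B2 n, v i = w i)) :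
    IsEdge (prodSimplex n) (segment ℝ v w) := by
  refine ⟨v, w, hne, rfl, ?_⟩
  rcases hagree with h | h
  · rw [← eset_eq_segment hv hw (Or.inr ⟨rfl, rfl⟩) h hne]
    exact eset_extreme v w
  · rw [← eset_eq_segment hv hw (Or.inl ⟨rfl, rfl⟩) h hne]
    exact eset_extreme v w

end Aux

namespace Aux
variable {n : ℕ}

open scoped Classical in
/-- The integer matrix of edge directions at the vertex `v`. -/
def umat (v : Pt n) : Fin n → Fin n → ℤ := fun i j =>
  if v j = 1 then (if i ∈ blk j then -1 else 0) else (if i = j then 1 else 0)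

open scoped Classical in
lemma umat_eq (v : Pt n) (i j : Fin n) :
    umat v i j
      = if v j = 1 then (if i ∈ blk j then -1 else 0) else (if i = j then 1 else 0) := by
  simp [umat]

lemma vset_unique_supp {v : Pt n} (hv : v ∈ Vset n) {j k : Fin n} (hj : v j = 1)
    (hk : v k = 1) (hblk : k ∈ blk j) : k = j := by
  by_contra h
  have hb : blk k = blk j := blk_eq_of_mem hblk
  have := ps_pair hv.1 h hb
  rw [hk, hj] at this; norm_num at this

open scoped Classical in
lemma umat_mul_self {v : Pt n} (hv : v ∈ Vset n) :
    Matrix.of (umat v) * Matrix.of (umat v) = 1 := by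
  ext i j
  rw [Matrix.mul_apply, Matrix.one_apply]
  have hsplit := Finset.sum_filter_add_sum_filter_not Finset.univ (fun k => v k = 1)
      (fun k => Matrix.of (umat v) i k * Matrix.of (umat v) k j)
  rw [← hsplit]
  simp only [Matrix.of_apply]
  have h2 : ∑ k ∈ Finset.univ.filter (fun k => ¬ v k = 1), umat v i k * umat v k j
      = if v i = 1 then 0 else umat v i j := by
    by_cases hvi : v i = 1
    · rw [if_pos hvi]
      apply Finset.sum_eq_zero
      intro k hk
      rw [Finset.mem_filter] at hk
      have hik : ¬ (i = k) := fun h => hk.2 (h ▸ hvi)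
      rw [umat_eq v i k, if_neg hk.2, if_neg hik, zero_mul]
    · rw [if_neg hvi]
      rw [Finset.sum_eq_single i]
      · rw [umat_eq v i i, if_neg hvi, if_pos rfl, one_mul]
      · intro k hk hki
        rw [Finset.mem_filter] at hk
        rw [umat_eq v i k, if_neg hk.2, if_neg (fun h => hki (h.symm)), zero_mul]
      · intro hi; exact absurd (Finset.mem_filter.2 ⟨Finset.mem_univ i, hvi⟩) hi
  have h1 : ∑ k ∈ Finset.univ.filter (fun k => v k = 1), umat v i k * umat v k j
      = if v j = 1 then (if i ∈ blk j then 1 else 0) else 0 := by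
    by_cases hvj : v j = 1
    · rw [if_pos hvj]
      rw [Finset.sum_eq_single j]
      · rw [umat_eq v i j, umat_eq v j j, if_pos hvj, if_pos hvj,
          if_pos (mem_blk_self j)]
        split_ifs with h
        · norm_num
        · norm_num
      · intro k hk hkj
        rw [Finset.mem_filter] at hk
        have hknot : k ∉ blk j := fun hmem => hkj (vset_unique_supp hv hvj hk.2 hmem)
        rw [umat_eq v k j, if_pos hvj, if_neg hknot, mul_zero]
      · intro hj; exact absurd (Finset.mem_filter.2 ⟨Finset.mem_univ j, hvj⟩) hj
    · rw [if_neg hvj]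
      apply Finset.sum_eq_zero
      intro k hk
      rw [Finset.mem_filter] at hk
      have hkj : ¬ (k = j) := fun h => hvj (h ▸ hk.2)
      rw [umat_eq v k j, if_neg hvj, if_neg hkj, mul_zero]
  rw [h1, h2]
  by_cases hvj : v j = 1 <;> by_cases hvi : v i = 1
  · rw [if_pos hvj, if_pos hvi]
    by_cases hij : i = j
    · rw [if_pos hij, if_pos (hij ▸ mem_blk_self i)]
      · ring
    · rw [if_neg hij, if_neg (fun hmem => hij (vset_unique_supp hv hvj hvi hmem))]
      ring
  · rw [if_pos hvj, if_neg hvi, umat_eq v i j, if_pos hvj]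
    have hij : ¬ (i = j) := fun h => hvi (h ▸ hvj)
    rw [if_neg hij]
    split_ifs with h
    · ring
    · ring
  · have hij : ¬ (i = j) := fun h => hvj (h ▸ hvi)
    rw [if_neg hvj, if_pos hvi, if_neg hij]
    ring
  · have : umat v i j = if i = j then 1 else 0 := by
      rw [umat_eq v i j, if_neg hvj]
    rw [if_neg hvj, if_neg hvi, this]
    split_ifs <;> ring

lemma umat_det_isUnit {v : Pt n} (hv : v ∈ Vset n) :
    IsUnit (Matrix.of (umat v)).det := by
  have h := umat_mul_self hv
  have h2 : IsUnit ((Matrix.of (umat v)).det * (Matrix.of (umat v)).det) := by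
    rw [← Matrix.det_mul, h, Matrix.det_one]
    exact isUnit_one
  exact isUnit_of_mul_isUnit_left h2

end Aux

namespace Aux
variable {n : ℕ}

lemma endpoint_extreme {v w : Pt n} (hne : v ≠ w) :
    w ∈ Set.extremePoints ℝ (segment ℝ v w) := by
  refine ⟨right_mem_segment ℝ v w, ?_⟩
  rintro x ⟨a1, b1, ha1, hb1, hab1, rfl⟩ y ⟨a2, b2, ha2, hb2, hab2, rfl⟩ ⟨a, b, ha, hb, hab, hsum⟩
  have key : (a * a1 + b * a2) • v + (a * b1 + b * b2) • w = w := by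
    have hh : (a * a1 + b * a2) • v + (a * b1 + b * b2) • w
        = a • (a1 • v + b1 • w) + b • (a2 • v + b2 • w) := by
      funext k
      simp only [Pi.add_apply, Pi.smul_apply, smul_eq_mul]
      ring
    rw [hh, hsum]
  set α := a * a1 + b * a2 with hα_def
  set β := a * b1 + b * b2 with hβ_def
  have hαβ : α + β = 1 := by
    rw [hα_def, hβ_def]
    calc a * a1 + b * a2 + (a * b1 + b * b2) = a * (a1 + b1) + b * (a2 + b2) := by ring
    _ = 1 := by rw [hab1, hab2]; linarith
  have hα0 : α • (v - w) = 0 := by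
    have h1 : α • v = w - β • w := eq_sub_of_add_eq key
    have h2 : (1 - β) = α := by linarith
    calc α • (v - w) = α • v - α • w := smul_sub _ _ _
    _ = (w - β • w) - α • w := by rw [h1]
    _ = (1 - β) • w - α • w := by rw [sub_smul, one_smul]
    _ = 0 := by rw [h2, sub_self]
  have hα : α = 0 := by
    rcases smul_eq_zero.1 hα0 with h | h
    · exact h
    · exact absurd (sub_eq_zero.1 h) hne
  have haa1 : a * a1 = 0 := by
    have h1 : 0 ≤ a * a1 := mul_nonneg ha.le ha1
    have h2 : 0 ≤ b * a2 := mul_nonneg hb.le ha2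
    rw [hα_def] at hα
    linarith
  have haa2 : b * a2 = 0 := by
    have h1 : 0 ≤ a * a1 := mul_nonneg ha.le ha1
    have h2 : 0 ≤ b * a2 := mul_nonneg hb.le ha2
    rw [hα_def] at hα
    linarith
  have ha1' : a1 = 0 := by
    rcases mul_eq_zero.1 haa1 with h | h
    · exact absurd h ha.ne'
    · exact h
  have ha2' : a2 = 0 := by
    rcases mul_eq_zero.1 haa2 with h | h
    · exact absurd h hb.ne'
    · exact h
  have hb1' : b1 = 1 := by linarith
  have hb2' : b2 = 1 := by linarith
  rw [ha1', hb1', zero_smul, one_smul, zero_add]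

lemma edge_through_vertex {e : Set (Pt n)} (he : IsEdge (prodSimplex n) e) {v : Pt n}
    (hv : v ∈ Set.extremePoints ℝ (prodSimplex n)) (hve : v ∈ e) :
    ∃ w ∈ Vset n, w ≠ v ∧ e = segment ℝ v w ∧
      ((∀ i ∈ B1 n, v i = w i) ∨ (∀ i ∈ B2 n, v i = w i)) := by
  obtain ⟨x, y, hxy, rfl, hext⟩ := he
  have hendpoint : v = x ∨ v = y := by
    by_contra h
    push_neg at h
    have hopen : v ∈ openSegment ℝ x y :=
      mem_openSegment_of_ne_left_right (Ne.symm h.1) (Ne.symm h.2) hve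
    have := hv.2 (hext.1 (left_mem_segment ℝ x y)) (hext.1 (right_mem_segment ℝ x y)) hopen
    exact h.1 this.symm
  have hmain : ∃ w, segment ℝ x y = segment ℝ v w ∧ w ≠ v ∧
      w ∈ Set.extremePoints ℝ (segment ℝ x y) := by
    rcases hendpoint with rfl | rfl
    · exact ⟨y, rfl, Ne.symm hxy, endpoint_extreme hxy⟩
    · refine ⟨x, segment_symm ℝ x v, hxy, ?_⟩
      rw [segment_symm ℝ x v]
      exact endpoint_extreme (Ne.symm hxy)
  obtain ⟨w, hseg, hwv, hwext⟩ := hmain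
  have hwV : w ∈ Vset n :=
    extreme_subset_vset (hext.extremePoints_subset_extremePoints hwext)
  refine ⟨w, hwV, hwv, hseg, ?_⟩
  by_contra hcon
  push_neg at hcon
  obtain ⟨⟨i1, hi1, hne1⟩, ⟨i2, hi2, hne2⟩⟩ := hcon
  have hvΔ : v ∈ prodSimplex n := hv.1
  have hwΔ : w ∈ prodSimplex n := hwV.1
  set v' : Pt n := fun k => if (k : ℕ) < n / 2 then v k else w k with hv'def
  set w' : Pt n := fun k => if (k : ℕ) < n / 2 then w k else v k with hw'def
  have hsum_mix : ∀ p q : Pt n,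
      (∑ i ∈ B1 n, (fun k : Fin n => if (k : ℕ) < n / 2 then p k else q k) i = ∑ i ∈ B1 n, p i) ∧
      (∑ i ∈ B2 n, (fun k : Fin n => if (k : ℕ) < n / 2 then p k else q k) i = ∑ i ∈ B2 n, q i) := by
    intro p q
    constructor
    · exact Finset.sum_congr rfl fun i hi => if_pos (mem_B1.1 hi)
    · exact Finset.sum_congr rfl fun i hi => if_neg (Nat.not_lt.2 (mem_B2.1 hi))
  have hv'Δ : v' ∈ prodSimplex n := by
    refine ⟨fun k => ?_, ?_, ?_⟩
    · rw [hv'def]; dsimp only; split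
      · exact hvΔ.1 k
      · exact hwΔ.1 k
    · show ∑ i ∈ B1 n, v' i ≤ 1
      rw [hv'def, (hsum_mix v w).1]; exact hvΔ.2.1
    · show ∑ i ∈ B2 n, v' i ≤ 1
      rw [hv'def, (hsum_mix v w).2]; exact hwΔ.2.2
  have hw'Δ : w' ∈ prodSimplex n := by
    refine ⟨fun k => ?_, ?_, ?_⟩
    · rw [hw'def]; dsimp only; split
      · exact hwΔ.1 k
      · exact hvΔ.1 k
    · show ∑ i ∈ B1 n, w' i ≤ 1
      rw [hw'def, (hsum_mix w v).1]; exact hwΔ.2.1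
    · show ∑ i ∈ B2 n, w' i ≤ 1
      rw [hw'def, (hsum_mix w v).2]; exact hvΔ.2.2
  set m : Pt n := (1/2 : ℝ) • v + (1/2 : ℝ) • w with hmdef
  have hmseg : m ∈ segment ℝ v w := ⟨1/2, 1/2, by norm_num, by norm_num, by norm_num, rfl⟩
  have hmxy : m ∈ segment ℝ x y := by rw [hseg]; exact hmseg
  have hmopen : m ∈ openSegment ℝ v' w' := by
    refine ⟨1/2, 1/2, by norm_num, by norm_num, by norm_num, ?_⟩
    funext k
    simp only [Pi.add_apply, Pi.smul_apply, smul_eq_mul, hv'def, hw'def, hmdef]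
    split <;> ring
  have hv'mem := (hext.2 hv'Δ hw'Δ hmxy hmopen)
  rw [hseg] at hv'mem
  obtain ⟨a, b, ha, hb, hab, habsum⟩ := hv'mem
  have h1 : v' i1 = v i1 := by rw [hv'def]; exact if_pos (mem_B1.1 hi1)
  have h2 : v' i2 = w i2 := by rw [hv'def]; exact if_neg (Nat.not_lt.2 (mem_B2.1 hi2))
  have hcomb1 : a * v i1 + b * w i1 = v i1 := by
    have := congrFun habsum i1
    simp only [Pi.add_apply, Pi.smul_apply, smul_eq_mul] at this
    rw [this, h1]
  have hb0 : b = 0 := by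
    have : b * (w i1 - v i1) = 0 := by linear_combination hcomb1 - v i1 * hab
    rcases mul_eq_zero.1 this with h | h
    · exact h
    · exact absurd (sub_eq_zero.1 h).symm hne1
  have ha1 : a = 1 := by linarith
  have hcomb2 : a * v i2 + b * w i2 = w i2 := by
    have := congrFun habsum i2
    simp only [Pi.add_apply, Pi.smul_apply, smul_eq_mul] at this
    rw [this, h2]
  rw [hb0, ha1] at hcomb2
  exact hne2 (by linarith)

end Aux

namespace Aux
variable {n : ℕ}

open scoped Classical in
lemma ivec_umat (v : Pt n) (i j : Fin n) :
    ivec (umat v i) j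
      = (if j = i ∧ ¬ v i = 1 then (1:ℝ) else 0)
        - (if j ∈ blk i ∧ v j = 1 then 1 else 0) := by
  have h0 : ivec (umat v i) j = ((umat v i j : ℤ) : ℝ) := rfl
  rw [h0, umat_eq]
  by_cases hvj : v j = 1
  · rw [if_pos hvj]
    have h1 : ¬ (j = i ∧ ¬ v i = 1) := by
      rintro ⟨rfl, hne⟩; exact hne hvj
    rw [if_neg h1]
    by_cases hmem : i ∈ blk j
    · rw [if_pos hmem, if_pos ⟨mem_blk_comm hmem, hvj⟩]; norm_num
    · rw [if_neg hmem, if_neg (fun h : j ∈ blk i ∧ v j = 1 => hmem (mem_blk_comm h.1))]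
      norm_num
  · rw [if_neg hvj]
    have h2 : ¬ (j ∈ blk i ∧ v j = 1) := fun h => hvj h.2
    rw [if_neg h2]
    by_cases hij : i = j
    · rw [if_pos hij, if_pos ⟨hij.symm, fun h => hvj (hij ▸ h)⟩]; norm_num
    · rw [if_neg hij, if_neg (fun h : j = i ∧ ¬ v i = 1 => hij h.1.symm)]; norm_num

open scoped Classical in
lemma row_target {v : Pt n} (hv : v ∈ Vset n) (i : Fin n) :
    ∃ w : Pt n, w ∈ Vset n ∧ w ≠ v ∧ (∀ j, j ∉ blk i → w j = v j) ∧
      w = v + (1:ℝ) • ivec (umat v i) := by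
  set w : Pt n := v + (1:ℝ) • ivec (umat v i) with hwdef
  have hwj : ∀ j, w j = v j + ((if j = i ∧ ¬ v i = 1 then (1:ℝ) else 0)
      - (if j ∈ blk i ∧ v j = 1 then 1 else 0)) := by
    intro j
    rw [hwdef]
    simp only [Pi.add_apply, Pi.smul_apply, one_smul]
    rw [ivec_umat]
  have hoff : ∀ j, j ∉ blk i → w j = v j := by
    intro j hj
    rw [hwj j, if_neg (fun h : j = i ∧ _ => hj (h.1 ▸ mem_blk_self i)),
      if_neg (fun h : j ∈ blk i ∧ _ => hj h.1)]
    ring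
  have h01 : ∀ j, w j = 0 ∨ w j = 1 := by
    intro j
    rw [hwj j]
    by_cases hji : j = i
    · subst hji
      by_cases hv1 : v j = 1
      · rw [if_neg (fun h : _ ∧ ¬ v j = 1 => h.2 hv1), if_pos ⟨mem_blk_self j, hv1⟩, hv1]
        left; ring
      · have hv0 : v j = 0 := (hv.2 j).resolve_right hv1
        rw [if_pos ⟨rfl, hv1⟩, if_neg (fun h : _ ∧ v j = 1 => hv1 h.2), hv0]
        right; ring
    · rw [if_neg (fun h : j = i ∧ _ => hji h.1)]
      by_cases hm : j ∈ blk i ∧ v j = 1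
      · rw [if_pos hm, hm.2]; left; ring
      · rw [if_neg hm]
        rcases hv.2 j with h | h
        · left; rw [h]; ring
        · right; rw [h]; ring
  have hne : w ≠ v := by
    intro h
    have := congrFun h i
    rw [hwj i] at this
    by_cases hv1 : v i = 1
    · rw [if_neg (fun h : _ ∧ ¬ v i = 1 => h.2 hv1), if_pos ⟨mem_blk_self i, hv1⟩] at this
      simp at this
    · rw [if_pos ⟨rfl, hv1⟩, if_neg (fun h : _ ∧ v i = 1 => hv1 h.2)] at this
      simp at this
  have hsums : ∀ B : Finset (Fin n), B = B1 n ∨ B = B2 n → ∑ j ∈ B, w j ≤ 1 := by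
    intro B hB
    have hsv : ∑ j ∈ B, v j ≤ 1 := by
      rcases hB with rfl | rfl
      exacts [hv.1.2.1, hv.1.2.2]
    have hsplit : ∑ j ∈ B, w j = ∑ j ∈ B, v j
        + (∑ j ∈ B, (if j = i ∧ ¬ v i = 1 then (1:ℝ) else 0))
        - (∑ j ∈ B, (if j ∈ blk i ∧ v j = 1 then (1:ℝ) else 0)) := by
      rw [Finset.sum_congr rfl fun j _ => hwj j, Finset.sum_add_distrib,
        Finset.sum_sub_distrib]
      ring
    have hgnn : (0:ℝ) ≤ ∑ j ∈ B, (if j ∈ blk i ∧ v j = 1 then (1:ℝ) else 0) :=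
      Finset.sum_nonneg fun j _ => by positivity
    have hfval : ∑ j ∈ B, (if j = i ∧ ¬ v i = 1 then (1:ℝ) else 0)
        = if i ∈ B ∧ ¬ v i = 1 then 1 else 0 := by
      have : ∀ j, (if j = i ∧ ¬ v i = 1 then (1:ℝ) else 0)
          = if j = i then (if ¬ v i = 1 then (1:ℝ) else 0) else 0 := by
        intro j
        by_cases hji : j = i
        · subst hji; by_cases hvv : ¬ v j = 1 <;> simp [hvv]
        · simp [hji]
      rw [Finset.sum_congr rfl fun j _ => this j, Finset.sum_ite_eq' B i]
      by_cases hiB : i ∈ B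
      · rw [if_pos hiB]
        by_cases hvv : ¬ v i = 1
        · rw [if_pos hvv, if_pos ⟨hiB, hvv⟩]
        · rw [if_neg hvv, if_neg (fun h => hvv h.2)]
      · rw [if_neg hiB, if_neg (fun h => hiB h.1)]
    rw [hsplit, hfval]
    by_cases hkey : i ∈ B ∧ ¬ v i = 1
    · rw [if_pos hkey]
      have hBblk : B = blk i := by
        rcases hB with rfl | rfl
        · exact (blk_eq_B1_iff.2 hkey.1).symm
        · exact (blk_eq_B2_iff.2 hkey.1).symm
      have hvg : ∑ j ∈ B, v j ≤ ∑ j ∈ B, (if j ∈ blk i ∧ v j = 1 then (1:ℝ) else 0) := by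
        apply Finset.sum_le_sum
        intro j hj
        have hjblk : j ∈ blk i := hBblk ▸ hj
        rcases hv.2 j with h | h
        · rw [h]; positivity
        · rw [if_pos ⟨hjblk, h⟩]; exact h.le
      linarith
    · rw [if_neg hkey]
      linarith
  refine ⟨w, ⟨⟨fun j => ?_, ?_, ?_⟩, h01⟩, hne, hoff, rfl⟩
  · rcases h01 j with h | h <;> rw [h] <;> norm_num
  · exact hsums (B1 n) (Or.inl rfl)
  · exact hsums (B2 n) (Or.inr rfl)

end Aux

namespace Aux
variable {n : ℕ}

lemma disj_BC {B C : Finset (Fin n)}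
    (hBC : (B = B1 n ∧ C = B2 n) ∨ (B = B2 n ∧ C = B1 n)) {j : Fin n} (hj : j ∈ C) :
    j ∉ B := by
  rcases hBC with ⟨rfl, rfl⟩ | ⟨rfl, rfl⟩
  · exact mem_B2_iff_not.1 hj
  · exact fun h => (mem_B2_iff_not.1 h) hj

lemma blk_eq_of_BC {B C : Finset (Fin n)}
    (hBC : (B = B1 n ∧ C = B2 n) ∨ (B = B2 n ∧ C = B1 n)) {q : Fin n} (hq : q ∈ B) :
    blk q = B := by
  rcases hBC with ⟨rfl, _⟩ | ⟨rfl, _⟩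
  · exact blk_eq_B1_iff.2 hq
  · exact blk_eq_B2_iff.2 hq

open scoped Classical in
lemma adjacent_is_row {v w : Pt n} (hv : v ∈ Vset n) (hw : w ∈ Vset n) (hne : w ≠ v)
    (hadj : (∀ i ∈ B1 n, v i = w i) ∨ (∀ i ∈ B2 n, v i = w i)) :
    ∃ i, w = v + (1:ℝ) • ivec (umat v i) := by
  obtain ⟨B, C, hBC, hagree⟩ :
      ∃ B C, ((B = B1 n ∧ C = B2 n) ∨ (B = B2 n ∧ C = B1 n)) ∧ ∀ i ∈ C, v i = w i := by
    rcases hadj with h | h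
    · exact ⟨B2 n, B1 n, Or.inr ⟨rfl, rfl⟩, h⟩
    · exact ⟨B1 n, B2 n, Or.inl ⟨rfl, rfl⟩, h⟩
  have hBor : B = B1 n ∨ B = B2 n := by rcases hBC with ⟨rfl, _⟩ | ⟨rfl, _⟩ <;> simp
  have key : ∀ i : Fin n, (∀ j, w j = v j + ((if j = i ∧ ¬ v i = 1 then (1:ℝ) else 0)
      - (if j ∈ blk i ∧ v j = 1 then 1 else 0))) →
      w = v + (1:ℝ) • ivec (umat v i) := by
    intro i hj
    funext j
    rw [Pi.add_apply, Pi.smul_apply, one_smul, ivec_umat]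
    exact hj j
  have hCeq : ∀ {i : Fin n}, i ∈ B → ∀ j ∈ C,
      w j = v j + ((if j = i ∧ ¬ v i = 1 then (1:ℝ) else 0)
        - (if j ∈ blk i ∧ v j = 1 then 1 else 0)) := by
    intro i hiB j hjC
    have hji : ¬ (j = i) := fun h => (disj_BC hBC hjC) (h ▸ hiB)
    have hjblk : j ∉ blk i := by
      rw [blk_eq_of_BC hBC hiB]
      exact disj_BC hBC hjC
    rw [if_neg (fun h : j = i ∧ _ => hji h.1), if_neg (fun h : j ∈ blk i ∧ _ => hjblk h.1),
      ← hagree j hjC]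
    ring
  rcases vset_struct hv B hBor with hv0 | ⟨p, hpB, hvp1, hvp0⟩ <;>
    rcases vset_struct hw B hBor with hw0 | ⟨q, hqB, hwq1, hwq0⟩
  · exfalso; apply hne; funext j
    rcases cover_BC hBC j with hj | hj
    · rw [hv0 j hj, hw0 j hj]
    · exact (hagree j hj).symm
  · -- v zero on differ block, w = e_q
    have hblkq : blk q = B := blk_eq_of_BC hBC hqB
    have hvq : ¬ v q = 1 := by rw [hv0 q hqB]; norm_num
    refine ⟨q, key q fun j => ?_⟩
    rcases cover_BC hBC j with hj | hj
    · by_cases hjq : j = q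
      · subst hjq
        rw [if_pos ⟨rfl, hvq⟩, if_neg (fun h : _ ∧ v j = 1 => hvq h.2), hwq1, hv0 j hqB]
        norm_num
      · have h0 : v j = 0 := hv0 j hj
        rw [if_neg (fun h : j = q ∧ _ => hjq h.1),
          if_neg (fun h : _ ∧ v j = 1 => by have := h.2; rw [h0] at this; norm_num at this),
          hwq0 j hj hjq, h0]
        norm_num
    · exact hCeq hqB j hj
  · -- v = e_p on differ block, w zero there
    have hblkp : blk p = B := blk_eq_of_BC hBC hpB
    refine ⟨p, key p fun j => ?_⟩
    rcases cover_BC hBC j with hj | hj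
    · by_cases hjp : j = p
      · subst hjp
        rw [if_neg (fun h : _ ∧ ¬ v j = 1 => h.2 hvp1),
          if_pos ⟨hblkp ▸ hj, hvp1⟩, hw0 j hj, hvp1]
        norm_num
      · have h0 : v j = 0 := hvp0 j hj hjp
        rw [if_neg (fun h : j = p ∧ _ => hjp h.1),
          if_neg (fun h : _ ∧ v j = 1 => by have := h.2; rw [h0] at this; norm_num at this),
          hw0 j hj, h0]
        norm_num
    · exact hCeq hpB j hj
  · -- v = e_p, w = e_q on differ block
    have hpq : ¬ (p = q) := by
      intro h
      subst h
      apply hne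
      funext j
      rcases cover_BC hBC j with hj | hj
      · by_cases hjp : j = p
        · subst hjp; rw [hwq1, hvp1]
        · rw [hwq0 j hj hjp, hvp0 j hj hjp]
      · exact (hagree j hj).symm
    have hblkq : blk q = B := blk_eq_of_BC hBC hqB
    have hvq : ¬ v q = 1 := by
      rw [hvp0 q hqB (fun h => hpq h.symm)]; norm_num
    refine ⟨q, key q fun j => ?_⟩
    rcases cover_BC hBC j with hj | hj
    · by_cases hjq : j = q
      · subst hjq
        rw [if_pos ⟨rfl, hvq⟩, if_neg (fun h : _ ∧ v j = 1 => hvq h.2), hwq1,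
          hvp0 j hqB (fun h => hpq h.symm)]
        norm_num
      · by_cases hjp : j = p
        · subst hjp
          rw [if_neg (fun h : j = q ∧ _ => hjq h.1), if_pos ⟨hblkq ▸ hj, hvp1⟩,
            hwq0 j hj hjq, hvp1]
          norm_num
        · have h0 : v j = 0 := hvp0 j hj hjp
          rw [if_neg (fun h : j = q ∧ _ => hjq h.1),
            if_neg (fun h : _ ∧ v j = 1 => by have := h.2; rw [h0] at this; norm_num at this),
            hwq0 j hj hjq, h0]
          norm_num
    · exact hCeq hqB j hj

lemma vertex_delzant {v : Pt n} (hv : v ∈ Set.extremePoints ℝ (prodSimplex n)) :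
    ∃ (u : Fin n → Fin n → ℤ) (t : Fin n → ℝ),
      IsUnit (Matrix.det (Matrix.of u)) ∧ (∀ i, 0 < t i) ∧
      (∀ i, IsEdge (prodSimplex n) (segment ℝ v (v + t i • ivec (u i)))) ∧
      ∀ e, IsEdge (prodSimplex n) e → v ∈ e →
        ∃ i, e = segment ℝ v (v + t i • ivec (u i)) := by
  have hvV : v ∈ Vset n := extreme_subset_vset hv
  refine ⟨umat v, fun _ => 1, umat_det_isUnit hvV, fun _ => one_pos, ?_, ?_⟩
  · intro i
    obtain ⟨w, hwV, hwne, hoff, hweq⟩ := row_target hvV i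
    rw [← hweq]
    apply isEdge_adjacent hvV hwV (Ne.symm hwne)
    rcases blk_eq_or i with hb | hb
    · right
      intro j hj
      exact (hoff j (by rw [hb]; exact mem_B2_iff_not.1 hj)).symm
    · left
      intro j hj
      exact (hoff j (by rw [hb]; exact fun h2 => (mem_B2_iff_not.1 h2) hj)).symm
  · intro e he hve
    obtain ⟨w, hwV, hwne, hes, hadj⟩ := edge_through_vertex he hv hve
    obtain ⟨i, hi⟩ := adjacent_is_row hvV hwV hwne hadj
    exact ⟨i, by rw [hes, hi]⟩

end Aux

namespace Aux
variable {n : ℕ}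

/-- Coordinate facet. -/
def Fzero (n : ℕ) (p : Fin n) : Set (Pt n) := {x ∈ prodSimplex n | x p = 0}
/-- Sum facet. -/
def Fone (n : ℕ) (B : Finset (Fin n)) : Set (Pt n) := {x ∈ prodSimplex n | ∑ i ∈ B, x i = 1}

lemma fzero_extreme (p : Fin n) : IsExtreme ℝ (prodSimplex n) (Fzero n p) := by
  constructor
  · exact fun x hx => hx.1
  · rintro x1 hx1 x2 hx2 z ⟨hzΔ, hz⟩ ⟨a, b, ha, hb, hab, hsum⟩
    have happ : a * x1 p + b * x2 p = z p := by
      have := congrFun hsum p; simpa using this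
    have := tight_ge ha hb hab (hx1.1 p) (hx2.1 p) (happ.trans hz)
    exact ⟨hx1, this.1⟩

lemma fone_extreme (B : Finset (Fin n)) (hB : B = B1 n ∨ B = B2 n) :
    IsExtreme ℝ (prodSimplex n) (Fone n B) := by
  constructor
  · exact fun x hx => hx.1
  · rintro x1 hx1 x2 hx2 z ⟨hzΔ, hz⟩ ⟨a, b, ha, hb, hab, hsum⟩
    have hle1 : ∑ i ∈ B, x1 i ≤ 1 := by rcases hB with rfl | rfl; exacts [hx1.2.1, hx1.2.2]
    have hle2 : ∑ i ∈ B, x2 i ≤ 1 := by rcases hB with rfl | rfl; exacts [hx2.2.1, hx2.2.2]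
    have happ : a * ∑ i ∈ B, x1 i + b * ∑ i ∈ B, x2 i = ∑ i ∈ B, z i := by
      rw [← hsum, sum_smul_add]
    have := tight_le ha hb hab hle1 hle2 (happ.trans hz)
    exact ⟨hx1, this.1⟩

/-- The projection onto coordinate `p` as a linear map. -/
def projL (p : Fin n) : Pt n →ₗ[ℝ] ℝ := LinearMap.proj p
/-- Sum over a block as a linear map. -/
def sumL (B : Finset (Fin n)) : Pt n →ₗ[ℝ] ℝ := ∑ i ∈ B, LinearMap.proj i

lemma projL_apply (p : Fin n) (x : Pt n) : projL p x = x p := rfl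

lemma sumL_apply (B : Finset (Fin n)) (x : Pt n) : sumL B x = ∑ i ∈ B, x i := by
  simp [sumL]

lemma finrank_ker_eq (f : Pt n →ₗ[ℝ] ℝ) (hf : Function.Surjective f) :
    Module.finrank ℝ (LinearMap.ker f) = n - 1 := by
  have h1 := LinearMap.finrank_range_add_finrank_ker f
  rw [LinearMap.range_eq_top.2 hf, finrank_top] at h1
  have h2 : Module.finrank ℝ (Pt n) = n := Module.finrank_fin_fun ℝ
  have h3 : Module.finrank ℝ ℝ = 1 := Module.finrank_self ℝ
  omega

lemma vectorSpan_le_ker {s : Set (Pt n)} (f : Pt n →ₗ[ℝ] ℝ) (c : ℝ)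
    (h : ∀ x ∈ s, f x = c) : vectorSpan ℝ s ≤ LinearMap.ker f := by
  rw [vectorSpan_def, Submodule.span_le]
  rintro z ⟨x, hx, y, hy, rfl⟩
  rw [SetLike.mem_coe, LinearMap.mem_ker]
  show f (x - y) = 0
  rw [map_sub, h x hx, h y hy, sub_self]

lemma indep_family (p : Fin n) (h : Fin n → ℝ) :
    LinearIndependent ℝ
      (fun j : {j : Fin n // j ≠ p} => (stdVec j.1 + h j.1 • stdVec p : Pt n)) := by
  rw [Fintype.linearIndependent_iff]
  intro g hg j
  have heval := congrFun hg j.1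
  rw [Finset.sum_apply] at heval
  have hterm : ∀ k : {j : Fin n // j ≠ p},
      (g k • (stdVec k.1 + h k.1 • stdVec p : Pt n)) j.1
        = g k * (if j.1 = k.1 then 1 else 0) := by
    intro k
    simp only [Pi.smul_apply, Pi.add_apply, smul_eq_mul]
    rw [show stdVec p j.1 = 0 from if_neg j.2]
    rw [show (stdVec k.1 j.1 : ℝ) = if j.1 = k.1 then 1 else 0 from rfl]
    ring
  rw [Finset.sum_congr rfl fun k _ => hterm k] at heval
  rw [Finset.sum_eq_single j] at heval
  · rw [if_pos rfl, mul_one] at heval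
    exact heval.trans (by simp)
  · intro k _ hkj
    rw [if_neg (fun hh => hkj (Subtype.ext hh.symm)), mul_zero]
  · intro hj; exact absurd (Finset.mem_univ j) hj

lemma card_ne_p (p : Fin n) : Fintype.card {j : Fin n // j ≠ p} = n - 1 := by
  have := Fintype.card_subtype_compl (fun j : Fin n => j = p)
  simp only [Fintype.card_subtype_eq, Fintype.card_fin] at this
  exact this

lemma facet_dim {F : Set (Pt n)} (f : Pt n →ₗ[ℝ] ℝ) (c : ℝ)
    (hsub : ∀ x ∈ F, f x = c) (hsurj : Function.Surjective f)
    (p : Fin n) (h : Fin n → ℝ)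
    (hmem : ∀ j : Fin n, j ≠ p → (stdVec j + h j • stdVec p : Pt n) ∈ vectorSpan ℝ F) :
    Module.finrank ℝ (affineSpan ℝ F).direction = n - 1 := by
  rw [direction_affineSpan]
  refine le_antisymm ?_ ?_
  · exact le_trans (Submodule.finrank_mono (vectorSpan_le_ker f c hsub))
      (le_of_eq (finrank_ker_eq f hsurj))
  · have hspan : Submodule.span ℝ
        (Set.range fun j : {j : Fin n // j ≠ p} => (stdVec j.1 + h j.1 • stdVec p : Pt n))
        ≤ vectorSpan ℝ F := by
      rw [Submodule.span_le]
      rintro z ⟨j, rfl⟩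
      exact hmem j.1 j.2
    have hrank := finrank_span_eq_card (indep_family p h)
    rw [card_ne_p p] at hrank
    calc n - 1 = Module.finrank ℝ (Submodule.span ℝ (Set.range fun j : {j : Fin n // j ≠ p} =>
          (stdVec j.1 + h j.1 • stdVec p : Pt n))) := hrank.symm
    _ ≤ _ := Submodule.finrank_mono hspan

end Aux

namespace Aux
variable {n : ℕ}

lemma zero_mem_ps : (0 : Pt n) ∈ prodSimplex n := by
  refine ⟨fun i => le_refl 0, ?_, ?_⟩ <;> simp

lemma stdVec_mem_ps (q : Fin n) : stdVec q ∈ prodSimplex n := by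
  refine ⟨fun i => ?_, ?_, ?_⟩
  · rw [stdVec]; split <;> norm_num
  · show ∑ i ∈ B1 n, stdVec q i ≤ 1
    rw [sum_stdVec]; split <;> norm_num
  · show ∑ i ∈ B2 n, stdVec q i ≤ 1
    rw [sum_stdVec]; split <;> norm_num

lemma sum_add_vec (B : Finset (Fin n)) (x y : Pt n) :
    ∑ i ∈ B, (x + y) i = ∑ i ∈ B, x i + ∑ i ∈ B, y i := by
  rw [← Finset.sum_add_distrib]; rfl

lemma pair_mem_ps {q j : Fin n} (hqj : q ≠ j) (hblk : blk q ≠ blk j) :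
    stdVec q + stdVec j ∈ prodSimplex n := by
  have hsum : ∀ B : Finset (Fin n), B = B1 n ∨ B = B2 n →
      ∑ i ∈ B, (stdVec q + stdVec j) i ≤ 1 := by
    intro B hB
    rw [sum_add_vec, sum_stdVec, sum_stdVec]
    by_cases hq : q ∈ B <;> by_cases hj : j ∈ B
    · exfalso
      apply hblk
      rcases hB with rfl | rfl
      · rw [blk_eq_B1_iff.2 hq, blk_eq_B1_iff.2 hj]
      · rw [blk_eq_B2_iff.2 hq, blk_eq_B2_iff.2 hj]
    all_goals simp [hq, hj]
  refine ⟨fun i => ?_, hsum _ (Or.inl rfl), hsum _ (Or.inr rfl)⟩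
  have h1 := (stdVec_mem_ps q).1 i
  have h2 := (stdVec_mem_ps j).1 i
  simpa using add_nonneg h1 h2

lemma isFacet_Fzero (p : Fin n) : IsFacet (prodSimplex n) (Fzero n p) := by
  refine ⟨fzero_extreme p, ?_, ?_, ⟨0, zero_mem_ps, rfl⟩, ?_⟩
  · intro x hx y hy a b ha hb hab
    refine ⟨convex_ps hx.1 hy.1 ha hb hab, ?_⟩
    show (a • x + b • y) p = 0
    simp only [Pi.add_apply, Pi.smul_apply, smul_eq_mul]
    rw [hx.2, hy.2]; ring
  · have : Fzero n p = prodSimplex n ∩ {x | x p = 0} := rfl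
    rw [this]
    exact closed_ps.inter (isClosed_eq (continuous_apply p) continuous_const)
  · refine facet_dim (projL p) 0 (fun x hx => hx.2) (fun r => ⟨fun _ => r, rfl⟩) p 0 ?_
    intro j hjp
    have heq : (stdVec j + (0 : Fin n → ℝ) j • stdVec p : Pt n) = stdVec j - 0 := by
      simp
    rw [heq]
    refine vsub_mem_vectorSpan ℝ (p₁ := stdVec j) (p₂ := 0) ?_ ?_
    · exact ⟨stdVec_mem_ps j, if_neg (fun h => hjp h.symm)⟩
    · exact ⟨zero_mem_ps, rfl⟩

lemma isFacet_Fone (B : Finset (Fin n)) (hB : B = B1 n ∨ B = B2 n)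
    {q : Fin n} (hq : q ∈ B) : IsFacet (prodSimplex n) (Fone n B) := by
  have hqmem : ∑ i ∈ B, stdVec q i = 1 := by rw [sum_stdVec, if_pos hq]
  refine ⟨fone_extreme B hB, ?_, ?_, ⟨stdVec q, stdVec_mem_ps q, hqmem⟩, ?_⟩
  · intro x hx y hy a b ha hb hab
    refine ⟨convex_ps hx.1 hy.1 ha hb hab, ?_⟩
    show ∑ i ∈ B, (a • x + b • y) i = 1
    rw [sum_smul_add, hx.2, hy.2]; linarith
  · have : Fone n B = prodSimplex n ∩ {x | ∑ i ∈ B, x i = 1} := rfl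
    rw [this]
    exact closed_ps.inter (isClosed_eq (by continuity) continuous_const)
  · refine facet_dim (sumL B) 1 (fun x hx => (sumL_apply _ _).trans hx.2) ?_ q
      (fun j => if j ∈ B then -1 else 0) ?_
    · intro r
      refine ⟨r • stdVec q, ?_⟩
      rw [sumL_apply]
      have : ∀ i, (r • stdVec q) i = r * stdVec q i := fun i => rfl
      rw [Finset.sum_congr rfl fun i _ => this i, ← Finset.mul_sum, hqmem, mul_one]
    · intro j hjq
      have hblkq : blk q = B := by
        rcases hB with rfl | rfl
        exacts [blk_eq_B1_iff.2 hq, blk_eq_B2_iff.2 hq]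
      by_cases hjB : j ∈ B
      · rw [show (if j ∈ B then (-1:ℝ) else 0) = -1 from if_pos hjB]
        have heq : (stdVec j + (-1 : ℝ) • stdVec q : Pt n) = stdVec j - stdVec q := by
          funext k
          simp only [Pi.add_apply, Pi.smul_apply, Pi.sub_apply, smul_eq_mul]
          ring
        rw [heq]
        refine vsub_mem_vectorSpan ℝ ?_ ?_
        · exact ⟨stdVec_mem_ps j, by rw [sum_stdVec, if_pos hjB]⟩
        · exact ⟨stdVec_mem_ps q, hqmem⟩
      · rw [show (if j ∈ B then (-1:ℝ) else 0) = 0 from if_neg hjB]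
        have heq : (stdVec j + (0 : ℝ) • stdVec q : Pt n)
            = (stdVec q + stdVec j) - stdVec q := by
          funext k
          simp only [Pi.add_apply, Pi.smul_apply, Pi.sub_apply, smul_eq_mul]
          ring
        rw [heq]
        refine vsub_mem_vectorSpan ℝ ?_ ?_
        · refine ⟨pair_mem_ps (fun h => hjB (h ▸ hq)) ?_, ?_⟩
          · intro h
            apply hjB
            have := mem_blk_self j
            rw [← h, hblkq] at this
            exact this
          · rw [sum_add_vec, hqmem, sum_stdVec, if_neg hjB]; ring
        · exact ⟨stdVec_mem_ps q, hqmem⟩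

end Aux

namespace Aux
variable {n : ℕ}

lemma ps_eq_hull : prodSimplex n = convexHull ℝ (Vset n) := by
  have h1 := closure_convexHull_extremePoints (s := prodSimplex n) compact_ps convex_ps
  rw [extremePoints_ps] at h1
  rw [← h1, (vset_finite.isClosed_convexHull ℝ).closure_eq]

lemma face_hull {F : Set (Pt n)} (hext : IsExtreme ℝ (prodSimplex n) F)
    (hconv : Convex ℝ F) (hclosed : IsClosed F) :
    Set.extremePoints ℝ F = Vset n ∩ F ∧ F = convexHull ℝ (Vset n ∩ F) := by
  have hcomp : IsCompact F := compact_ps.of_isClosed_subset hclosed hext.1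
  have hep : Set.extremePoints ℝ F = Vset n ∩ F := by
    rw [hext.extremePoints_eq, extremePoints_ps, Set.inter_comm]
  have h2 := closure_convexHull_extremePoints (s := F) hcomp hconv
  rw [hep] at h2
  have hfin : (Vset n ∩ F).Finite := vset_finite.subset Set.inter_subset_left
  rw [(hfin.isClosed_convexHull ℝ).closure_eq] at h2
  exact ⟨hep, h2.symm⟩

lemma dim_ps : Module.finrank ℝ (affineSpan ℝ (prodSimplex n)).direction = n := by
  rw [direction_affineSpan]
  have h2 : Module.finrank ℝ (Pt n) = n := Module.finrank_fin_fun ℝ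
  refine le_antisymm (le_trans (Submodule.finrank_le _) (le_of_eq h2)) ?_
  have hsub : Submodule.span ℝ (Set.range fun i : Fin n => (stdVec i : Pt n))
      ≤ vectorSpan ℝ (prodSimplex n) := by
    rw [Submodule.span_le]
    rintro z ⟨i, rfl⟩
    rw [SetLike.mem_coe]
    show (stdVec i : Pt n) ∈ vectorSpan ℝ (prodSimplex n)
    have h0 : (stdVec i : Pt n) = stdVec i - 0 := by simp
    rw [h0]
    exact vsub_mem_vectorSpan ℝ (stdVec_mem_ps i) zero_mem_ps
  have hindep : LinearIndependent ℝ (fun i : Fin n => (stdVec i : Pt n)) := by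
    rw [Fintype.linearIndependent_iff]
    intro g hg i
    have heval := congrFun hg i
    rw [Finset.sum_apply] at heval
    rw [Finset.sum_eq_single i] at heval
    · have h : (g i • (stdVec i : Pt n)) i = g i := by
        simp [stdVec]
      rw [h] at heval; simpa using heval
    · intro k _ hki
      simp only [Pi.smul_apply, smul_eq_mul, stdVec]
      rw [if_neg (fun h => hki h.symm), mul_zero]
    · intro h; exact absurd (Finset.mem_univ i) h
  have hc := finrank_span_eq_card hindep
  rw [Fintype.card_fin] at hc
  calc n = Module.finrank ℝ
        (Submodule.span ℝ (Set.range fun i : Fin n => (stdVec i : Pt n))) := hc.symm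
    _ ≤ _ := Submodule.finrank_mono hsub

lemma ker_inter_rank (f g : Pt n →ₗ[ℝ] ℝ) (y z : Pt n) (hfy : f y = 1) (hgy : g y = 0)
    (hfz : f z = 0) (hgz : g z = 1) :
    Module.finrank ℝ ((LinearMap.ker f ⊓ LinearMap.ker g : Submodule ℝ (Pt n))) = n - 2 := by
  have hker : LinearMap.ker (f.prod g) = LinearMap.ker f ⊓ LinearMap.ker g :=
    LinearMap.ker_prod f g
  have hsurj : Function.Surjective (f.prod g) := by
    rintro ⟨a, b⟩
    refine ⟨a • y + b • z, ?_⟩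
    simp [LinearMap.prod_apply, map_add, _root_.map_smul, hfy, hgy, hfz, hgz]
  have h1 := LinearMap.finrank_range_add_finrank_ker (f.prod g)
  rw [LinearMap.range_eq_top.2 hsurj, finrank_top, hker] at h1
  have h2 : Module.finrank ℝ (Pt n) = n := Module.finrank_fin_fun ℝ
  have h3 : Module.finrank ℝ (ℝ × ℝ) = 2 := by simp
  omega

/-- Block mixing of two points. -/
def mix (v w : Pt n) : Pt n := fun k => if (k : ℕ) < n / 2 then v k else w k

lemma mix_apply_B1 {v w : Pt n} {i : Fin n} (hi : i ∈ B1 n) : mix v w i = v i :=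
  if_pos (mem_B1.1 hi)

lemma mix_apply_B2 {v w : Pt n} {i : Fin n} (hi : i ∈ B2 n) : mix v w i = w i :=
  if_neg (Nat.not_lt.2 (mem_B2.1 hi))

lemma sum_mix_B1 (v w : Pt n) : ∑ i ∈ B1 n, mix v w i = ∑ i ∈ B1 n, v i :=
  Finset.sum_congr rfl fun i hi => mix_apply_B1 hi

lemma sum_mix_B2 (v w : Pt n) : ∑ i ∈ B2 n, mix v w i = ∑ i ∈ B2 n, w i :=
  Finset.sum_congr rfl fun i hi => mix_apply_B2 hi

lemma mix_mem_ps {v w : Pt n} (hv : v ∈ prodSimplex n) (hw : w ∈ prodSimplex n) :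
    mix v w ∈ prodSimplex n := by
  refine ⟨fun i => ?_, ?_, ?_⟩
  · rw [mix]; split
    · exact hv.1 i
    · exact hw.1 i
  · show ∑ i ∈ B1 n, mix v w i ≤ 1
    rw [sum_mix_B1]; exact hv.2.1
  · show ∑ i ∈ B2 n, mix v w i ≤ 1
    rw [sum_mix_B2]; exact hw.2.2

lemma mix_mem_vset {v w : Pt n} (hv : v ∈ Vset n) (hw : w ∈ Vset n) :
    mix v w ∈ Vset n := by
  refine ⟨mix_mem_ps hv.1 hw.1, fun i => ?_⟩
  rw [mix]; split
  · exact hv.2 i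
  · exact hw.2 i

lemma mix_openSeg (v w : Pt n) :
    (1/2 : ℝ) • v + (1/2 : ℝ) • w ∈ openSegment ℝ (mix v w) (mix w v) := by
  refine ⟨1/2, 1/2, by norm_num, by norm_num, by norm_num, ?_⟩
  funext k
  simp only [Pi.add_apply, Pi.smul_apply, smul_eq_mul, mix]
  split <;> ring

end Aux

namespace Aux
variable {n : ℕ}

lemma vset_block_sum {v : Pt n} (hv : v ∈ Vset n) (B : Finset (Fin n))
    (hB : B = B1 n ∨ B = B2 n) :
    (∑ i ∈ B, v i = 0 ∧ ∀ i ∈ B, v i = 0) ∨ (∑ i ∈ B, v i = 1 ∧ ∃ q ∈ B, v q = 1) := by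
  rcases vset_struct hv B hB with h | ⟨p, hpB, hp1, hp0⟩
  · exact Or.inl ⟨Finset.sum_eq_zero h, h⟩
  · refine Or.inr ⟨?_, p, hpB, hp1⟩
    rw [Finset.sum_eq_single p (fun i hi hip => hp0 i hi hip) (fun h => absurd hpB h), hp1]

lemma agree_of_one {v w : Pt n} (hv : v ∈ Vset n) (hw : w ∈ Vset n)
    (B : Finset (Fin n)) (hB : B = B1 n ∨ B = B2 n) {q : Fin n} (hq : q ∈ B)
    (hvq : v q = 1) (hwq : w q = 1) : ∀ i ∈ B, w i = v i := by
  have hblkq : blk q = B := by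
    rcases hB with rfl | rfl
    exacts [blk_eq_B1_iff.2 hq, blk_eq_B2_iff.2 hq]
  intro i hi
  by_cases hiq : i = q
  · rw [hiq, hvq, hwq]
  · have hiblk : i ∈ blk q := hblkq ▸ hi
    have hvi : v i = 0 := by
      rcases hv.2 i with h | h
      · exact h
      · exact absurd (vset_unique_supp hv hvq h hiblk) hiq
    have hwi : w i = 0 := by
      rcases hw.2 i with h | h
      · exact h
      · exact absurd (vset_unique_supp hw hwq h hiblk) hiq
    rw [hvi, hwi]

lemma facet_classification (hn : 2 ≤ n) {F : Set (Pt n)}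
    (hF : IsFacet (prodSimplex n) F) :
    (∃ p : Fin n, F = Fzero n p) ∨ F = Fone n (B1 n) ∨ F = Fone n (B2 n) := by
  obtain ⟨hext, hconv, hclosed, hne, hdim⟩ := hF
  obtain ⟨hep, hFhull⟩ := face_hull hext hconv hclosed
  set VF := Vset n ∩ F with hVFdef
  have hVFne : VF.Nonempty := by
    rcases hne with ⟨x, hx⟩
    by_contra h
    rw [Set.not_nonempty_iff_eq_empty] at h
    rw [h, convexHull_empty] at hFhull
    exact absurd (hFhull ▸ hx) (Set.notMem_empty x)
  have hmix : ∀ v ∈ VF, ∀ w ∈ VF, mix v w ∈ VF := by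
    intro v hv w hw
    have hm : (1/2:ℝ) • v + (1/2:ℝ) • w ∈ F :=
      hconv hv.2 hw.2 (by norm_num) (by norm_num) (by norm_num)
    have h1 := (hext.2 (mix_mem_ps hv.1.1 hw.1.1) (mix_mem_ps hw.1.1 hv.1.1) hm
      (mix_openSeg v w))
    exact ⟨mix_mem_vset hv.1 hw.1, h1⟩
  have hdim' : Module.finrank ℝ (vectorSpan ℝ VF) = n - 1 := by
    rw [← direction_affineSpan, ← affineSpan_convexHull, ← hFhull]
    exact hdim
  have hbound : ∀ (f g : Pt n →ₗ[ℝ] ℝ) (c d : ℝ), (∀ v ∈ VF, f v = c) →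
      (∀ v ∈ VF, g v = d) → ∀ y z : Pt n, f y = 1 → g y = 0 → f z = 0 → g z = 1 → False := by
    intro f g c d hfc hgd y z h1 h2 h3 h4
    have hle : vectorSpan ℝ VF ≤ (LinearMap.ker f ⊓ LinearMap.ker g : Submodule ℝ (Pt n)) :=
      le_inf (vectorSpan_le_ker f c hfc) (vectorSpan_le_ker g d hgd)
    have hmono := Submodule.finrank_mono hle
    rw [hdim', ker_inter_rank f g y z h1 h2 h3 h4] at hmono
    omega
  have hagree_mem : ∀ v ∈ Vset n,
      (∃ w ∈ VF, ∀ i ∈ B1 n, w i = v i) → (∃ w ∈ VF, ∀ i ∈ B2 n, w i = v i) → v ∈ VF := by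
    rintro v hv ⟨w1, hw1, hag1⟩ ⟨w2, hw2, hag2⟩
    have hveq : mix w1 w2 = v := by
      funext k
      rcases cover_BC (Or.inl ⟨rfl, rfl⟩) k with hk | hk
      · rw [mix_apply_B1 hk]; exact hag1 k hk
      · rw [mix_apply_B2 hk]; exact hag2 k hk
    rw [← hveq]; exact hmix w1 hw1 w2 hw2
  have hPnot : ∀ p : Fin n, ¬ (∀ v ∈ VF, v p = 0) → ∃ w ∈ VF, w p = 1 := by
    intro p h
    push_neg at h
    obtain ⟨w, hw, hwp⟩ := h
    exact ⟨w, hw, (hw.1.2 p).resolve_left hwp⟩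
  have hZnot : ∀ B : Finset (Fin n), B = B1 n ∨ B = B2 n →
      ¬ (∀ v ∈ VF, ∑ i ∈ B, v i = 1) → ∃ w ∈ VF, ∀ i ∈ B, w i = 0 := by
    intro B hB h
    push_neg at h
    obtain ⟨w, hw, hws⟩ := h
    rcases vset_block_sum hw.1 B hB with ⟨_, h0⟩ | ⟨h1, _⟩
    · exact ⟨w, hw, h0⟩
    · exact absurd h1 hws
  -- block representatives
  have hq1 : (⟨0, by omega⟩ : Fin n) ∈ B1 n := by
    rw [mem_B1]; show 0 < n / 2; omega
  have hq2 : (⟨n - 1, by omega⟩ : Fin n) ∈ B2 n := by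
    rw [mem_B2]; show n / 2 ≤ n - 1; omega
  set q1 : Fin n := ⟨0, by omega⟩
  set q2 : Fin n := ⟨n - 1, by omega⟩
  have hsumL_std : ∀ (B : Finset (Fin n)) (q : Fin n),
      sumL B (stdVec q) = if q ∈ B then 1 else 0 := by
    intro B q; rw [sumL_apply, sum_stdVec]
  have hprojL_std : ∀ (p q : Fin n), projL p (stdVec q) = if p = q then 1 else 0 := by
    intro p q; rfl
  -- no coordinate constraint can coexist with a missing option elsewhere:
  -- key producers under each case
  -- Case 1 : all of VF has block-1 sum 1
  by_cases hZ1 : ∀ v ∈ VF, ∑ i ∈ B1 n, v i = 1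
  · right; left
    have hZ1' : ∀ v ∈ VF, sumL (B1 n) v = 1 := by
      intro v hv; rw [sumL_apply]; exact hZ1 v hv
    -- no other option missing
    have hZ2not : ¬ (∀ v ∈ VF, ∑ i ∈ B2 n, v i = 1) := by
      intro hZ2
      refine hbound (sumL (B1 n)) (sumL (B2 n)) 1 1 hZ1'
        (fun v hv => by rw [sumL_apply]; exact hZ2 v hv)
        (stdVec q1) (stdVec q2) ?_ ?_ ?_ ?_
      · rw [hsumL_std, if_pos hq1]
      · rw [hsumL_std, if_neg (fun h => (mem_B2_iff_not.1 h) hq1)]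
      · rw [hsumL_std, if_neg (fun h => (mem_B2_iff_not.1 hq2) h)]
      · rw [hsumL_std, if_pos hq2]
    have hPnot' : ∀ p : Fin n, ¬ (∀ v ∈ VF, v p = 0) := by
      intro p hp
      have hp' : ∀ v ∈ VF, projL p v = 0 := fun v hv => hp v hv
      by_cases hpB : p ∈ B1 n
      · by_cases hqex : ∃ q ∈ B1 n, q ≠ p
        · obtain ⟨q, hqB, hqp⟩ := hqex
          refine hbound (sumL (B1 n)) (projL p) 1 0 hZ1' hp'
            (stdVec q) (stdVec p - stdVec q) ?_ ?_ ?_ ?_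
          · rw [hsumL_std, if_pos hqB]
          · rw [hprojL_std, if_neg (fun h => hqp h.symm)]
          · rw [map_sub, hsumL_std, hsumL_std, if_pos hqB, if_pos hpB]; ring
          · rw [map_sub, hprojL_std, hprojL_std, if_pos rfl,
              if_neg (fun h => hqp h.symm), sub_zero]
        · push_neg at hqex
          obtain ⟨v, hv⟩ := hVFne
          have h1 := hZ1 v hv
          have h2 : ∑ i ∈ B1 n, v i = 0 := by
            apply Finset.sum_eq_zero
            intro i hi
            rw [hqex i hi]
            exact hp v hv
          rw [h2] at h1; norm_num at h1
      · refine hbound (sumL (B1 n)) (projL p) 1 0 hZ1' hp'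
          (stdVec q1) (stdVec p) ?_ ?_ ?_ ?_
        · rw [hsumL_std, if_pos hq1]
        · rw [hprojL_std, if_neg (fun h => hpB (by rw [h]; exact hq1))]
        · rw [hsumL_std, if_neg hpB]
        · rw [hprojL_std, if_pos rfl]
    -- VF is the vertex set of Fone B1
    have hVFeq : VF = Vset n ∩ Fone n (B1 n) := by
      ext v
      constructor
      · intro hv
        exact ⟨hv.1, hv.1.1, hZ1 v hv⟩
      · rintro ⟨hvV, _, hvsum⟩
        refine hagree_mem v hvV ?_ ?_
        · rcases vset_block_sum hvV (B1 n) (Or.inl rfl) with ⟨h0, _⟩ | ⟨_, q, hqB, hvq⟩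
          · rw [hvsum] at h0; norm_num at h0
          · obtain ⟨w, hw, hwq⟩ := hPnot q (hPnot' q)
            exact ⟨w, hw, agree_of_one hvV hw.1 (B1 n) (Or.inl rfl) hqB hvq hwq⟩
        · rcases vset_block_sum hvV (B2 n) (Or.inr rfl) with ⟨_, h0⟩ | ⟨_, q, hqB, hvq⟩
          · obtain ⟨w, hw, hw0⟩ := hZnot (B2 n) (Or.inr rfl) hZ2not
            exact ⟨w, hw, fun i hi => by rw [hw0 i hi, h0 i hi]⟩
          · obtain ⟨w, hw, hwq⟩ := hPnot q (hPnot' q)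
            exact ⟨w, hw, agree_of_one hvV hw.1 (B2 n) (Or.inr rfl) hqB hvq hwq⟩
    have hfacet := isFacet_Fone (B1 n) (Or.inl rfl) hq1
    obtain ⟨_, hhull⟩ := face_hull (fone_extreme (B1 n) (Or.inl rfl)) hfacet.2.1 hfacet.2.2.1
    rw [hFhull, hVFeq, ← hhull]
  · by_cases hZ2 : ∀ v ∈ VF, ∑ i ∈ B2 n, v i = 1
    · right; right
      have hZ2' : ∀ v ∈ VF, sumL (B2 n) v = 1 := by
        intro v hv; rw [sumL_apply]; exact hZ2 v hv
      have hPnot' : ∀ p : Fin n, ¬ (∀ v ∈ VF, v p = 0) := by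
        intro p hp
        have hp' : ∀ v ∈ VF, projL p v = 0 := fun v hv => hp v hv
        by_cases hpB : p ∈ B2 n
        · by_cases hqex : ∃ q ∈ B2 n, q ≠ p
          · obtain ⟨q, hqB, hqp⟩ := hqex
            refine hbound (sumL (B2 n)) (projL p) 1 0 hZ2' hp'
              (stdVec q) (stdVec p - stdVec q) ?_ ?_ ?_ ?_
            · rw [hsumL_std, if_pos hqB]
            · rw [hprojL_std, if_neg (fun h => hqp h.symm)]
            · rw [map_sub, hsumL_std, hsumL_std, if_pos hqB, if_pos hpB]; ring
            · rw [map_sub, hprojL_std, hprojL_std, if_pos rfl,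
                if_neg (fun h => hqp h.symm), sub_zero]
          · push_neg at hqex
            obtain ⟨v, hv⟩ := hVFne
            have h1 := hZ2 v hv
            have h2 : ∑ i ∈ B2 n, v i = 0 := by
              apply Finset.sum_eq_zero
              intro i hi
              rw [hqex i hi]
              exact hp v hv
            rw [h2] at h1; norm_num at h1
        · refine hbound (sumL (B2 n)) (projL p) 1 0 hZ2' hp'
            (stdVec q2) (stdVec p) ?_ ?_ ?_ ?_
          · rw [hsumL_std, if_pos hq2]
          · rw [hprojL_std, if_neg (fun h => hpB (by rw [h]; exact hq2))]
          · rw [hsumL_std, if_neg hpB]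
          · rw [hprojL_std, if_pos rfl]
      have hVFeq : VF = Vset n ∩ Fone n (B2 n) := by
        ext v
        constructor
        · intro hv
          exact ⟨hv.1, hv.1.1, hZ2 v hv⟩
        · rintro ⟨hvV, _, hvsum⟩
          refine hagree_mem v hvV ?_ ?_
          · rcases vset_block_sum hvV (B1 n) (Or.inl rfl) with ⟨_, h0⟩ | ⟨_, q, hqB, hvq⟩
            · obtain ⟨w, hw, hw0⟩ := hZnot (B1 n) (Or.inl rfl) hZ1
              exact ⟨w, hw, fun i hi => by rw [hw0 i hi, h0 i hi]⟩
            · obtain ⟨w, hw, hwq⟩ := hPnot q (hPnot' q)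
              exact ⟨w, hw, agree_of_one hvV hw.1 (B1 n) (Or.inl rfl) hqB hvq hwq⟩
          · rcases vset_block_sum hvV (B2 n) (Or.inr rfl) with ⟨h0, _⟩ | ⟨_, q, hqB, hvq⟩
            · rw [hvsum] at h0; norm_num at h0
            · obtain ⟨w, hw, hwq⟩ := hPnot q (hPnot' q)
              exact ⟨w, hw, agree_of_one hvV hw.1 (B2 n) (Or.inr rfl) hqB hvq hwq⟩
      have hfacet := isFacet_Fone (B2 n) (Or.inr rfl) hq2
      obtain ⟨_, hhull⟩ := face_hull (fone_extreme (B2 n) (Or.inr rfl)) hfacet.2.1 hfacet.2.2.1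
      rw [hFhull, hVFeq, ← hhull]
    · by_cases hP : ∃ p : Fin n, ∀ v ∈ VF, v p = 0
      · left
        obtain ⟨p, hp⟩ := hP
        refine ⟨p, ?_⟩
        have hp' : ∀ v ∈ VF, projL p v = 0 := fun v hv => hp v hv
        have hPnot' : ∀ p' : Fin n, p' ≠ p → ¬ (∀ v ∈ VF, v p' = 0) := by
          intro p' hne' hp''
          refine hbound (projL p) (projL p') 0 0 hp' (fun v hv => hp'' v hv)
            (stdVec p) (stdVec p') ?_ ?_ ?_ ?_
          · rw [hprojL_std, if_pos rfl]
          · rw [hprojL_std, if_neg hne']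
          · rw [hprojL_std, if_neg (fun h => hne' h.symm)]
          · rw [hprojL_std, if_pos rfl]
        have hVFeq : VF = Vset n ∩ Fzero n p := by
          ext v
          constructor
          · intro hv
            exact ⟨hv.1, hv.1.1, hp v hv⟩
          · rintro ⟨hvV, _, hvp⟩
            refine hagree_mem v hvV ?_ ?_
            · rcases vset_block_sum hvV (B1 n) (Or.inl rfl) with ⟨_, h0⟩ | ⟨_, q, hqB, hvq⟩
              · obtain ⟨w, hw, hw0⟩ := hZnot (B1 n) (Or.inl rfl) hZ1
                exact ⟨w, hw, fun i hi => by rw [hw0 i hi, h0 i hi]⟩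
              · have hqp : q ≠ p := by
                  intro h
                  rw [h, hvp] at hvq
                  norm_num at hvq
                obtain ⟨w, hw, hwq⟩ := hPnot q (hPnot' q hqp)
                exact ⟨w, hw, agree_of_one hvV hw.1 (B1 n) (Or.inl rfl) hqB hvq hwq⟩
            · rcases vset_block_sum hvV (B2 n) (Or.inr rfl) with ⟨_, h0⟩ | ⟨_, q, hqB, hvq⟩
              · obtain ⟨w, hw, hw0⟩ := hZnot (B2 n) (Or.inr rfl) hZ2
                exact ⟨w, hw, fun i hi => by rw [hw0 i hi, h0 i hi]⟩
              · have hqp : q ≠ p := by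
                  intro h
                  rw [h, hvp] at hvq
                  norm_num at hvq
                obtain ⟨w, hw, hwq⟩ := hPnot q (hPnot' q hqp)
                exact ⟨w, hw, agree_of_one hvV hw.1 (B2 n) (Or.inr rfl) hqB hvq hwq⟩
        have hfacet := isFacet_Fzero (n := n) p
        obtain ⟨_, hhull⟩ := face_hull (fzero_extreme p) hfacet.2.1 hfacet.2.2.1
        rw [hFhull, hVFeq, ← hhull]
      · exfalso
        push_neg at hP
        have hVFeq : VF = Vset n := by
          apply Subset.antisymm Set.inter_subset_left
          intro v hvV
          refine hagree_mem v hvV ?_ ?_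
          · rcases vset_block_sum hvV (B1 n) (Or.inl rfl) with ⟨_, h0⟩ | ⟨_, q, hqB, hvq⟩
            · obtain ⟨w, hw, hw0⟩ := hZnot (B1 n) (Or.inl rfl) hZ1
              exact ⟨w, hw, fun i hi => by rw [hw0 i hi, h0 i hi]⟩
            · obtain ⟨w, hw, hwq⟩ := hP q
              have hwq1 : w q = 1 := (hw.1.2 q).resolve_left hwq
              exact ⟨w, hw, agree_of_one hvV hw.1 (B1 n) (Or.inl rfl) hqB hvq hwq1⟩
          · rcases vset_block_sum hvV (B2 n) (Or.inr rfl) with ⟨_, h0⟩ | ⟨_, q, hqB, hvq⟩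
            · obtain ⟨w, hw, hw0⟩ := hZnot (B2 n) (Or.inr rfl) hZ2
              exact ⟨w, hw, fun i hi => by rw [hw0 i hi, h0 i hi]⟩
            · obtain ⟨w, hw, hwq⟩ := hP q
              have hwq1 : w q = 1 := (hw.1.2 q).resolve_left hwq
              exact ⟨w, hw, agree_of_one hvV hw.1 (B2 n) (Or.inr rfl) hqB hvq hwq1⟩
        have hFeq : F = prodSimplex n := by
          rw [hFhull, hVFeq, ← ps_eq_hull]
        rw [hFeq, dim_ps] at hdim
        omega

end Aux

namespace Aux
variable {n : ℕ}

lemma zero_mem_vset : (0 : Pt n) ∈ Vset n := ⟨zero_mem_ps, fun i => Or.inl rfl⟩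

lemma facet_set_eq (hn : 2 ≤ n) :
    {F : Set (Pt n) | IsFacet (prodSimplex n) F}
      = (Set.range fun p : Fin n => Fzero n p) ∪ {Fone n (B1 n), Fone n (B2 n)} := by
  have hq1 : (⟨0, by omega⟩ : Fin n) ∈ B1 n := by
    rw [mem_B1]; show 0 < n / 2; omega
  have hq2 : (⟨n - 1, by omega⟩ : Fin n) ∈ B2 n := by
    rw [mem_B2]; show n / 2 ≤ n - 1; omega
  ext F
  constructor
  · intro hF
    rcases facet_classification hn hF with ⟨p, rfl⟩ | rfl | rfl
    · exact Or.inl ⟨p, rfl⟩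
    · exact Or.inr (Or.inl rfl)
    · exact Or.inr (Or.inr rfl)
  · rintro (⟨p, rfl⟩ | h)
    · exact isFacet_Fzero p
    · rcases h with rfl | rfl
      · exact isFacet_Fone (B1 n) (Or.inl rfl) hq1
      · exact isFacet_Fone (B2 n) (Or.inr rfl) hq2

lemma fzero_ne_fone (p : Fin n) (B : Finset (Fin n)) : Fzero n p ≠ Fone n B := by
  intro h
  have h0 : (0 : Pt n) ∈ Fzero n p := ⟨zero_mem_ps, rfl⟩
  rw [h] at h0
  have h1 := h0.2
  simp at h1

lemma fzero_inj : Function.Injective (fun p : Fin n => Fzero n p) := by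
  intro p p' h
  by_contra hne
  have h0 : stdVec p' ∈ Fzero n p := by
    refine ⟨stdVec_mem_ps p', ?_⟩
    show stdVec p' p = 0
    exact if_neg hne
  have h' : Fzero n p = Fzero n p' := h
  rw [h'] at h0
  have h1 : stdVec p' p' = 0 := h0.2
  rw [stdVec_apply_self] at h1
  norm_num at h1

lemma fone_ne (hn : 2 ≤ n) : Fone n (B1 n) ≠ Fone n (B2 n) := by
  have hq1 : (⟨0, by omega⟩ : Fin n) ∈ B1 n := by
    rw [mem_B1]; show 0 < n / 2; omega
  intro h
  have h0 : stdVec (⟨0, by omega⟩ : Fin n) ∈ Fone n (B1 n) :=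
    ⟨stdVec_mem_ps _, by rw [sum_stdVec, if_pos hq1]⟩
  rw [h] at h0
  have h1 := h0.2
  rw [sum_stdVec, if_neg (fun hh => (mem_B2_iff_not.1 hh) hq1)] at h1
  norm_num at h1

lemma facet_finite (hn : 2 ≤ n) : {F : Set (Pt n) | IsFacet (prodSimplex n) F}.Finite := by
  rw [facet_set_eq hn]
  exact (Set.finite_range _).union ((Set.finite_singleton _).insert _)

lemma facet_ncard (hn : 2 ≤ n) : {F : Set (Pt n) | IsFacet (prodSimplex n) F}.ncard = n + 2 := by
  rw [facet_set_eq hn]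
  have hA : (Set.range fun p : Fin n => Fzero n p).ncard = n := by
    rw [← Set.image_univ, Set.ncard_image_of_injective _ fzero_inj, Set.ncard_univ,
      Nat.card_eq_fintype_card, Fintype.card_fin]
  have hB : ({Fone n (B1 n), Fone n (B2 n)} : Set (Set (Pt n))).ncard = 2 :=
    Set.ncard_pair (fone_ne hn)
  rw [Set.ncard_union_eq ?_ (Set.finite_range _) ((Set.finite_singleton _).insert _), hA, hB]
  rw [Set.disjoint_left]
  rintro _ ⟨p, rfl⟩ hmem
  rcases hmem with h | h
  · exact fzero_ne_fone p (B1 n) h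
  · exact fzero_ne_fone p (B2 n) h

end Aux


/-- For `n ≥ 2`, the product of standard simplices of dimensions `⌊n/2⌋`
and `⌈n/2⌉` is an `n`-dimensional Delzant polytope with exactly `⌊(n+2)/2⌋·⌈(n+2)/2⌉`
vertices and exactly `n + 2` facets; in particular, the vertex bound in the statement
"a Delzant polytope with at least `⌊(n+2)/2⌋·⌈(n+2)/2⌉ + 1` vertices has at least `n + 3`
facets" is sharp. -/
theorem prodSimplex_delzant_card_vertices_card_facets (n : ℕ) (hn : 2 ≤ n) :
    IsDelzant (prodSimplex n) ∧
    (Set.extremePoints ℝ (prodSimplex n)).ncard = (n + 2) / 2 * ((n + 3) / 2) ∧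
    {F : Set (Pt n) | IsFacet (prodSimplex n) F}.Finite ∧
    {F : Set (Pt n) | IsFacet (prodSimplex n) F}.ncard = n + 2 := by
  
  refine ⟨⟨Aux.compact_ps, Aux.convex_ps, Aux.interior_ps_nonempty hn, ?_, ?_, ?_⟩, ?_, ?_, ?_⟩
  · rw [Aux.extremePoints_ps]; exact Aux.vset_finite
  · rw [Aux.extremePoints_ps]; exact ⟨0, Aux.zero_mem_vset⟩
  · intro v hv
    exact Aux.vertex_delzant hv
  · rw [Aux.extremePoints_ps, Aux.vset_ncard]
    have h1 : (n + 2) / 2 = n / 2 + 1 := by omega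
    have h2 : (n + 3) / 2 = n - n / 2 + 1 := by omega
    rw [h1, h2]
  · exact Aux.facet_finite hn
  · exact Aux.facet_ncard hn
end
end

section
/- Let Δ ⊂ ℝⁿ be a Delzant polytope and let 𝔉 be a finite family of admissible simplices in Δ with pairwise distinct centers. Fix Σ ∈ 𝔉 with center the vertex v, and let e_v^1, …, e_v^n be the edges of Δ meeting v. Then Σ is disjoint from every other member of 𝔉 if and only if for every other Σ' ∈ 𝔉 and every j ∈ {1,…,n}, the set cl(Σ) ∩ cl(Σ') ∩ e_v^j contains at most one point (where cl denotes closure in ℝⁿ). -/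
open Set MeasureTheory Pointwise

noncomputable section

namespace DisjProof

variable {n : ℕ}

/-- Sum of coordinates. -/
def ssum {n : ℕ} (x : Pt n) : ℝ := ∑ i, x i

lemma ssum_add (x y : Pt n) : ssum (x + y) = ssum x + ssum y := by
  simp [ssum, Finset.sum_add_distrib]

lemma ssum_smul (t : ℝ) (x : Pt n) : ssum (t • x) = t * ssum x := by
  simp [ssum, Finset.mul_sum]

lemma ssum_sub (x y : Pt n) : ssum (x - y) = ssum x - ssum y := by
  simp [ssum, Finset.sum_sub_distrib]

lemma ssum_zero : ssum (0 : Pt n) = 0 := by simp [ssum]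

lemma ssum_nonneg {x : Pt n} (h : ∀ i, 0 ≤ x i) : 0 ≤ ssum x :=
  Finset.sum_nonneg fun i _ => h i

lemma ssum_stdVec (i : Fin n) : ssum (stdVec i) = 1 := by
  simp [ssum, stdVec]

lemma continuous_ssum : Continuous (ssum (n := n)) :=
  continuous_finset_sum _ fun i _ => continuous_apply i

/-- The closed model simplex. -/
def Tset (n : ℕ) (r : ℝ) : Set (Pt n) := {x | (∀ i, 0 ≤ x i) ∧ ssum x ≤ r}

/-- The half open model simplex. -/
def Mset (n : ℕ) (r : ℝ) : Set (Pt n) := {x | (∀ i, 0 ≤ x i) ∧ ssum x < r}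

lemma convex_Tset (n : ℕ) (r : ℝ) : Convex ℝ (Tset n r) := by
  intro x hx y hy a b ha hb hab
  refine ⟨fun i => add_nonneg (mul_nonneg ha (hx.1 i)) (mul_nonneg hb (hy.1 i)), ?_⟩
  rw [ssum_add, ssum_smul, ssum_smul]
  calc a * ssum x + b * ssum y ≤ a * r + b * r := by
        gcongr; exacts [hx.2, hy.2]
    _ = r := by rw [← add_mul, hab, one_mul]

lemma convex_Mset (n : ℕ) (r : ℝ) : Convex ℝ (Mset n r) := by
  intro x hx y hy a b ha hb hab
  refine ⟨fun i => add_nonneg (mul_nonneg ha (hx.1 i)) (mul_nonneg hb (hy.1 i)), ?_⟩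
  rw [ssum_add, ssum_smul, ssum_smul]
  rcases eq_or_lt_of_le ha with h0 | ha'
  · have hb1 : b = 1 := by linarith
    simp [← h0, hb1, hy.2]
  · have e1 : a * ssum x < a * r := mul_lt_mul_of_pos_left hx.2 ha'
    have e2 : b * ssum y ≤ b * r := mul_le_mul_of_nonneg_left hy.2.le hb
    have e3 : (a + b) * r = r := by rw [hab, one_mul]
    nlinarith [e1, e2, e3]

lemma isClosed_Tset (n : ℕ) (r : ℝ) : IsClosed (Tset n r) := by
  have h1 : IsClosed {x : Pt n | ∀ i, 0 ≤ x i} := by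
    have : {x : Pt n | ∀ i, 0 ≤ x i} = ⋂ i, {x : Pt n | 0 ≤ x i} := by
      ext x; simp
    rw [this]
    exact isClosed_iInter fun i => isClosed_le continuous_const (continuous_apply i)
  have h2 : IsClosed {x : Pt n | ssum x ≤ r} := isClosed_le continuous_ssum continuous_const
  exact h1.inter h2

lemma facet_hull (r : ℝ) (hr : 0 < r) :
    convexHull ℝ (Set.range fun i : Fin n => r • stdVec i)
      = {x : Pt n | (∀ i, 0 ≤ x i) ∧ ssum x = r} := by
  have hbv : (fun (i : Fin n) (j : Fin n) => if i = j then (1:ℝ) else 0)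
      = fun i => stdVec i := by
    funext i j
    simp [stdVec, eq_comm]
  set f : Pt n →ₗ[ℝ] Pt n := r • LinearMap.id with hf
  have hfx : ∀ x : Pt n, f x = r • x := fun x => by simp [hf]
  have hrange : (Set.range fun i : Fin n => r • stdVec i) = f '' Set.range (stdVec (n := n)) := by
    rw [← Set.range_comp]
    rfl
  have hstd : convexHull ℝ (Set.range (stdVec (n := n))) = stdSimplex ℝ (Fin n) := by
    rw [← convexHull_basis_eq_stdSimplex]
    congr 1
    ext g
    simp only [Set.mem_range]
    constructor
    · rintro ⟨i, rfl⟩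
      refine ⟨i, ?_⟩
      funext j
      simp [stdVec, eq_comm]
    · rintro ⟨i, rfl⟩
      refine ⟨i, ?_⟩
      funext j
      simp [stdVec, eq_comm]
  rw [hrange, ← f.image_convexHull, hstd]
  ext x
  constructor
  · rintro ⟨y, hy, rfl⟩
    rw [hfx]
    refine ⟨fun i => mul_nonneg hr.le (hy.1 i), ?_⟩
    have : ssum (r • y) = r * ssum y := ssum_smul _ _
    rw [this]
    have : ssum y = 1 := hy.2
    rw [this, mul_one]
  · rintro ⟨h1, h2⟩
    refine ⟨r⁻¹ • x, ⟨fun i => mul_nonneg (by positivity) (h1 i), ?_⟩, ?_⟩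
    · have h3 : ssum (r⁻¹ • x) = r⁻¹ * ssum x := ssum_smul _ _
      show ∑ i, (r⁻¹ • x) i = 1
      rw [show ∑ i, (r⁻¹ • x) i = ssum (r⁻¹ • x) from rfl, h3, h2, inv_mul_cancel₀ hr.ne']
    · rw [hfx, smul_smul, mul_inv_cancel₀ hr.ne', one_smul]

lemma big_hull (r : ℝ) (hr : 0 < r) :
    convexHull ℝ (insert (0 : Pt n) (Set.range fun i : Fin n => r • stdVec i))
      = Tset n r := by
  apply Subset.antisymm
  · apply convexHull_min _ (convex_Tset n r)
    rintro x (rfl | ⟨i, rfl⟩)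
    · exact ⟨fun i => le_refl 0, by rw [ssum_zero]; exact hr.le⟩
    · refine ⟨fun j => ?_, by rw [ssum_smul, ssum_stdVec, mul_one]⟩
      simp only [Pi.smul_apply, stdVec, smul_eq_mul]
      split <;> simp [hr.le]
  · rintro x ⟨h1, h2⟩
    rcases eq_or_lt_of_le (ssum_nonneg h1) with h0 | h0
    · have : x = 0 := by
        funext i
        have := (Finset.sum_eq_zero_iff_of_nonneg (fun i _ => h1 i)).1 h0.symm i (Finset.mem_univ i)
        simpa using this
      rw [this]
      exact subset_convexHull ℝ _ (mem_insert _ _)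
    · set y : Pt n := (r / ssum x) • x with hy
      have hyf : y ∈ convexHull ℝ (Set.range fun i : Fin n => r • stdVec i) := by
        rw [facet_hull r hr]
        constructor
        · intro i
          exact mul_nonneg (by positivity) (h1 i)
        · rw [hy, ssum_smul, div_mul_cancel₀ _ h0.ne']
      have h0' : 0 ∈ convexHull ℝ (insert (0 : Pt n) (Set.range fun i : Fin n => r • stdVec i)) :=
        subset_convexHull ℝ _ (mem_insert _ _)
      have hy' : y ∈ convexHull ℝ (insert (0 : Pt n) (Set.range fun i : Fin n => r • stdVec i)) :=
        convexHull_mono (subset_insert _ _) hyf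
      have := (convex_convexHull ℝ _).segment_subset h0' hy'
      apply this
      have hd1 : ssum x / r ≤ 1 := by
        rw [div_le_one hr]
        exact h2
      refine ⟨1 - ssum x / r, ssum x / r, by linarith, by positivity, by ring, ?_⟩
      rw [smul_zero, zero_add, hy, smul_smul, div_mul_div_comm, mul_comm,
        div_self (by positivity), one_smul]

lemma model_eq (r : ℝ) (hr : 0 < r) : modelSimplex n r = Mset n r := by
  rw [modelSimplex, big_hull r hr, facet_hull r hr]
  ext x
  simp only [Tset, Mset, mem_diff, mem_setOf_eq]
  constructor
  · rintro ⟨⟨h1, h2⟩, h3⟩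
    exact ⟨h1, lt_of_le_of_ne h2 fun h => h3 ⟨h1, h⟩⟩
  · rintro ⟨h1, h2⟩
    exact ⟨⟨h1, h2.le⟩, fun h => absurd h.2 h2.ne⟩

lemma closure_Mset (r : ℝ) (hr : 0 < r) : closure (Mset n r) = Tset n r := by
  apply Subset.antisymm
  · exact closure_minimal (fun x hx => ⟨hx.1, hx.2.le⟩) (isClosed_Tset n r)
  · intro x hx
    have ht : Filter.Tendsto (fun t : ℝ => t • x) (nhdsWithin 1 (Set.Iio 1)) (nhds x) := by
      have : Filter.Tendsto (fun t : ℝ => t • x) (nhds 1) (nhds x) := by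
        have := (continuous_id.smul (continuous_const (y := x))).tendsto (1:ℝ)
        exact (continuous_id.smul (continuous_const (y := x))).tendsto' (1:ℝ) x (one_smul ℝ x)
      exact this.mono_left nhdsWithin_le_nhds
    refine mem_closure_of_tendsto ht ?_
    filter_upwards [Ico_mem_nhdsLT_of_mem (by constructor <;> norm_num : (1:ℝ) ∈ Set.Ioc 0 1)]
      with t ht'
    refine ⟨fun i => mul_nonneg ht'.1 (hx.1 i), ?_⟩
    rw [ssum_smul]
    calc t * ssum x ≤ t * r := mul_le_mul_of_nonneg_left hx.2 ht'.1
      _ < 1 * r := by apply mul_lt_mul_of_pos_right ht'.2 hr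
      _ = r := one_mul r

end DisjProof
namespace DisjProof

variable {n : ℕ}

/-- Workable data for an admissible simplex. -/
structure Good (Δ : Set (Pt n)) (w : Pt n) (r : ℝ) (S : Set (Pt n)) where
  L : Pt n ≃ₗ[ℝ] Pt n
  hr : 0 < r
  hsub : S ⊆ Δ
  hS : S = (fun x => w + L x) '' Mset n r
  hedges : ∀ i : Fin n, ∃ e, IsEdge Δ e ∧ w ∈ e ∧
    (fun x => w + L x) '' segment ℝ 0 (r • stdVec i) ⊆ e

lemma good_of_adm {Δ S : Set (Pt n)} {w : Pt n} {r : ℝ}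
    (h : IsAdmissibleSimplex Δ w r S) : Nonempty (Good Δ w r S) := by
  obtain ⟨hr, hsub, f, ⟨A, b, hdet, hf⟩, hf0, hedges, hSeq⟩ := h
  set M : Matrix (Fin n) (Fin n) ℝ := A.map (Int.cast : ℤ → ℝ) with hM
  have hMdet : IsUnit M.det := by
    have h1 : M.det = ((A.det : ℤ) : ℝ) := ((Int.castRingHom ℝ).map_det A).symm
    rcases Int.isUnit_iff.1 hdet with h | h <;>
      · rw [isUnit_iff_ne_zero, h1, h]
        norm_num
  have hInv : Invertible M := M.invertibleOfIsUnitDet hMdet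
  set L : Pt n ≃ₗ[ℝ] Pt n := M.toLinearEquiv' hInv with hL
  have hb : b = w := by
    funext i
    have := hf 0 i
    simp only [Pi.zero_apply, mul_zero, Finset.sum_const_zero, zero_add] at this
    rw [← this, hf0]
  have hfeq : f = fun x => w + L x := by
    funext x i
    have h1 : L x = M.mulVec x := rfl
    rw [hf x i, hb]
    show (∑ j, (A i j : ℝ) * x j) + w i = (w + L x) i
    simp only [Pi.add_apply, h1, Matrix.mulVec, dotProduct, hM, Matrix.map_apply]
    ring_nf
  refine ⟨⟨L, hr, hsub, ?_, ?_⟩⟩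
  · rw [hSeq, hfeq, model_eq r hr]
  · intro i
    obtain ⟨e, he, hwe, hse⟩ := hedges i
    exact ⟨e, he, hwe, by rw [← hfeq]; exact hse⟩

/-- The closure of the affine image of the half-open model simplex. -/
lemma closure_image_Mset (w : Pt n) (L : Pt n ≃ₗ[ℝ] Pt n) {r : ℝ} (hr : 0 < r) :
    closure ((fun x => w + L x) '' Mset n r) = (fun x => w + L x) '' Tset n r := by
  set H : Pt n ≃ₜ Pt n :=
    { toFun := fun x => w + L x
      invFun := fun z => L.symm (z - w)
      left_inv := fun x => by simp
      right_inv := fun z => by simp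
      continuous_toFun :=
        continuous_const.add L.toLinearMap.continuous_of_finiteDimensional
      continuous_invFun :=
        L.symm.toLinearMap.continuous_of_finiteDimensional.comp
          (continuous_id.sub continuous_const) } with hH
  have h1 : closure (H '' Mset n r) = H '' closure (Mset n r) :=
    (Homeomorph.image_closure H (Mset n r)).symm
  have h2 : (fun x => w + L x) = ⇑H := rfl
  rw [h2, h1, closure_Mset r hr]

namespace Good

variable {Δ S : Set (Pt n)} {w : Pt n} {r : ℝ} (G : Good Δ w r S)

/-- The affine map of the simplex. -/
def map (G : Good Δ w r S) : Pt n → Pt n := fun x => w + G.L x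

/-- Affine coordinates adapted to the simplex. -/
def coord (G : Good Δ w r S) (z : Pt n) : Pt n := G.L.symm (z - w)

lemma map_coord (z : Pt n) : G.map (G.coord z) = z := by
  simp [map, coord]

lemma coord_map (x : Pt n) : G.coord (G.map x) = x := by
  simp [map, coord]

lemma coord_center : G.coord w = 0 := by simp [coord]

lemma map_inj : Function.Injective G.map := by
  intro x y h
  have := congrArg G.coord h
  rwa [coord_map, coord_map] at this

lemma mem_map_image_iff {X : Set (Pt n)} {z : Pt n} : z ∈ G.map '' X ↔ G.coord z ∈ X := by
  constructor
  · rintro ⟨x, hx, rfl⟩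
    rwa [G.coord_map]
  · intro h
    exact ⟨G.coord z, h, G.map_coord z⟩

lemma mem_S_iff (z : Pt n) : z ∈ S ↔ G.coord z ∈ Mset n r :=
  (Set.ext_iff.1 G.hS z).trans G.mem_map_image_iff

lemma closure_S : closure S = G.map '' Tset n r := by
  have h : closure S = closure ((fun x => w + G.L x) '' Mset n r) := congrArg closure G.hS
  rw [h, closure_image_Mset w G.L G.hr]
  rfl

lemma mem_closure_iff (z : Pt n) : z ∈ closure S ↔ G.coord z ∈ Tset n r :=
  (Set.ext_iff.1 G.closure_S z).trans G.mem_map_image_iff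

/-- The adapted affine functional: sum of adapted coordinates. -/
def phi (G : Good Δ w r S) (z : Pt n) : ℝ := ssum (G.coord z)

lemma phi_center : G.phi w = 0 := by simp [phi, coord_center, ssum_zero]

lemma coord_affine (a b : Pt n) (t : ℝ) :
    G.coord (a + t • (b - a)) = G.coord a + t • (G.coord b - G.coord a) := by
  have h1 : a + t • (b - a) - w = (a - w) + t • ((b - w) - (a - w)) := by
    module
  simp only [coord, h1, map_add, map_sub, _root_.map_smul]

lemma phi_affine (a b : Pt n) (t : ℝ) :
    G.phi (a + t • (b - a)) = G.phi a + t * (G.phi b - G.phi a) := by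
  rw [phi, coord_affine, ssum_add, ssum_smul, ssum_sub]
  rfl

lemma coord_nonneg_of_mem_closure {z : Pt n} (hz : z ∈ closure S) (i : Fin n) :
    0 ≤ G.coord z i := ((G.mem_closure_iff z).1 hz).1 i

lemma phi_le_of_mem_closure {z : Pt n} (hz : z ∈ closure S) : G.phi z ≤ r :=
  ((G.mem_closure_iff z).1 hz).2

lemma phi_nonneg_of_mem_closure {z : Pt n} (hz : z ∈ closure S) : 0 ≤ G.phi z :=
  ssum_nonneg ((G.mem_closure_iff z).1 hz).1

lemma mem_of_coord {z : Pt n} (h1 : ∀ i, 0 ≤ G.coord z i) (h2 : G.phi z < r) : z ∈ S :=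
  (G.mem_S_iff z).2 ⟨h1, h2⟩

lemma center_mem (G : Good Δ w r S) : w ∈ S := by
  apply G.mem_of_coord
  · intro i
    rw [coord_center]
    exact le_refl 0
  · rw [phi_center]
    exact G.hr

lemma closure_subset (G : Good Δ w r S) (hcl : IsClosed Δ) : closure S ⊆ Δ :=
  closure_minimal G.hsub hcl

lemma subset_closure' : S ⊆ closure S := subset_closure

end Good

end DisjProof
namespace DisjProof

variable {n : ℕ}

/-- The convex cone generated by finitely many vectors. -/
def coneOf (d : Fin n → Pt n) : Set (Pt n) :=
  {z | ∃ a : Fin n → ℝ, (∀ i, 0 ≤ a i) ∧ z = ∑ i, a i • d i}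

lemma zero_mem_coneOf (d : Fin n → Pt n) : (0 : Pt n) ∈ coneOf d :=
  ⟨0, fun i => le_refl 0, by simp⟩

lemma smul_single_mem_coneOf (d : Fin n → Pt n) (i : Fin n) {c : ℝ} (hc : 0 ≤ c) :
    c • d i ∈ coneOf d := by
  refine ⟨fun j => if j = i then c else 0, fun j => by dsimp only; split <;> simp [hc], ?_⟩
  rw [Finset.sum_congr rfl (fun j _ => by rw [ite_smul, zero_smul])]
  rw [Finset.sum_ite_eq' Finset.univ i (fun j => c • d j)]
  simp

lemma convex_coneOf (d : Fin n → Pt n) : Convex ℝ (coneOf d) := by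
  rintro x ⟨a, ha, rfl⟩ y ⟨b, hb, rfl⟩ s t hs ht hst
  refine ⟨fun i => s * a i + t * b i,
    fun i => add_nonneg (mul_nonneg hs (ha i)) (mul_nonneg ht (hb i)), ?_⟩
  rw [Finset.smul_sum, Finset.smul_sum, ← Finset.sum_add_distrib]
  congr 1
  funext i
  rw [add_smul, smul_smul, smul_smul]

lemma smul_mem_coneOf {d : Fin n → Pt n} {z : Pt n} {t : ℝ} (ht : 0 ≤ t)
    (hz : z ∈ coneOf d) : t • z ∈ coneOf d := by
  obtain ⟨a, ha, rfl⟩ := hz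
  refine ⟨fun i => t * a i, fun i => mul_nonneg ht (ha i), ?_⟩
  rw [Finset.smul_sum]
  congr 1
  funext i
  rw [smul_smul]

/-- Minkowski: a compact convex set with finitely many extreme points is their hull. -/
lemma eq_hull_extremePoints {Δ : Set (Pt n)} (hcomp : IsCompact Δ) (hconv : Convex ℝ Δ)
    (hfin : (Set.extremePoints ℝ Δ).Finite) :
    Δ = convexHull ℝ (Set.extremePoints ℝ Δ) := by
  have h1 := closure_convexHull_extremePoints hcomp hconv
  rw [(hfin.isClosed_convexHull (𝕜 := ℝ)).closure_eq] at h1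
  exact h1.symm

/-- **Corner lemma**: at an extreme point all of whose edges are among the
segments `[w, w + g i]`, the polytope is contained in `w + cone(g)`. -/
lemma corner_lemma {Δ : Set (Pt n)} (hcomp : IsCompact Δ) (hconv : Convex ℝ Δ)
    (hfin : (Set.extremePoints ℝ Δ).Finite) {w : Pt n} (hw : w ∈ Set.extremePoints ℝ Δ)
    (g : Fin n → Pt n)
    (hedge : ∀ e, IsEdge Δ e → w ∈ e → ∃ i, e = segment ℝ w (w + g i)) :
    ∀ z ∈ Δ, z - w ∈ coneOf g := by
  classical
  have hhull := eq_hull_extremePoints hcomp hconv hfin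
  set E := Set.extremePoints ℝ Δ with hE
  set E' := E \ {w} with hE'
  rcases E'.eq_empty_or_nonempty with hne | hne
  · -- degenerate case : Δ = {w}
    intro z hz
    have hEw : E ⊆ {w} := by
      intro p hp
      by_contra hpw
      exact (Set.eq_empty_iff_forall_notMem.1 hne p) ⟨hp, hpw⟩
    have : Δ ⊆ {w} := by
      rw [hhull]
      exact convexHull_min hEw (convex_singleton w)
    have hzw : z = w := this hz
    rw [hzw, sub_self]
    exact zero_mem_coneOf g
  · -- main case
    have hE'fin : E'.Finite := hfin.subset (Set.diff_subset)
    have hwE' : w ∉ convexHull ℝ E' := by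
      intro hmem
      have hconvdiff : Convex ℝ (Δ \ {w}) :=
        ((hconv.mem_extremePoints_iff_convex_diff).1 hw).2
      have hsub : convexHull ℝ E' ⊆ Δ \ {w} := by
        apply convexHull_min _ hconvdiff
        intro p hp
        exact ⟨extremePoints_subset hp.1, hp.2⟩
      exact (hsub hmem).2 rfl
    obtain ⟨χ, u, hχw, hχ⟩ :=
      geometric_hahn_banach_point_closed (convex_convexHull ℝ E')
        (hE'fin.isClosed_convexHull (𝕜 := ℝ)) hwE'
    have hposE' : ∀ p ∈ E', 0 < χ (p - w) := by
      intro p hp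
      rw [map_sub]
      exact sub_pos.2 (lt_trans hχw (hχ p (subset_convexHull ℝ E' hp)))
    -- the compact base of the vertex cone
    set Y : Set (Pt n) := (fun p => (χ (p - w))⁻¹ • (p - w)) '' E' with hY
    have hYfin : Y.Finite := hE'fin.image _
    set B := convexHull ℝ Y with hB
    have hBconv : Convex ℝ B := convex_convexHull ℝ Y
    have hYne : Y.Nonempty := hne.image _
    have hBne : B.Nonempty := hYne.mono (subset_convexHull ℝ Y)
    -- χ takes value 1 on B
    have hχB : ∀ b ∈ B, χ b = 1 := by
      intro b hb
      have hcv : Convex ℝ {x : Pt n | χ x = 1} :=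
        convex_hyperplane ⟨fun x y => χ.map_add x y, fun c x => χ.map_smul c x⟩ 1
      apply convexHull_min _ hcv hb
      rintro y ⟨p, hp, rfl⟩
      simp only [Set.mem_setOf_eq]
      show χ ((χ (p - w))⁻¹ • (p - w)) = 1
      rw [χ.map_smul, smul_eq_mul, inv_mul_cancel₀ (hposE' p hp).ne']
    -- every element of Δ - w is a nonnegative multiple of an element of B
    have hΔT : ∀ z ∈ Δ, ∃ t : ℝ, 0 ≤ t ∧ ∃ b ∈ B, z - w = t • b := by
      have hK : Convex ℝ {z : Pt n | ∃ t : ℝ, 0 ≤ t ∧ ∃ b ∈ B, z - w = t • b} := by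
        rintro z₁ ⟨t₁, ht₁, b₁, hb₁, hz₁⟩ z₂ ⟨t₂, ht₂, b₂, hb₂, hz₂⟩ s₁ s₂ hs₁ hs₂ hs
        obtain ⟨b₀, hb₀⟩ := hBne
        have key : s₁ • z₁ + s₂ • z₂ - w = (s₁ * t₁) • b₁ + (s₂ * t₂) • b₂ := by
          have step : s₁ • z₁ + s₂ • z₂ - w = s₁ • (z₁ - w) + s₂ • (z₂ - w) := by
            match_scalars <;> linarith [hs]
          rw [step, hz₁, hz₂, smul_smul, smul_smul]
        rcases eq_or_lt_of_le (add_nonneg (mul_nonneg hs₁ ht₁) (mul_nonneg hs₂ ht₂)) with h0 | h0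
        · refine ⟨0, le_refl 0, b₀, hb₀, ?_⟩
          have e1 : s₁ * t₁ = 0 ∧ s₂ * t₂ = 0 := by
            constructor <;> nlinarith [mul_nonneg hs₁ ht₁, mul_nonneg hs₂ ht₂]
          rw [key, e1.1, e1.2, zero_smul, zero_smul, add_zero, zero_smul]
        · set s := s₁ * t₁ + s₂ * t₂ with hsdef
          refine ⟨s, h0.le, (s₁ * t₁ / s) • b₁ + (s₂ * t₂ / s) • b₂, ?_, ?_⟩
          · apply hBconv hb₁ hb₂ (by positivity) (by positivity)
            field_simp; exact hsdef.symm
          · rw [key]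
            have hsne : s ≠ 0 := h0.ne'
            match_scalars <;> (field_simp; try ring)
      intro z hz
      have hz' : z ∈ convexHull ℝ E := by rw [← hhull]; exact hz
      refine convexHull_min ?_ hK hz'
      intro p hp
      by_cases hpw : p = w
      · obtain ⟨b₀, hb₀⟩ := hBne
        exact ⟨0, le_refl 0, b₀, hb₀, by rw [hpw, sub_self, zero_smul]⟩
      · have hp' : p ∈ E' := ⟨hp, hpw⟩
        refine ⟨χ (p - w), (hposE' p hp').le, (χ (p - w))⁻¹ • (p - w),
          subset_convexHull ℝ Y ⟨p, hp', rfl⟩, ?_⟩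
        rw [smul_smul, mul_inv_cancel₀ (hposE' p hp').ne', one_smul]
    -- extreme ray property of extreme points of the base
    have hray : ∀ b' ∈ Set.extremePoints ℝ B, ∀ (t₁ t₂ : ℝ) (b₁ b₂ : Pt n),
        0 ≤ t₁ → 0 ≤ t₂ → b₁ ∈ B → b₂ ∈ B → ∀ t : ℝ, 0 ≤ t →
        t₁ • b₁ + t₂ • b₂ = t • b' →
        (∃ s₁ : ℝ, 0 ≤ s₁ ∧ t₁ • b₁ = s₁ • b') ∧ (∃ s₂ : ℝ, 0 ≤ s₂ ∧ t₂ • b₂ = s₂ • b') := by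
      rintro b' hb' t₁ t₂ b₁ b₂ ht₁ ht₂ hb₁ hb₂ t ht heq
      rcases eq_or_lt_of_le ht₁ with h1 | h1
      · refine ⟨⟨0, le_refl 0, by rw [← h1, zero_smul, zero_smul]⟩, ⟨t, ht, ?_⟩⟩
        rw [← heq, ← h1, zero_smul, zero_add]
      rcases eq_or_lt_of_le ht₂ with h2 | h2
      · refine ⟨⟨t, ht, ?_⟩, ⟨0, le_refl 0, by rw [← h2, zero_smul, zero_smul]⟩⟩
        rw [← heq, ← h2, zero_smul, add_zero]
      · have hsum : t₁ + t₂ = t := by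
          have e1 := congrArg χ heq
          rw [χ.map_add, χ.map_smul, χ.map_smul, χ.map_smul, smul_eq_mul, smul_eq_mul,
            smul_eq_mul, hχB b₁ hb₁, hχB b₂ hb₂,
            hχB b' (extremePoints_subset hb'), mul_one, mul_one, mul_one] at e1
          exact e1
        have htpos : 0 < t := by rw [← hsum]; positivity
        have hopen : b' ∈ openSegment ℝ b₁ b₂ := by
          refine ⟨t₁ / t, t₂ / t, by positivity, by positivity, ?_, ?_⟩
          · rw [← add_div, hsum, div_self htpos.ne']
          · have h := congrArg (fun z : Pt n => t⁻¹ • z) heq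
            simp only [smul_add, smul_smul, inv_mul_cancel₀ htpos.ne', one_smul] at h
            rw [inv_mul_eq_div, inv_mul_eq_div] at h
            exact h
        obtain ⟨e1, e2⟩ := (mem_extremePoints.1 hb').2 b₁ hb₁ b₂ hb₂ hopen
        exact ⟨⟨t₁, ht₁, by rw [e1]⟩, ⟨t₂, ht₂, by rw [e2]⟩⟩
    -- every extreme point of the base lies on a ray spanned by some g i
    have hbase : ∀ b' ∈ Set.extremePoints ℝ B, ∃ (i : Fin n) (c : ℝ), 0 ≤ c ∧ b' = c • g i := by
      intro b' hb'
      have hb'B : b' ∈ B := extremePoints_subset hb'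
      have hb'Y : b' ∈ Y := extremePoints_convexHull_subset hb'
      obtain ⟨p, hpE', hpy⟩ := hb'Y
      have hb'1 : χ b' = 1 := hχB b' hb'B
      have hb'ne : b' ≠ 0 := fun h => by rw [h, map_zero] at hb'1; norm_num at hb'1
      -- the parameter interval of the ray from w through b'
      set I : Set ℝ := {t : ℝ | 0 ≤ t ∧ w + t • b' ∈ Δ} with hI
      have h0I : (0 : ℝ) ∈ I :=
        ⟨le_refl 0, by rw [zero_smul, add_zero]; exact extremePoints_subset hw⟩
      have htpI : χ (p - w) ∈ I := by
        refine ⟨(hposE' p hpE').le, ?_⟩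
        have : w + χ (p - w) • b' = p := by
          rw [← hpy, smul_smul, mul_inv_cancel₀ (hposE' p hpE').ne', one_smul]
          abel
        rw [this]
        exact extremePoints_subset hpE'.1
      have hIconv : Convex ℝ I := by
        rintro t₁ ⟨ht₁, hm₁⟩ t₂ ⟨ht₂, hm₂⟩ s₁ s₂ hs₁ hs₂ hs
        simp only [smul_eq_mul]
        refine ⟨by positivity, ?_⟩
        have step : w + (s₁ * t₁ + s₂ * t₂) • b' = s₁ • (w + t₁ • b') + s₂ • (w + t₂ • b') := by
          match_scalars <;> linarith [hs]
        rw [step]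
        exact hconv hm₁ hm₂ hs₁ hs₂ hs
      have hIclosed : IsClosed I := by
        have h1 : IsClosed {t : ℝ | w + t • b' ∈ Δ} :=
          hcomp.isClosed.preimage (continuous_const.add (continuous_id.smul continuous_const))
        exact (isClosed_Ici (a := (0:ℝ))).inter h1
      have hIbdd : BddAbove I := by
        obtain ⟨R, hR⟩ := isBounded_iff_forall_norm_le.1 hcomp.isBounded
        refine ⟨(R + ‖w‖) / ‖b'‖, ?_⟩
        rintro t ⟨ht0, htm⟩
        have hb'pos : 0 < ‖b'‖ := norm_pos_iff.2 hb'ne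
        rw [le_div_iff₀ hb'pos]
        have hnorm : t * ‖b'‖ = ‖(w + t • b') - w‖ := by
          rw [add_sub_cancel_left, norm_smul, Real.norm_eq_abs, abs_of_nonneg ht0]
        rw [hnorm]
        calc ‖(w + t • b') - w‖ ≤ ‖w + t • b'‖ + ‖w‖ := norm_sub_le _ _
          _ ≤ R + ‖w‖ := by gcongr; exact hR _ htm
      set tmax := sSup I with htmax
      have htmaxI : tmax ∈ I := hIclosed.csSup_mem ⟨0, h0I⟩ hIbdd
      have htmaxpos : 0 < tmax :=
        lt_of_lt_of_le (hposE' p hpE') (le_csSup hIbdd htpI)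
      have hIcc : Set.Icc 0 tmax ⊆ I := hIconv.ordConnected.out h0I htmaxI
      have hIcc' : I ⊆ Set.Icc 0 tmax := fun t ht => ⟨ht.1, le_csSup hIbdd ht⟩
      -- the edge generated by b'
      set e : Set (Pt n) := segment ℝ w (w + tmax • b') with he
      have hmem_e : ∀ z, z ∈ e ↔ ∃ t, t ∈ Set.Icc 0 tmax ∧ z = w + t • b' := by
        intro z
        rw [he, segment_eq_image']
        constructor
        · rintro ⟨θ, hθ, rfl⟩
          refine ⟨θ * tmax, ⟨mul_nonneg hθ.1 htmaxpos.le, ?_⟩, ?_⟩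
          · calc θ * tmax ≤ 1 * tmax := mul_le_mul_of_nonneg_right hθ.2 htmaxpos.le
              _ = tmax := one_mul _
          · simp only [add_sub_cancel_left, smul_smul]
        · rintro ⟨t, ht, rfl⟩
          refine ⟨t / tmax, ⟨div_nonneg ht.1 htmaxpos.le,
            by rw [div_le_one htmaxpos]; exact ht.2⟩, ?_⟩
          simp only [add_sub_cancel_left, smul_smul]
          rw [div_mul_cancel₀ _ htmaxpos.ne']
      have heΔ : e ⊆ Δ := by
        intro z hz
        obtain ⟨t, ht, rfl⟩ := (hmem_e z).1 hz
        exact (hIcc ht).2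
      have hext : IsExtreme ℝ Δ e := by
        constructor
        · exact heΔ
        · rintro x₁ hx₁ x₂ hx₂ z hze hzseg
          obtain ⟨t, ht, hzt⟩ := (hmem_e z).1 hze
          obtain ⟨θ₁, θ₂, hθ₁, hθ₂, hθs, hzcomb⟩ := hzseg
          obtain ⟨u₁, hu₁0, c₁, hc₁, hx₁c⟩ := hΔT x₁ hx₁
          obtain ⟨u₂, hu₂0, c₂, hc₂, hx₂c⟩ := hΔT x₂ hx₂
          have hkey : (θ₁ * u₁) • c₁ + (θ₂ * u₂) • c₂ = t • b' := by
            have step : z - w = θ₁ • (x₁ - w) + θ₂ • (x₂ - w) := by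
              rw [← hzcomb]
              match_scalars <;> linarith [hθs]
            rw [hx₁c, hx₂c, smul_smul, smul_smul] at step
            rw [← step, hzt, add_sub_cancel_left]
          obtain ⟨⟨s₁, hs₁0, hs₁⟩, ⟨s₂, hs₂0, hs₂⟩⟩ :=
            hray b' hb' (θ₁ * u₁) (θ₂ * u₂) c₁ c₂ (by positivity) (by positivity)
              hc₁ hc₂ t ht.1 hkey
          have hx₁w : x₁ - w = (s₁ / θ₁) • b' := by
            have h' : θ₁ • (x₁ - w) = s₁ • b' := by rw [hx₁c, smul_smul]; exact hs₁
            calc x₁ - w = θ₁⁻¹ • (θ₁ • (x₁ - w)) := by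
                  rw [smul_smul, inv_mul_cancel₀ hθ₁.ne', one_smul]
              _ = θ₁⁻¹ • (s₁ • b') := by rw [h']
              _ = (s₁ / θ₁) • b' := by rw [smul_smul, inv_mul_eq_div]
          have hx₂w : x₂ - w = (s₂ / θ₂) • b' := by
            have h' : θ₂ • (x₂ - w) = s₂ • b' := by rw [hx₂c, smul_smul]; exact hs₂
            calc x₂ - w = θ₂⁻¹ • (θ₂ • (x₂ - w)) := by
                  rw [smul_smul, inv_mul_cancel₀ hθ₂.ne', one_smul]
              _ = θ₂⁻¹ • (s₂ • b') := by rw [h']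
              _ = (s₂ / θ₂) • b' := by rw [smul_smul, inv_mul_eq_div]
          suffices hboth : x₁ ∈ e ∧ x₂ ∈ e from hboth.1
          constructor
          · have hmemI : s₁ / θ₁ ∈ I := by
              refine ⟨by positivity, ?_⟩
              have : w + (s₁ / θ₁) • b' = x₁ := by rw [← hx₁w]; abel
              rw [this]; exact hx₁
            rw [hmem_e x₁]
            exact ⟨s₁ / θ₁, hIcc' hmemI, by rw [← hx₁w]; abel⟩
          · have hmemI : s₂ / θ₂ ∈ I := by
              refine ⟨by positivity, ?_⟩
              have : w + (s₂ / θ₂) • b' = x₂ := by rw [← hx₂w]; abel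
              rw [this]; exact hx₂
            rw [hmem_e x₂]
            exact ⟨s₂ / θ₂, hIcc' hmemI, by rw [← hx₂w]; abel⟩
      have hedge_e : IsEdge Δ e := by
        refine ⟨w, w + tmax • b', ?_, rfl, hext⟩
        intro hcontra
        have h0 : tmax • b' = 0 := by
          have h1 := congrArg (fun z : Pt n => z - w) hcontra
          simpa using h1.symm
        rcases smul_eq_zero.1 h0 with h | h
        · exact htmaxpos.ne' h
        · exact hb'ne h
      have hwe : w ∈ e := left_mem_segment ℝ _ _
      obtain ⟨i, hei⟩ := hedge e hedge_e hwe
      -- extract proportionality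
      have hmm : w + tmax • b' ∈ segment ℝ w (w + g i) := by
        rw [← hei]
        exact right_mem_segment ℝ _ _
      rw [segment_eq_image'] at hmm
      obtain ⟨θ, hθ, hθeq⟩ := hmm
      have hb'gi : tmax • b' = θ • g i := by
        have h1 := congrArg (fun z : Pt n => z - w) hθeq
        simpa [add_sub_cancel_left] using h1.symm
      refine ⟨i, θ / tmax, div_nonneg hθ.1 htmaxpos.le, ?_⟩
      calc b' = tmax⁻¹ • (tmax • b') := by
            rw [smul_smul, inv_mul_cancel₀ htmaxpos.ne', one_smul]
        _ = tmax⁻¹ • (θ • g i) := by rw [hb'gi]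
        _ = (θ / tmax) • g i := by rw [smul_smul, inv_mul_eq_div]
    -- B is contained in the cone
    have hBcone : B ⊆ coneOf g := by
      have hBcomp : IsCompact B := hYfin.isCompact_convexHull (𝕜 := ℝ)
      have hBKM := eq_hull_extremePoints hBcomp hBconv
        (hYfin.subset extremePoints_convexHull_subset)
      rw [hBKM]
      apply convexHull_min _ (convex_coneOf g)
      intro b' hb'
      obtain ⟨i, c, hc, rfl⟩ := hbase b' hb'
      exact smul_single_mem_coneOf g i hc
    -- conclusion
    intro z hz
    obtain ⟨t, ht, b, hb, hzb⟩ := hΔT z hz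
    rw [hzb]
    exact smul_mem_coneOf ht (hBcone hb)

end DisjProof
namespace DisjProof

variable {n : ℕ}

lemma sum_smul_stdVec_apply (c : Fin n → ℝ) (j : Fin n) :
    (∑ i, c i • stdVec (n := n) i) j = c j := by
  classical
  rw [Finset.sum_apply]
  have h1 : ∀ i : Fin n, (c i • stdVec i) j = if j = i then c i else 0 := by
    intro i
    simp only [Pi.smul_apply, stdVec, smul_eq_mul]
    split <;> simp
  rw [Finset.sum_congr rfl fun i _ => h1 i]
  simp

lemma eq_sum_smul_stdVec (x : Pt n) : x = ∑ i, x i • stdVec i :=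
  funext fun j => (sum_smul_stdVec_apply x j).symm

lemma ssum_sum {m : ℕ} (g : Fin m → Pt n) : ssum (∑ j, g j) = ∑ j, ssum (g j) := by
  simp only [ssum, Finset.sum_apply]
  exact Finset.sum_comm

lemma stdVec_ne_zero (i : Fin n) : stdVec (n := n) i ≠ 0 := by
  intro h
  have := congrFun h i
  simp [stdVec] at this

lemma stdVec_apply_self (i : Fin n) : stdVec (n := n) i i = 1 := by simp [stdVec]

lemma stdVec_apply_ne {i j : Fin n} (h : i ≠ j) : stdVec (n := n) j i = 0 := by
  simp [stdVec, h]

/-- Difference of two points of a segment is a multiple of the direction. -/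
lemma segment_diff {a b p q : Pt n} (hp : p ∈ segment ℝ a b)
    (hq : q ∈ segment ℝ a b) : ∃ t : ℝ, q - p = t • (b - a) := by
  rw [segment_eq_image'] at hp hq
  obtain ⟨tp, _, rfl⟩ := hp
  obtain ⟨tq, _, rfl⟩ := hq
  exact ⟨tq - tp, by module⟩

namespace Good

variable {Δ S : Set (Pt n)} {w : Pt n} {r : ℝ}

lemma phi_add_lin (G : Good Δ w r S) (z y : Pt n) :
    G.phi (z + y) = G.phi z + ssum (G.L.symm y) := by
  have h1 : z + y - w = (z - w) + y := by abel
  rw [phi, coord, h1, map_add, ssum_add]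
  rfl

/-- The edge directions of the simplex. -/
def dir (G : Good Δ w r S) (i : Fin n) : Pt n := G.L (stdVec i)

lemma symm_dir (G : Good Δ w r S) (i : Fin n) : G.L.symm (G.dir i) = stdVec i :=
  G.L.symm_apply_apply _

lemma dir_ne_zero (G : Good Δ w r S) (i : Fin n) : G.dir i ≠ 0 := by
  intro h
  have h1 : stdVec (n := n) i = 0 := by
    have := congrArg G.L.symm h
    simpa [symm_dir] using this
  exact stdVec_ne_zero i h1

lemma dir_indep (G : Good Δ w r S) {i j : Fin n} (hij : i ≠ j) (α : ℝ)
    (h : G.dir i = α • G.dir j) : False := by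
  have h1 : stdVec (n := n) i = α • stdVec j := by
    have h2 := congrArg G.L.symm h
    rwa [symm_dir, _root_.map_smul, symm_dir] at h2
  have h2 := congrFun h1 i
  rw [stdVec_apply_self, Pi.smul_apply, stdVec_apply_ne hij, smul_eq_mul, mul_zero] at h2
  exact one_ne_zero h2

lemma map_smul_stdVec (G : Good Δ w r S) (t : ℝ) (i : Fin n) :
    G.map (t • stdVec i) = w + t • G.dir i := by
  simp [map, dir, _root_.map_smul]

/-- The key points `w + t • dir i` for `t ∈ [0, r]` lie on the admissible edge. -/
lemma edge_point_mem (G : Good Δ w r S) (i : Fin n) {t : ℝ} (ht : t ∈ Set.Icc 0 r)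
    {e : Set (Pt n)} (he : (fun x => w + G.L x) '' segment ℝ 0 (r • stdVec i) ⊆ e) :
    w + t • G.dir i ∈ e := by
  apply he
  refine ⟨t • stdVec i, ?_, by rw [← map_smul_stdVec]; rfl⟩
  rw [segment_eq_image']
  refine ⟨t / r, ⟨div_nonneg ht.1 G.hr.le, by rw [div_le_one G.hr]; exact ht.2⟩, ?_⟩
  simp only [zero_add, sub_zero, smul_smul]
  rw [div_mul_cancel₀ _ G.hr.ne']

/-- For `n ≥ 2` the center of an admissible simplex is an extreme point. -/
lemma center_extreme (G : Good Δ w r S) (hn : 2 ≤ n) : w ∈ Set.extremePoints ℝ Δ := by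
  set i0 : Fin n := ⟨0, by omega⟩ with hi0
  set i1 : Fin n := ⟨1, by omega⟩ with hi1
  have hne01 : i0 ≠ i1 := by
    intro h
    have := congrArg Fin.val h
    simp [hi0, hi1] at this
  obtain ⟨e₀, he₀, hwe₀, hsub₀⟩ := G.hedges i0
  obtain ⟨e₁, he₁, hwe₁, hsub₁⟩ := G.hedges i1
  have hq₀ : w + r • G.dir i0 ∈ e₀ := G.edge_point_mem i0 ⟨G.hr.le, le_refl r⟩ hsub₀
  have hq₁ : w + r • G.dir i1 ∈ e₁ := G.edge_point_mem i1 ⟨G.hr.le, le_refl r⟩ hsub₁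
  obtain ⟨α₀, β₀, hab₀, heq₀, hext₀⟩ := he₀
  obtain ⟨α₁, β₁, hab₁, heq₁, hext₁⟩ := he₁
  have hwΔ : w ∈ Δ := hext₀.1 hwe₀
  have claim : ∀ x : Pt n, x ∈ e₀ → x ∈ e₁ → x = w := by
    intro x hx₀ hx₁
    by_contra hxw
    rw [heq₀] at hx₀ hwe₀ hq₀
    rw [heq₁] at hx₁ hwe₁ hq₁
    obtain ⟨t₀, ht₀⟩ := segment_diff hwe₀ hx₀
    obtain ⟨s₀, hs₀⟩ := segment_diff hwe₀ hq₀
    obtain ⟨t₁, ht₁⟩ := segment_diff hwe₁ hx₁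
    obtain ⟨s₁, hs₁⟩ := segment_diff hwe₁ hq₁
    rw [add_sub_cancel_left] at hs₀ hs₁
    have hs₀ne : s₀ ≠ 0 := by
      intro h0
      rw [h0, zero_smul] at hs₀
      rcases smul_eq_zero.1 hs₀ with h | h
      · exact G.hr.ne' h
      · exact G.dir_ne_zero i0 h
    have hs₁ne : s₁ ≠ 0 := by
      intro h0
      rw [h0, zero_smul] at hs₁
      rcases smul_eq_zero.1 hs₁ with h | h
      · exact G.hr.ne' h
      · exact G.dir_ne_zero i1 h
    have hx₀' : x - w = (t₀ * (s₀⁻¹ * r)) • G.dir i0 := by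
      have hu₀ : β₀ - α₀ = s₀⁻¹ • (r • G.dir i0) := by
        rw [hs₀, smul_smul, inv_mul_cancel₀ hs₀ne, one_smul]
      rw [ht₀, hu₀, smul_smul, smul_smul, mul_assoc]
    have hx₁' : x - w = (t₁ * (s₁⁻¹ * r)) • G.dir i1 := by
      have hu₁ : β₁ - α₁ = s₁⁻¹ • (r • G.dir i1) := by
        rw [hs₁, smul_smul, inv_mul_cancel₀ hs₁ne, one_smul]
      rw [ht₁, hu₁, smul_smul, smul_smul, mul_assoc]
    set c₀ := t₀ * (s₀⁻¹ * r) with hc₀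
    set c₁ := t₁ * (s₁⁻¹ * r) with hc₁
    have hc₀ne : c₀ ≠ 0 := by
      intro h0
      rw [h0, zero_smul] at hx₀'
      exact hxw (by rw [← sub_eq_zero]; exact hx₀')
    apply G.dir_indep hne01 (c₁ / c₀)
    have : c₀ • G.dir i0 = c₁ • G.dir i1 := by rw [← hx₀', ← hx₁']
    calc G.dir i0 = c₀⁻¹ • (c₀ • G.dir i0) := by
          rw [smul_smul, inv_mul_cancel₀ hc₀ne, one_smul]
      _ = c₀⁻¹ • (c₁ • G.dir i1) := by rw [this]
      _ = (c₁ / c₀) • G.dir i1 := by rw [smul_smul, inv_mul_eq_div]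
  rw [mem_extremePoints]
  refine ⟨hwΔ, ?_⟩
  intro x₁ hx₁ x₂ hx₂ hopen
  obtain ⟨hm₀₁, hm₀₂⟩ := And.intro (hext₀.2 hx₁ hx₂ hwe₀ hopen) (hext₀.right_mem_of_mem_openSegment hx₁ hx₂ hwe₀ hopen)
  obtain ⟨hm₁₁, hm₁₂⟩ := And.intro (hext₁.2 hx₁ hx₂ hwe₁ hopen) (hext₁.right_mem_of_mem_openSegment hx₁ hx₂ hwe₁ hopen)
  exact ⟨claim x₁ hm₀₁ hm₁₁, claim x₂ hm₀₂ hm₁₂⟩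

/-- Corner coordinates are nonnegative on all of `Δ`. -/
lemma coord_nonneg_on (G : Good Δ w r S) (hΔ : IsDelzant Δ)
    (hw : w ∈ Set.extremePoints ℝ Δ) :
    ∀ z ∈ Δ, ∀ i, 0 ≤ G.coord z i := by
  classical
  obtain ⟨hcomp, hconv, hint, hfin, hEne, hvert⟩ := hΔ
  obtain ⟨u, t, hdet, htpos, hedges', hcompl⟩ := hvert w hw
  set gvec : Fin n → Pt n := fun k => t k • ivec (u k) with hg
  have hcone := corner_lemma hcomp hconv hfin hw gvec hcompl
  have hmatch : ∀ i : Fin n, ∃ (k : Fin n) (θ : ℝ), 0 < θ ∧ G.dir i = θ • gvec k := by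
    intro i
    obtain ⟨e, he, hwe, hsub⟩ := G.hedges i
    obtain ⟨k, hk⟩ := hcompl e he hwe
    have hq : w + r • G.dir i ∈ segment ℝ w (w + gvec k) := by
      have h1 := G.edge_point_mem i ⟨G.hr.le, le_refl r⟩ hsub
      rw [hk] at h1
      exact h1
    rw [segment_eq_image'] at hq
    obtain ⟨θ, hθ, hθeq⟩ := hq
    have hrd : θ • gvec k = r • G.dir i := by
      have h1 := congrArg (fun z : Pt n => z - w) hθeq
      simpa [add_sub_cancel_left] using h1
    have hθne : θ ≠ 0 := by
      intro h0
      rw [h0, zero_smul] at hrd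
      rcases smul_eq_zero.1 hrd.symm with h | h
      · exact G.hr.ne' h
      · exact G.dir_ne_zero i h
    refine ⟨k, θ / r, div_pos (lt_of_le_of_ne hθ.1 (Ne.symm hθne)) G.hr, ?_⟩
    calc G.dir i = r⁻¹ • (r • G.dir i) := by
          rw [smul_smul, inv_mul_cancel₀ G.hr.ne', one_smul]
      _ = r⁻¹ • (θ • gvec k) := by rw [hrd]
      _ = (θ / r) • gvec k := by rw [smul_smul, inv_mul_eq_div]
  choose k θ hθpos hdirk using hmatch
  have hkinj : Function.Injective k := by
    intro i j hij
    by_contra hne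
    apply G.dir_indep hne (θ i / θ j)
    rw [hdirk i, hdirk j, hij]
    conv_rhs => rw [smul_smul, div_mul_cancel₀ (θ i) (hθpos j).ne']
  have hkbij : Function.Bijective k := Finite.injective_iff_bijective.1 hkinj
  intro z hz i
  obtain ⟨a, ha, hza⟩ := hcone z hz
  have hre : z - w = ∑ j, (a (k j) / θ j) • G.dir j := by
    rw [hza]
    rw [← Fintype.sum_bijective k hkbij (fun j => a (k j) • gvec (k j))
      (fun m => a m • gvec m) (fun j => rfl)]
    congr 1
    funext j
    conv_rhs => rw [hdirk j, smul_smul, div_mul_cancel₀ (a (k j)) (hθpos j).ne']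
  have hcz : G.coord z = ∑ j, (a (k j) / θ j) • stdVec j := by
    rw [coord, hre, map_sum]
    congr 1
    funext j
    rw [_root_.map_smul, symm_dir]
  rw [hcz, sum_smul_stdVec_apply]
  exact div_nonneg (ha _) (hθpos i).le

end Good

end DisjProof
namespace DisjProof

lemma ssum_fin_one (x : Pt 1) : ssum x = x 0 := by
  simp [ssum]

namespace Good

variable {Δ S : Set (Pt 1)} {w : Pt 1} {r : ℝ}

lemma coord_eq_phi (G : Good Δ w r S) (z : Pt 1) (i : Fin 1) :
    G.coord z i = G.phi z := by
  have h : i = 0 := Subsingleton.elim i 0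
  rw [h, phi, ssum_fin_one]

lemma phi_inj (G : Good Δ w r S) {a b : Pt 1} (h : G.phi a = G.phi b) : a = b := by
  have h1 : G.coord a = G.coord b := funext fun i => by
    rw [coord_eq_phi, coord_eq_phi, h]
  have h2 := congrArg G.map h1
  rwa [map_coord, map_coord] at h2

lemma coord_eq_smul_stdVec (G : Good Δ w r S) (z : Pt 1) :
    G.coord z = G.phi z • stdVec 0 := by
  funext i
  rw [coord_eq_phi]
  have h : i = 0 := Subsingleton.elim i 0
  rw [h, Pi.smul_apply, stdVec_apply_self, smul_eq_mul, mul_one]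

lemma phi_map' (G : Good Δ w r S) (x : Pt 1) : G.phi (G.map x) = ssum x := by
  rw [phi, coord_map]

end Good

variable {n : ℕ}

lemma Good.phi_map {Δ S : Set (Pt n)} {w : Pt n} {r : ℝ} (G : Good Δ w r S) (x : Pt n) :
    G.phi (G.map x) = ssum x := by
  rw [phi, coord_map]

/-- The value of `G.phi` along the `j`-th model edge of `G₀`. -/
lemma phi_on_edge {Δ S₀ S : Set (Pt n)} {v w : Pt n} {r₀ r' : ℝ}
    (G₀ : Good Δ v r₀ S₀) (G : Good Δ w r' S) (j : Fin n) (t : ℝ) :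
    G.phi (G₀.map (t • stdVec j)) = G.phi v + t * ssum (G.L.symm (G₀.dir j)) := by
  rw [G₀.map_smul_stdVec, G.phi_add_lin, _root_.map_smul, ssum_smul]

/-- Common final step: two suitable parameters along a model edge give an edge of `Δ`
through `v` on which the closures overlap in at least two points. -/
lemma two_points_on_edge {Δ S₀ S : Set (Pt n)} {v w : Pt n} {r₀ r' : ℝ}
    (hΔcl : IsClosed Δ) (G₀ : Good Δ v r₀ S₀) (G : Good Δ w r' S) (j : Fin n)
    {t₀ t₁ : ℝ} (h0 : t₀ ∈ Set.Icc 0 r₀) (h1 : t₁ ∈ Set.Icc 0 r₀) (hne : t₀ ≠ t₁)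
    (hcf : ∀ t, t = t₀ ∨ t = t₁ →
      (∀ i, 0 ≤ G.coord (G₀.map (t • stdVec j)) i) ∧
        G.phi (G₀.map (t • stdVec j)) ≤ r') :
    ∃ e, IsEdge Δ e ∧ v ∈ e ∧ ¬ (closure S₀ ∩ closure S ∩ e).Subsingleton := by
  obtain ⟨e, he, hve, hsub⟩ := G₀.hedges j
  refine ⟨e, he, hve, ?_⟩
  intro hss
  set z₀ := G₀.map (t₀ • stdVec j) with hz₀
  set z₁ := G₀.map (t₁ • stdVec j) with hz₁
  have hmem : ∀ t, t = t₀ ∨ t = t₁ → G₀.map (t • stdVec j) ∈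
      closure S₀ ∩ closure S ∩ e := by
    intro t htt
    have htIcc : t ∈ Set.Icc 0 r₀ := by rcases htt with rfl | rfl <;> assumption
    refine ⟨⟨?_, ?_⟩, ?_⟩
    · rw [G₀.mem_closure_iff, G₀.coord_map]
      constructor
      · intro i
        rw [Pi.smul_apply, smul_eq_mul]
        rcases eq_or_ne i j with rfl | hij
        · rw [stdVec_apply_self, mul_one]; exact htIcc.1
        · rw [stdVec_apply_ne hij, mul_zero]
      · rw [ssum_smul, ssum_stdVec, mul_one]; exact htIcc.2
    · rw [G.mem_closure_iff]
      exact ⟨(hcf t htt).1, (hcf t htt).2⟩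
    · rw [G₀.map_smul_stdVec]
      exact G₀.edge_point_mem j htIcc hsub
  have hzz : z₀ = z₁ := hss (hmem t₀ (Or.inl rfl)) (hmem t₁ (Or.inr rfl))
  apply hne
  have h2 := G₀.map_inj hzz
  have h3 := congrFun h2 j
  simpa [Pi.smul_apply, stdVec_apply_self] using h3

/-- Backward direction: two distinct common closure points on an edge through `v`
force the simplices to intersect. -/
lemma not_disjoint_of_two {Δ S₀ S : Set (Pt n)} {v w : Pt n} {r₀ r' : ℝ}
    (hΔ : IsDelzant Δ) (G₀ : Good Δ v r₀ S₀) (G : Good Δ w r' S)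
    {e : Set (Pt n)} (he : IsEdge Δ e) (hve : v ∈ e)
    {a b : Pt n} (hab : a ≠ b)
    (ha : a ∈ closure S₀ ∩ closure S ∩ e) (hb : b ∈ closure S₀ ∩ closure S ∩ e) :
    ¬ Disjoint S₀ S := by
  have hψa := G₀.phi_le_of_mem_closure ha.1.1
  have hψb := G₀.phi_le_of_mem_closure hb.1.1
  have hφa := G.phi_le_of_mem_closure ha.1.2
  have hφb := G.phi_le_of_mem_closure hb.1.2
  -- not both ψ-values equal r₀
  have hstep1 : ¬ (G₀.phi a = r₀ ∧ G₀.phi b = r₀) := by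
    rintro ⟨h1, h2⟩
    obtain ⟨α, β, hαβ, heq, hext⟩ := he
    rw [heq] at ha hb hve
    obtain ⟨ta, hta⟩ := segment_diff hve ha.2
    obtain ⟨tb, htb⟩ := segment_diff hve hb.2
    have haeq : a = v + ta • (β - α) := by rw [← hta]; abel
    have hbeq : b = v + tb • (β - α) := by rw [← htb]; abel
    set K := ssum (G₀.L.symm (β - α)) with hK
    have hψa' : G₀.phi a = ta * K := by
      rw [haeq, G₀.phi_add_lin, G₀.phi_center, _root_.map_smul, ssum_smul, zero_add]
    have hψb' : G₀.phi b = tb * K := by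
      rw [hbeq, G₀.phi_add_lin, G₀.phi_center, _root_.map_smul, ssum_smul, zero_add]
    have hKne : K ≠ 0 := by
      intro h0
      rw [h0, mul_zero] at hψa'
      rw [hψa'] at h1
      exact G₀.hr.ne h1
    have htab : ta = tb := by
      have : ta * K = tb * K := by rw [← hψa', ← hψb', h1, h2]
      exact mul_right_cancel₀ hKne this
    apply hab
    rw [haeq, hbeq, htab]
  have hψsum : G₀.phi a + G₀.phi b < 2 * r₀ := by
    rcases lt_or_eq_of_le hψa with h | h
    · linarith
    · rcases lt_or_eq_of_le hψb with h' | h'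
      · linarith
      · exact absurd ⟨h, h'⟩ hstep1
  -- the midpoint
  set m := a + (1/2 : ℝ) • (b - a) with hm
  have hψm : G₀.phi m < r₀ := by
    rw [hm, G₀.phi_affine]
    linarith
  have hφm : G.phi m ≤ r' := by
    rw [hm, G.phi_affine]
    linarith
  have hcm₀ : ∀ i, 0 ≤ G₀.coord m i := by
    intro i
    rw [hm, G₀.coord_affine]
    have h1 := G₀.coord_nonneg_of_mem_closure ha.1.1 i
    have h2 := G₀.coord_nonneg_of_mem_closure hb.1.1 i
    simp only [Pi.add_apply, Pi.smul_apply, Pi.sub_apply, smul_eq_mul]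
    linarith
  have hcm : ∀ i, 0 ≤ G.coord m i := by
    intro i
    rw [hm, G.coord_affine]
    have h1 := G.coord_nonneg_of_mem_closure ha.1.2 i
    have h2 := G.coord_nonneg_of_mem_closure hb.1.2 i
    simp only [Pi.add_apply, Pi.smul_apply, Pi.sub_apply, smul_eq_mul]
    linarith
  have hm₀ : m ∈ S₀ := G₀.mem_of_coord hcm₀ hψm
  rw [Set.not_disjoint_iff]
  rcases le_or_gt 2 n with hn2 | hn2
  · -- dimension at least 2 : slide towards the center of S
    have hcorner₀ := G₀.coord_nonneg_on hΔ (G₀.center_extreme hn2)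
    set D := G₀.phi w - G₀.phi m with hD
    set P := r₀ - G₀.phi m with hP
    have hPpos : 0 < P := by rw [hP]; linarith
    set t : ℝ := max (1/2) (1 - P / (2 * (|D| + 1))) with ht
    have ht0 : 0 < t := lt_of_lt_of_le (by norm_num) (le_max_left _ _)
    have ht1 : t < 1 := by
      apply max_lt (by norm_num)
      have : 0 < P / (2 * (|D| + 1)) := by positivity
      linarith
    have ht' : 1 - t ≤ P / (2 * (|D| + 1)) := by
      have := le_max_right (1/2 : ℝ) (1 - P / (2 * (|D| + 1)))
      linarith [this.trans (le_refl t)]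
    set pt := w + t • (m - w) with hpt
    have hcoordpt : G.coord pt = t • G.coord m := by
      rw [hpt, G.coord_affine, G.coord_center]
      funext i
      simp
    have hφpt : G.phi pt = t * G.phi m := by
      rw [hpt, G.phi_affine, G.phi_center]
      ring
    have hptS : pt ∈ S := by
      apply G.mem_of_coord
      · intro i
        rw [hcoordpt, Pi.smul_apply, smul_eq_mul]
        exact mul_nonneg ht0.le (hcm i)
      · rw [hφpt]
        calc t * G.phi m ≤ t * r' := mul_le_mul_of_nonneg_left hφm ht0.le
          _ < 1 * r' := mul_lt_mul_of_pos_right ht1 G.hr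
          _ = r' := one_mul r'
    have hptΔ : pt ∈ Δ := G.hsub hptS
    have hψpt : G₀.phi pt < r₀ := by
      rw [hpt, G₀.phi_affine]
      have habs : (1 - t) * D < P := by
        have h1 : (1 - t) * D ≤ (1 - t) * |D| :=
          mul_le_mul_of_nonneg_left (le_abs_self D) (by linarith)
        have h2 : (1 - t) * |D| ≤ (P / (2 * (|D| + 1))) * |D| :=
          mul_le_mul_of_nonneg_right ht' (abs_nonneg D)
        have h3 : (P / (2 * (|D| + 1))) * |D| < P := by
          rw [div_mul_eq_mul_div, div_lt_iff₀ (by positivity)]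
          nlinarith [abs_nonneg D, hPpos]
        linarith
      have hexp : G₀.phi w + t * (G₀.phi m - G₀.phi w) = G₀.phi m + (1 - t) * D := by
        rw [hD]; ring
      rw [hexp]
      rw [hP] at habs
      linarith
    have hpt₀ : pt ∈ S₀ := G₀.mem_of_coord (fun i => hcorner₀ pt hptΔ i) hψpt
    exact ⟨pt, hpt₀, hptS⟩
  · -- dimension 1 : the midpoint itself works
    interval_cases n
    · have hφ0 : G.phi m < r' := by
        have h0 : G.phi m = 0 := by
          rw [Good.phi]
          simp [ssum]
        rw [h0]
        exact G.hr
      exact ⟨m, hm₀, G.mem_of_coord (fun i => i.elim0) hφ0⟩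
    · -- n = 1
      have hstep1' : ¬ (G.phi a = r' ∧ G.phi b = r') := by
        rintro ⟨h1, h2⟩
        exact hab (G.phi_inj (by rw [h1, h2]))
      have hφsum : G.phi a + G.phi b < 2 * r' := by
        rcases lt_or_eq_of_le hφa with h | h
        · linarith
        · rcases lt_or_eq_of_le hφb with h' | h'
          · linarith
          · exact absurd ⟨h, h'⟩ hstep1'
      have hφm' : G.phi m < r' := by
        rw [hm, G.phi_affine]
        linarith
      have hmS : m ∈ S := G.mem_of_coord hcm hφm'
      exact ⟨m, hm₀, hmS⟩

end DisjProof
namespace DisjProof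

variable {n : ℕ}

/-- Forward direction: if the simplices intersect, some edge of `Δ` through `v`
carries two distinct points of the intersection of the closures. -/
lemma exists_edge_two_points {Δ S₀ S : Set (Pt n)} {v w : Pt n} {r₀ r' : ℝ}
    (hΔ : IsDelzant Δ) (G₀ : Good Δ v r₀ S₀) (G : Good Δ w r' S) (hvw : v ≠ w)
    (hn : 0 < n) {p : Pt n} (hp₀ : p ∈ S₀) (hp : p ∈ S) :
    ∃ e, IsEdge Δ e ∧ v ∈ e ∧ ¬ (closure S₀ ∩ closure S ∩ e).Subsingleton := by
  classical
  have hΔcl : IsClosed Δ := hΔ.1.isClosed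
  have hφp : G.phi p < r' := ((G.mem_S_iff p).1 hp).2
  have hφp0 : 0 ≤ G.phi p := ssum_nonneg ((G.mem_S_iff p).1 hp).1
  rcases le_or_gt 2 n with hn2 | hn2
  · -- case n ≥ 2
    have hcornerw := G.coord_nonneg_on hΔ (G.center_extreme hn2)
    set x := G₀.coord p with hx
    have hxM : x ∈ Mset n r₀ := (G₀.mem_S_iff p).1 hp₀
    set γ : Fin n → ℝ := fun j => ssum (G.L.symm (G₀.dir j)) with hγ
    -- the affine expansion of φ over the corner simplex of S₀
    have keyA : G.phi p = G.phi v + ∑ j, x j * γ j := by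
      have h1 : p = v + G₀.L x := by
        conv_lhs => rw [← G₀.map_coord p]
        rfl
      have h2 : G₀.L x = ∑ j, x j • G₀.dir j := by
        conv_lhs => rw [eq_sum_smul_stdVec x]
        rw [map_sum]
        congr 1
        funext j
        rw [_root_.map_smul]
        rfl
      rw [h1, G.phi_add_lin, h2, map_sum]
      congr 1
      rw [ssum_sum]
      congr 1
      funext j
      rw [_root_.map_smul, ssum_smul]
    -- find a parameter t₀ on some model edge with φ-value < r'
    have hstep : ∃ (j : Fin n) (t₀ : ℝ), t₀ ∈ Set.Icc 0 r₀ ∧ G.phi v + t₀ * γ j < r' := by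
      by_cases hφv : G.phi v < r'
      · exact ⟨⟨0, hn⟩, 0, ⟨le_refl 0, G₀.hr.le⟩, by rw [zero_mul, add_zero]; exact hφv⟩
      · push_neg at hφv
        have hsumneg : ∑ j, x j * γ j < 0 := by
          have := keyA
          linarith
        have hγneg : ∃ j, γ j < 0 := by
          by_contra hall
          push_neg at hall
          have : (0:ℝ) ≤ ∑ j, x j * γ j :=
            Finset.sum_nonneg fun j _ => mul_nonneg (hxM.1 j) (hall j)
          linarith
        obtain ⟨j₀, hj₀⟩ := hγneg
        obtain ⟨jm, _, hjm⟩ := Finset.exists_min_image Finset.univ γ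
          ⟨j₀, Finset.mem_univ j₀⟩
        have hjmneg : γ jm < 0 := lt_of_le_of_lt (hjm j₀ (Finset.mem_univ j₀)) hj₀
        have hb1 : (ssum x) * γ jm ≤ ∑ j, x j * γ j := by
          rw [ssum, Finset.sum_mul]
          apply Finset.sum_le_sum
          intro j _
          exact mul_le_mul_of_nonneg_left (hjm j (Finset.mem_univ j)) (hxM.1 j)
        have hb2 : r₀ * γ jm ≤ (ssum x) * γ jm :=
          mul_le_mul_of_nonpos_right hxM.2.le hjmneg.le
        refine ⟨jm, r₀, ⟨G₀.hr.le, le_refl r₀⟩, ?_⟩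
        have : G.phi v + r₀ * γ jm ≤ G.phi v + ∑ j, x j * γ j := by linarith
        rw [← keyA] at this
        linarith
    obtain ⟨j, t₀, ht₀Icc, hval₀⟩ := hstep
    -- choose a second parameter
    set δ : ℝ := (min ((r' - (G.phi v + t₀ * γ j)) / (|γ j| + 1)) r₀) / 2 with hδ
    have hδpos : 0 < δ := by
      apply div_pos _ (by norm_num)
      apply lt_min
      · apply div_pos (by linarith) (by positivity)
      · exact G₀.hr
    have hδle : δ ≤ r₀ / 2 := by
      rw [hδ]
      have := min_le_right ((r' - (G.phi v + t₀ * γ j)) / (|γ j| + 1)) r₀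
      linarith
    have hδγ : δ * |γ j| < r' - (G.phi v + t₀ * γ j) := by
      have h1 : δ ≤ (r' - (G.phi v + t₀ * γ j)) / (|γ j| + 1) := by
        rw [hδ]
        have h2 := min_le_left ((r' - (G.phi v + t₀ * γ j)) / (|γ j| + 1)) r₀
        have h3 : 0 < (r' - (G.phi v + t₀ * γ j)) / (|γ j| + 1) := by
          apply div_pos (by linarith) (by positivity)
        linarith
      have h4 : δ * |γ j| ≤ ((r' - (G.phi v + t₀ * γ j)) / (|γ j| + 1)) * |γ j| :=
        mul_le_mul_of_nonneg_right h1 (abs_nonneg _)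
      have h5 : ((r' - (G.phi v + t₀ * γ j)) / (|γ j| + 1)) * |γ j|
          < r' - (G.phi v + t₀ * γ j) := by
        rw [div_mul_eq_mul_div, div_lt_iff₀ (by positivity)]
        nlinarith [abs_nonneg (γ j)]
      linarith
    set t₁ : ℝ := if t₀ ≤ r₀ / 2 then t₀ + δ else t₀ - δ with ht₁
    have ht₁Icc : t₁ ∈ Set.Icc 0 r₀ := by
      rw [ht₁]
      split
      · constructor
        · linarith [ht₀Icc.1]
        · next h => linarith
      · constructor
        · next h => push_neg at h; linarith
        · linarith [ht₀Icc.2]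
    have htne : t₀ ≠ t₁ := by
      rw [ht₁]
      split <;> intro h <;> linarith [hδpos]
    have hval₁ : G.phi v + t₁ * γ j < r' := by
      have hds : t₁ * γ j - t₀ * γ j ≤ δ * |γ j| := by
        rw [ht₁]
        split
        · have : (t₀ + δ) * γ j - t₀ * γ j = δ * γ j := by ring
          rw [this]
          exact mul_le_mul_of_nonneg_left (le_abs_self _) hδpos.le
        · have h2 : (t₀ - δ) * γ j - t₀ * γ j = δ * (-γ j) := by ring
          rw [h2]
          exact mul_le_mul_of_nonneg_left (neg_le_abs _) hδpos.le
      linarith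
    -- apply the common construction
    apply two_points_on_edge hΔcl G₀ G j ht₀Icc ht₁Icc htne
    intro t htt
    have hval : G.phi (G₀.map (t • stdVec j)) < r' := by
      rw [phi_on_edge G₀ G]
      rcases htt with rfl | rfl
      · exact hval₀
      · exact hval₁
    have htIcc : t ∈ Set.Icc 0 r₀ := by rcases htt with rfl | rfl <;> assumption
    have hmemΔ : G₀.map (t • stdVec j) ∈ Δ := by
      apply G₀.closure_subset hΔcl
      rw [G₀.mem_closure_iff, G₀.coord_map]
      constructor
      · intro i
        rw [Pi.smul_apply, smul_eq_mul]
        rcases eq_or_ne i j with rfl | hij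
        · rw [stdVec_apply_self, mul_one]; exact htIcc.1
        · rw [stdVec_apply_ne hij, mul_zero]
      · rw [ssum_smul, ssum_stdVec, mul_one]; exact htIcc.2
    exact ⟨fun i => hcornerw _ hmemΔ i, hval.le⟩
  · -- case n = 1
    interval_cases n
    · -- n = 1. here coordinates are 1-dimensional
      set cp := G₀.phi p with hcp
      have hcp0 : 0 ≤ cp := ssum_nonneg ((G₀.mem_S_iff p).1 hp₀).1
      have hcpr : cp < r₀ := ((G₀.mem_S_iff p).1 hp₀).2
      set κ := ssum (G.L.symm (G₀.dir 0)) with hκ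
      have hpmap : p = G₀.map (cp • stdVec 0) := by
        conv_lhs => rw [← G₀.map_coord p]
        congr 1
        rw [G₀.coord_eq_smul_stdVec, hcp]
      have hφform : ∀ t : ℝ, G.phi (G₀.map (t • stdVec 0)) = G.phi p + (t - cp) * κ := by
        intro t
        rw [phi_on_edge G₀ G, ← hκ]
        have h2 : G.phi p = G.phi v + cp * κ := by
          rw [hpmap, phi_on_edge G₀ G, ← hκ]
        rw [h2]
        ring
      -- choose a shift s
      have hchoice : ∃ s : ℝ, s ≠ 0 ∧ (0 ≤ cp + s ∧ cp + s < r₀) ∧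
          (0 ≤ G.phi p + s * κ ∧ G.phi p + s * κ ≤ r') := by
        rcases le_or_gt 0 κ with hκ0 | hκ0
        · refine ⟨min ((r₀ - cp)/2) ((r' - G.phi p)/(κ+1)), ?_, ⟨?_, ?_⟩, ⟨?_, ?_⟩⟩
          · have : 0 < min ((r₀ - cp)/2) ((r' - G.phi p)/(κ+1)) := by
              apply lt_min
              · linarith
              · apply div_pos (by linarith) (by linarith)
            linarith
          · have : 0 < min ((r₀ - cp)/2) ((r' - G.phi p)/(κ+1)) := by
              apply lt_min (by linarith) (div_pos (by linarith) (by linarith))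
            linarith
          · have := min_le_left ((r₀ - cp)/2) ((r' - G.phi p)/(κ+1))
            linarith
          · have : 0 < min ((r₀ - cp)/2) ((r' - G.phi p)/(κ+1)) := by
              apply lt_min (by linarith) (div_pos (by linarith) (by linarith))
            nlinarith
          · have h1 := min_le_right ((r₀ - cp)/2) ((r' - G.phi p)/(κ+1))
            have h2 : min ((r₀ - cp)/2) ((r' - G.phi p)/(κ+1)) * κ
                ≤ ((r' - G.phi p)/(κ+1)) * κ := mul_le_mul_of_nonneg_right h1 hκ0
            have h3 : ((r' - G.phi p)/(κ+1)) * κ ≤ r' - G.phi p := by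
              rw [div_mul_eq_mul_div, div_le_iff₀ (by linarith)]
              nlinarith
            linarith
        · rcases lt_or_eq_of_le hφp0 with hφpos | hφzero
          · -- κ < 0, 0 < φ p
            refine ⟨min ((r₀ - cp)/2) (G.phi p/(2*(-κ))), ?_, ⟨?_, ?_⟩, ⟨?_, ?_⟩⟩
            all_goals
              have hmin : 0 < min ((r₀ - cp)/2) (G.phi p/(2*(-κ))) := by
                apply lt_min (by linarith) (div_pos (by linarith) (by linarith))
            · linarith
            · linarith
            · have := min_le_left ((r₀ - cp)/2) (G.phi p/(2*(-κ)))
              linarith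
            · have h1 := min_le_right ((r₀ - cp)/2) (G.phi p/(2*(-κ)))
              have h2 : min ((r₀ - cp)/2) (G.phi p/(2*(-κ))) * (-κ)
                  ≤ (G.phi p/(2*(-κ))) * (-κ) := mul_le_mul_of_nonneg_right h1 (by linarith)
              have h3 : (G.phi p/(2*(-κ))) * (-κ) = G.phi p / 2 := by
                have hκne : κ ≠ 0 := ne_of_lt hκ0
                field_simp
                try ring
              nlinarith
            · nlinarith
          · -- κ < 0, φ p = 0 ; then p = w and cp > 0
            have hpw : p = w := by
              have hc0 : G.coord p = 0 := by
                rw [G.coord_eq_smul_stdVec, ← hφzero, zero_smul]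
              have := congrArg G.map hc0
              rwa [G.map_coord, Good.map, map_zero, add_zero] at this
            have hcppos : 0 < cp := by
              rcases lt_or_eq_of_le hcp0 with h | h
              · exact h
              · exfalso
                apply hvw
                have hc0 : G₀.coord p = 0 := by
                  rw [G₀.coord_eq_smul_stdVec, ← hcp, ← h, zero_smul]
                have h2 := congrArg G₀.map hc0
                rw [G₀.map_coord, Good.map, map_zero, add_zero] at h2
                rw [← h2, hpw]
            refine ⟨-(min (cp/2) (r'/(2*(-κ)))), ?_, ⟨?_, ?_⟩, ⟨?_, ?_⟩⟩
            all_goals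
              have hmin : 0 < min (cp/2) (r'/(2*(-κ))) := by
                apply lt_min (by linarith) (div_pos G.hr (by linarith))
            · intro h
              rw [neg_eq_zero] at h
              linarith
            · have := min_le_left (cp/2) (r'/(2*(-κ)))
              linarith
            · linarith
            · have : -(min (cp/2) (r'/(2*(-κ)))) * κ = min (cp/2) (r'/(2*(-κ))) * (-κ) := by
                ring
              rw [← hφzero, zero_add, this]
              exact mul_nonneg hmin.le (by linarith)
            · have h1 := min_le_right (cp/2) (r'/(2*(-κ)))
              have h2 : min (cp/2) (r'/(2*(-κ))) * (-κ) ≤ (r'/(2*(-κ))) * (-κ) :=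
                mul_le_mul_of_nonneg_right h1 (by linarith)
              have h3 : (r'/(2*(-κ))) * (-κ) = r' / 2 := by
                have hκne : κ ≠ 0 := ne_of_lt hκ0
                field_simp
                try ring
              have h4 : -(min (cp/2) (r'/(2*(-κ)))) * κ = min (cp/2) (r'/(2*(-κ))) * (-κ) := by
                ring
              rw [← hφzero, zero_add, h4]
              linarith [G.hr]
      obtain ⟨s, hs0, ⟨hcs0, hcsr⟩, ⟨hφs0, hφsr⟩⟩ := hchoice
      apply two_points_on_edge (hΔ.1.isClosed) G₀ G 0
        (t₀ := cp) (t₁ := cp + s) ⟨hcp0, hcpr.le⟩ ⟨hcs0, hcsr.le⟩ (by intro h; apply hs0; linarith)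
      intro t htt
      have hφt : G.phi (G₀.map (t • stdVec 0)) = G.phi p + (t - cp) * κ := hφform t
      have hgoals : 0 ≤ G.phi (G₀.map (t • stdVec 0)) ∧ G.phi (G₀.map (t • stdVec 0)) ≤ r' := by
        rw [hφt]
        rcases htt with rfl | rfl
        · simp only [sub_self, zero_mul, add_zero]
          exact ⟨hφp0, hφp.le⟩
        · have : cp + s - cp = s := by ring
          rw [this]
          exact ⟨hφs0, hφsr⟩
      refine ⟨?_, hgoals.2⟩
      intro i
      rw [G.coord_eq_phi]
      exact hgoals.1

end DisjProof

/-- **Disjointness condition.** Let `Δ ⊆ ℝⁿ` be a Delzant polytope and `𝒮`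
a finite family of admissible simplices in `Δ` with pairwise distinct centers `c`.  Fix
`S₀ ∈ 𝒮` with center `v = c S₀`.  Then `S₀` is disjoint from every other member of `𝒮` if
and only if for every other member `S` and every edge `e` of `Δ` meeting `v`, the set
`cl(S₀) ∩ cl(S) ∩ e` contains at most one point. -/
theorem disjointness_condition {n : ℕ} (Δ : Set (Pt n)) (hΔ : IsDelzant Δ)
    (𝒮 : Finset (Set (Pt n))) (c : Set (Pt n) → Pt n) (rad : Set (Pt n) → ℝ)
    (hadm : ∀ S ∈ 𝒮, IsAdmissibleSimplex Δ (c S) (rad S) S)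
    (hcinj : Set.InjOn c ↑𝒮)
    (S₀ : Set (Pt n)) (hS₀ : S₀ ∈ 𝒮) :
    (∀ S ∈ 𝒮, S ≠ S₀ → Disjoint S₀ S) ↔
    (∀ S ∈ 𝒮, S ≠ S₀ → ∀ e, IsEdge Δ e → c S₀ ∈ e →
      (closure S₀ ∩ closure S ∩ e).Subsingleton) := by
  rcases Nat.eq_zero_or_pos n with hn0 | hn
  · subst hn0
    have hall : ∀ S ∈ 𝒮, S ≠ S₀ → False := by
      intro S hS hne
      apply hne
      apply hcinj hS hS₀
      funext i
      exact i.elim0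
    constructor
    · intro _ S hS hne
      exact (hall S hS hne).elim
    · intro _ S hS hne
      exact (hall S hS hne).elim
  · obtain ⟨G₀⟩ := DisjProof.good_of_adm (hadm S₀ hS₀)
    constructor
    · intro hdis S hS hne e he hve
      obtain ⟨G⟩ := DisjProof.good_of_adm (hadm S hS)
      by_contra hns
      rw [Set.not_subsingleton_iff] at hns
      obtain ⟨a, ha, b, hb, hab⟩ := hns
      exact (DisjProof.not_disjoint_of_two hΔ G₀ G he hve hab ha hb) (hdis S hS hne)
    · intro hsub S hS hne
      obtain ⟨G⟩ := DisjProof.good_of_adm (hadm S hS)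
      by_contra hnd
      rw [Set.not_disjoint_iff] at hnd
      obtain ⟨p, hp₀, hp⟩ := hnd
      have hvw : c S₀ ≠ c S := fun h => hne (hcinj hS hS₀ h.symm)
      obtain ⟨e, he, hve, hns⟩ := DisjProof.exists_edge_two_points hΔ G₀ G hvw hn hp₀ hp
      exact hns (hsub S hS hne e he hve)
end
end
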